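/- arXiv:0711.4043 — 10 statements merged into one kernel-verified Lean document; each statement's English description precedes it below -/
import Mathlib

section
/- Let f ∈ ℂ[x₁,…,x_d] be an upper polynomial and let a ∈ ℝ. Then the polynomial g(x₂,…,x_d) = f(a, x₂,…,x_d) obtained by substituting a for x₁ is either the zero polynomial or an upper polynomial in d−1 variables; that is, either g = 0 or g(σ₂,…,σ_d) ≠ 0 whenever Im σᵢ > 0 for all i = 2,…,d. -/
open MvPolynomial

lemma evalE {n : ℕ} (h : Fin n → Polynomial ℂ) (p : MvPolynomial (Fin n) ℂ) (t : ℂ) :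
    Polynomial.eval t (MvPolynomial.aeval h p)
      = MvPolynomial.eval (fun i => Polynomial.eval t (h i)) p := by
  induction p using MvPolynomial.induction_on with
  | C c => simp
  | add p q hp hq => simp [hp, hq]
  | mul_X p i hp => simp [hp]

lemma keyE {d : ℕ} (f : MvPolynomial (Fin (d+1)) ℂ) (a : ℂ) (σ' : Fin d → ℂ) :
    MvPolynomial.eval σ'
        (MvPolynomial.aeval (Fin.cases (MvPolynomial.C a) (fun i => MvPolynomial.X i)) f)
      = MvPolynomial.eval (Fin.cases a σ') f := by
  induction f using MvPolynomial.induction_on with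
  | C c => simp
  | add p q hp hq => simp only [map_add, hp, hq]
  | mul_X p j hp =>
    simp only [map_mul, hp]
    congr 1
    induction j using Fin.cases <;> simp

lemma minmod (F : ℂ → ℂ) (hF : Differentiable ℂ F) {r : ℝ} (hr : 0 < r)
    (hnv : ∀ t : ℂ, ‖t‖ ≤ r → F t ≠ 0) :
    ∃ t : ℂ, ‖t‖ = r ∧ ‖F t‖ ≤ ‖F 0‖ := by
  have hsnv : ∀ t ∈ Metric.sphere (0 : ℂ) r, F t ≠ 0 := by
    intro t ht
    rw [mem_sphere_iff_norm, sub_zero] at ht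
    exact hnv t ht.le
  obtain ⟨t₀, ht₀s, ht₀⟩ := IsCompact.exists_isMaxOn (isCompact_sphere (0 : ℂ) r)
    (NormedSpace.sphere_nonempty.2 hr.le)
    (((hF.continuous.continuousOn).inv₀ hsnv).norm)
  have ht₀r : ‖t₀‖ = r := by
    rw [mem_sphere_iff_norm, sub_zero] at ht₀s
    exact ht₀s
  refine ⟨t₀, ht₀r, ?_⟩
  have hball : ∀ t ∈ Metric.closedBall (0 : ℂ) r, F t ≠ 0 := by
    intro t ht
    rw [Metric.mem_closedBall, dist_zero_right] at ht
    exact hnv t ht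
  have hmax : ‖(F 0)⁻¹‖ ≤ ‖(F t₀)⁻¹‖ := by
    apply Complex.norm_le_of_forall_mem_frontier_norm_le (f := fun t => (F t)⁻¹)
      (Metric.isBounded_ball (x := (0:ℂ)) (r := r))
    · apply DifferentiableOn.diffContOnCl
      rw [closure_ball (0 : ℂ) hr.ne']
      exact (hF.differentiableOn).inv hball
    · intro w hw
      rw [frontier_ball (0 : ℂ) hr.ne'] at hw
      exact ht₀ hw
    · exact subset_closure (Metric.mem_ball_self hr)
  rw [norm_inv, norm_inv] at hmax
  have h1 : F 0 ≠ 0 := hnv 0 (by simpa using hr.le)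
  have h2 : F t₀ ≠ 0 := hnv t₀ (le_of_eq ht₀r)
  have p1 : 0 < ‖F 0‖ := norm_pos_iff.mpr h1
  have p2 : 0 < ‖F t₀‖ := norm_pos_iff.mpr h2
  exact (inv_le_inv₀ p1 p2).mp hmax

noncomputable def Phi {d : ℕ} (f : MvPolynomial (Fin (d+1)) ℂ) (σ v : Fin d → ℂ)
    (p : ℂ × ℂ) : ℂ :=
  MvPolynomial.eval (Fin.cases p.1 (fun i => σ i + v i * p.2)) f

lemma phi_eq_poly {d : ℕ} (f : MvPolynomial (Fin (d+1)) ℂ) (σ v : Fin d → ℂ) (z t : ℂ) :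
    Phi f σ v (z, t) = Polynomial.eval t (MvPolynomial.aeval (Fin.cases (Polynomial.C z)
      (fun i => Polynomial.C (σ i) + Polynomial.C (v i) * Polynomial.X)) f) := by
  rw [evalE]
  exact DFunLike.congr_fun (congrArg MvPolynomial.eval
    (funext fun j => by induction j using Fin.cases <;> simp)) f

lemma phi_g {d : ℕ} (f : MvPolynomial (Fin (d+1)) ℂ) (a : ℂ) (σ v : Fin d → ℂ) (t : ℂ) :
    Phi f σ v (a, t) = MvPolynomial.eval (fun i => σ i + v i * t)
      (MvPolynomial.aeval (Fin.cases (MvPolynomial.C a) (fun i => MvPolynomial.X i)) f) := by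
  rw [keyE]
  rfl

/-- `f ∈ ℂ[x₁,…,x_d]` is an *upper polynomial* if it does not vanish when all
variables are given values in the open upper half plane.  (The zero polynomial
never satisfies this, so it is automatically excluded.) -/
def IsUpper {d : ℕ} (f : MvPolynomial (Fin d) ℂ) : Prop :=
  ∀ σ : Fin d → ℂ, (∀ i, 0 < (σ i).im) → MvPolynomial.eval σ f ≠ 0

set_option maxHeartbeats 1000000 in
/-- Substituting a real number `a` for the first variable of an upper polynomial
in `d+1` variables gives either the zero polynomial or an upper polynomial in the
remaining `d` variables. -/
theorem substitute_real_mem_upper_or_zero {d : ℕ}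
    (f : MvPolynomial (Fin (d + 1)) ℂ) (a : ℝ) (hf : IsUpper f) :
    MvPolynomial.aeval
        (Fin.cases (MvPolynomial.C (a : ℂ)) (fun i => MvPolynomial.X i)) f = 0 ∨
      IsUpper (MvPolynomial.aeval
        (Fin.cases (MvPolynomial.C (a : ℂ)) (fun i => MvPolynomial.X i)) f) := by
  by_cases hg : MvPolynomial.aeval
      (Fin.cases (MvPolynomial.C ((a : ℂ))) (fun i => MvPolynomial.X i)) f = 0
  · exact Or.inl hg
  right
  intro σ hσ
  by_contra h0
  obtain ⟨τ, hτ⟩ : ∃ τ : Fin d → ℂ, MvPolynomial.eval τ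
      (MvPolynomial.aeval (Fin.cases (MvPolynomial.C ((a : ℂ)))
        (fun i => MvPolynomial.X i)) f) ≠ 0 := by
    by_contra hc
    push_neg at hc
    exact hg (MvPolynomial.funext fun x => by rw [map_zero]; exact hc x)
  set g := MvPolynomial.aeval
      (Fin.cases (MvPolynomial.C ((a : ℂ))) (fun i => MvPolynomial.X i)) f with hgdef
  set v : Fin d → ℂ := fun i => τ i - σ i with hv
  have hΦcont : Continuous (Phi f σ v) := by
    have hassign : Continuous fun p : ℂ × ℂ =>
        (fun j => Fin.cases p.1 (fun i => σ i + v i * p.2) j : Fin (d+1) → ℂ) := by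
      apply continuous_pi
      intro j
      induction j using Fin.cases with
      | zero => simpa using continuous_fst
      | succ i => simp only [Fin.cases_succ]; fun_prop
    exact (MvPolynomial.continuous_eval (p := f)).comp hassign
  obtain ⟨r₀, hr₀pos, hr₀⟩ : ∃ r₀ > 0, ∀ t : ℂ, ‖t‖ ≤ r₀ →
      ∀ i, 0 < (σ i + v i * t).im := by
    have hev : ∀ᶠ t in nhds (0 : ℂ), ∀ i, 0 < (σ i + v i * t).im := by
      rw [Filter.eventually_all]
      intro i
      have hc : Continuous fun t : ℂ => (σ i + v i * t).im := by fun_prop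
      have h00 : ((fun _ : ℂ => (0:ℝ)) 0) < (σ i + v i * 0).im := by simpa using hσ i
      exact continuousAt_const.eventually_lt (hc.continuousAt (x := 0)) h00
    rw [Metric.eventually_nhds_iff] at hev
    obtain ⟨ε, hε, h⟩ := hev
    refine ⟨ε / 2, by linarith, fun t ht i => h ?_ i⟩
    rw [dist_zero_right]
    linarith
  set q : Polynomial ℂ :=
    MvPolynomial.aeval (fun i => Polynomial.C (σ i) + Polynomial.C (v i) * Polynomial.X) g
      with hqdef
  have hq_eval : ∀ t : ℂ, q.eval t = MvPolynomial.eval (fun i => σ i + v i * t) g := by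
    intro t
    rw [hqdef, evalE]
    simp
  have hq0 : q ≠ 0 := by
    intro h
    apply hτ
    have h1 := hq_eval 1
    rw [h] at h1
    simp only [Polynomial.eval_zero] at h1
    rw [hgdef] at h1 ⊢
    rw [show τ = fun i => σ i + v i * 1 by funext i; simp [hv], ← h1]
  obtain ⟨r, hrIoc, hr⟩ := (Set.Ioc_infinite hr₀pos).exists_notMem_finset
    (q.roots.toFinset.image (fun z => ‖z‖))
  obtain ⟨hrpos, hrle⟩ := hrIoc
  have hsph : ∀ t : ℂ, ‖t‖ = r → q.eval t ≠ 0 := by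
    intro t ht h
    apply hr
    rw [Finset.mem_image]
    exact ⟨t, by rw [Multiset.mem_toFinset, Polynomial.mem_roots hq0]; exact h, ht⟩
  have hΨ : ∀ z t : ℂ, 0 < z.im → ‖t‖ ≤ r₀ → Phi f σ v (z, t) ≠ 0 := by
    intro z t hz ht
    apply hf
    intro j
    induction j using Fin.cases with
    | zero => simpa using hz
    | succ i => simpa using hr₀ t ht i
  have hmin : ∀ z : ℂ, 0 < z.im → ∃ t : ℂ, ‖t‖ = r ∧
      ‖Phi f σ v (z, t)‖ ≤ ‖Phi f σ v (z, 0)‖ := by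
    intro z hz
    have hnv : ∀ t : ℂ, ‖t‖ ≤ r → Phi f σ v (z, t) ≠ 0 :=
      fun t ht => hΨ z t hz (le_trans ht hrle)
    have hdiff : Differentiable ℂ (fun t => Phi f σ v (z, t)) := by
      have heq : (fun t => Phi f σ v (z, t)) = fun t => Polynomial.eval t
          (MvPolynomial.aeval (Fin.cases (Polynomial.C z)
            (fun i => Polynomial.C (σ i) + Polynomial.C (v i) * Polynomial.X)) f) :=
        funext fun t => by rw [phi_eq_poly]
      rw [heq]
      exact Polynomial.differentiable _
    exact minmod _ hdiff hrpos hnv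
  set s : ℕ → ℂ := fun n => (a : ℂ) + ((1 / (n + 1) : ℝ) : ℂ) * Complex.I with hs
  have hsim : ∀ n, 0 < (s n).im := by
    intro n
    simp only [hs, Complex.add_im, Complex.ofReal_im, Complex.mul_im, Complex.ofReal_re,
      Complex.I_im, Complex.I_re, mul_zero, mul_one, zero_add]
    positivity
  have hstend : Filter.Tendsto s Filter.atTop (nhds ((a : ℂ))) := by
    have h2 : Filter.Tendsto (fun n : ℕ => ((1 / (n + 1) : ℝ) : ℂ) * Complex.I)
        Filter.atTop (nhds 0) := by
      rw [show (0 : ℂ) = ((0:ℝ) : ℂ) * Complex.I by simp]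
      exact ((Complex.continuous_ofReal.tendsto 0).comp
        tendsto_one_div_add_atTop_nhds_zero_nat).mul_const _
    have h3 : Filter.Tendsto (fun n : ℕ => (a:ℂ) + ((1/(n+1):ℝ):ℂ) * Complex.I)
        Filter.atTop (nhds ((a:ℂ) + 0)) := tendsto_const_nhds.add h2
    rw [add_zero] at h3
    exact h3
  choose t ht1 ht2 using fun n => hmin (s n) (hsim n)
  obtain ⟨t', ht's, φ, hφ, htend⟩ := (isCompact_sphere (0 : ℂ) r).tendsto_subseq
    (fun n => by rw [mem_sphere_iff_norm, sub_zero]; exact ht1 n)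
  have hlim1 : Filter.Tendsto (fun k => Phi f σ v (s (φ k), t (φ k))) Filter.atTop
      (nhds (Phi f σ v ((a : ℂ), t'))) :=
    (hΦcont.tendsto _).comp (((hstend.comp hφ.tendsto_atTop)).prodMk_nhds htend)
  have hlim2 : Filter.Tendsto (fun k => Phi f σ v (s (φ k), 0)) Filter.atTop
      (nhds (Phi f σ v ((a : ℂ), 0))) :=
    (hΦcont.tendsto _).comp ((hstend.comp hφ.tendsto_atTop).prodMk_nhds tendsto_const_nhds)
  have hΦa0 : Phi f σ v ((a : ℂ), 0) = 0 := by
    have heq2 := phi_g f ((a:ℂ)) σ v 0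
    rw [← hgdef] at heq2
    rw [heq2, show (fun i => σ i + v i * 0) = σ from funext fun i => by ring, h0]
  have hle : ‖Phi f σ v ((a : ℂ), t')‖ ≤ ‖Phi f σ v ((a : ℂ), 0)‖ :=
    le_of_tendsto_of_tendsto ((continuous_norm.tendsto _).comp hlim1)
      ((continuous_norm.tendsto _).comp hlim2)
      (Filter.Eventually.of_forall fun k => ht2 (φ k))
  have hzero : Phi f σ v ((a : ℂ), t') = 0 := by
    rw [hΦa0] at hle
    simpa using le_antisymm (hle.trans (le_of_eq norm_zero)) (norm_nonneg _)
  apply hsph t' (by rw [mem_sphere_iff_norm, sub_zero] at ht's; exact ht's)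
  rw [hq_eval, hgdef, ← phi_g]
  exact hzero
end

section
/- Suppose g(x₁,…,x_d, y) = Σᵢ₌₀ⁿ fᵢ(x₁,…,x_d)·yⁱ is an upper polynomial in d+1 variables, where n is at least the degree of g in the variable y. Then the reversed polynomial Σᵢ₌₀ⁿ fᵢ(x₁,…,x_d)·(−y)^{n−i} is also an upper polynomial in d+1 variables. -/
/-- A polynomial in the variables `x₁,…,x_d` and one distinguished variable `y`
(encoded as a univariate polynomial over `ℂ[x₁,…,x_d]`) is an upper polynomial
in `d+1` variables. -/
def IsUpperY {d : ℕ} (f : Polynomial (MvPolynomial (Fin d) ℂ)) : Prop :=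
  ∀ (σ : Fin d → ℂ) (τ : ℂ), (∀ i, 0 < (σ i).im) → 0 < τ.im →
    Polynomial.eval₂ (MvPolynomial.eval σ) τ f ≠ 0

/-- Reversal in the distinguished variable `y` (with a sign change) preserves
upper polynomials:  if `g = Σᵢ₌₀ⁿ fᵢ(𝐱) yⁱ ∈ U_{d+1}` with `n ≥ deg_y g`,
then `Σᵢ₌₀ⁿ fᵢ(𝐱) (−y)^{n−i} ∈ U_{d+1}`. -/
theorem reversal_isUpper {d : ℕ} (g : Polynomial (MvPolynomial (Fin d) ℂ))
    (n : ℕ) (hn : g.natDegree ≤ n) (hg : IsUpperY g) :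
    IsUpperY (∑ i ∈ Finset.range (n + 1),
      Polynomial.C (g.coeff i) * (-Polynomial.X) ^ (n - i)) := by
  intro σ τ hσ hτ
  have hτ0 : τ ≠ 0 := fun h => by simp [h] at hτ
  set τ' : ℂ := -τ⁻¹ with hτ'
  have hτ'im : 0 < τ'.im := by
    have : τ'.im = τ.im / Complex.normSq τ := by
      simp [hτ', Complex.inv_im, neg_div]
    rw [this]
    exact div_pos hτ (Complex.normSq_pos.mpr hτ0)
  have hkey : Polynomial.eval₂ (MvPolynomial.eval σ) τ
      (∑ i ∈ Finset.range (n + 1),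
        Polynomial.C (g.coeff i) * (-Polynomial.X) ^ (n - i))
      = (-τ) ^ n * Polynomial.eval₂ (MvPolynomial.eval σ) τ' g := by
    rw [Polynomial.eval₂_eq_sum_range' (MvPolynomial.eval σ)
      (Nat.lt_succ_of_le hn) τ', Polynomial.eval₂_finset_sum, Finset.mul_sum]
    apply Finset.sum_congr rfl
    intro i hi
    rw [Finset.mem_range, Nat.lt_succ_iff] at hi
    rw [Polynomial.eval₂_mul, Polynomial.eval₂_C, Polynomial.eval₂_pow,
      Polynomial.eval₂_neg, Polynomial.eval₂_X]
    have hmul : (-τ) * τ' = 1 := by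
      rw [hτ', neg_mul_neg, mul_inv_cancel₀ hτ0]
    have : (-τ) ^ n = (-τ) ^ (n - i) * ((-τ) ^ i) := by
      rw [← pow_add, Nat.sub_add_cancel hi]
    have h2 : (-τ) ^ i * τ' ^ i = 1 := by rw [← mul_pow, hmul, one_pow]
    linear_combination (-((MvPolynomial.eval σ) (g.coeff i) * τ' ^ i)) * this -
      ((MvPolynomial.eval σ) (g.coeff i) * (-τ) ^ (n - i)) * h2
  rw [hkey]
  exact mul_ne_zero (pow_ne_zero _ (neg_ne_zero.mpr hτ0)) (hg σ τ' hσ hτ'im)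
end

section
/- If f ∈ ℂ[x₁,…,x_d] is an upper polynomial, then for each i the partial derivative ∂f/∂xᵢ is either the zero polynomial or an upper polynomial. -/
open Polynomial in
/-- Substitute `σ j` for `x_j` (`j ≠ i`) and `X` for `x_i`. -/
noncomputable def subst {d : ℕ} (i : Fin d) (σ : Fin d → ℂ) :
    MvPolynomial (Fin d) ℂ →+* Polynomial ℂ :=
  MvPolynomial.eval₂Hom Polynomial.C
    (fun j => if j = i then Polynomial.X else Polynomial.C (σ j))

open Polynomial in
lemma subst_eval {d : ℕ} (i : Fin d) (σ : Fin d → ℂ) (τ : ℂ) (f : MvPolynomial (Fin d) ℂ) :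
    Polynomial.eval τ (subst i σ f) = MvPolynomial.eval (Function.update σ i τ) f := by
  have h := MvPolynomial.eval₂_comp_left (Polynomial.evalRingHom τ) Polynomial.C
    (fun j => if j = i then Polynomial.X else Polynomial.C (σ j)) f
  simp only [subst, MvPolynomial.coe_eval₂Hom] at *
  rw [show Polynomial.eval τ = ⇑(Polynomial.evalRingHom τ) from rfl, h]
  have h1 : (Polynomial.evalRingHom τ).comp Polynomial.C = RingHom.id ℂ := by
    ext x; simp
  have h2 : ((Polynomial.evalRingHom τ) ∘ fun j =>
      if j = i then Polynomial.X else Polynomial.C (σ j)) = Function.update σ i τ := by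
    funext j
    by_cases hj : j = i <;> simp [hj, Function.update_apply]
  rw [h1, h2]
  rfl

open Polynomial in
lemma subst_pderiv {d : ℕ} (i : Fin d) (σ : Fin d → ℂ) (f : MvPolynomial (Fin d) ℂ) :
    subst i σ (MvPolynomial.pderiv i f) = Polynomial.derivative (subst i σ f) := by
  induction f using MvPolynomial.induction_on with
  | C a => simp [MvPolynomial.pderiv_C, subst]
  | add p q hp hq => simp [map_add, hp, hq]
  | mul_X p j hp =>
    rw [MvPolynomial.pderiv_mul, map_add, map_mul, map_mul, hp, map_mul, derivative_mul]
    by_cases hji : j = i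
    · subst hji
      simp [subst, MvPolynomial.pderiv_X_self]
    · simp [subst, MvPolynomial.pderiv_X_of_ne hji, hji]

set_option maxHeartbeats 1000000


open Polynomial in
lemma gl_aux (n : ℕ) : ∀ (g : Polynomial ℂ), g.natDegree = n → g ≠ 0 →
    (∀ r ∈ g.roots, r.im ≤ 0) → ∀ τ : ℂ, 0 < τ.im →
    Polynomial.eval τ g ≠ 0 ∧ ((Polynomial.derivative g).eval τ / g.eval τ).im ≤ 0 ∧
      (g.natDegree ≠ 0 → (((Polynomial.derivative g).eval τ) / g.eval τ).im < 0) := by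
  induction n with
  | zero =>
    intro g hdeg hg hroots τ hτ
    obtain ⟨a, rfl⟩ := Polynomial.natDegree_eq_zero.mp hdeg
    have ha : a ≠ 0 := fun h => hg (by simp [h])
    refine ⟨by simpa using ha, by simp, by simp⟩
  | succ m ih =>
    intro g hdeg hg hroots τ hτ
    have hdegpos : 0 < g.degree := by
      rw [degree_eq_natDegree hg, hdeg]; exact_mod_cast Nat.succ_pos m
    obtain ⟨r, hr⟩ := Complex.exists_root hdegpos
    obtain ⟨h, hgh⟩ := (dvd_iff_isRoot.mpr hr)
    have hh0 : h ≠ 0 := by rintro rfl; rw [mul_zero] at hgh; exact hg hgh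
    have hXr : (X - C r) ≠ 0 := X_sub_C_ne_zero r
    have hdegh : h.natDegree = m := by
      have := natDegree_mul hXr hh0
      rw [← hgh, hdeg, natDegree_X_sub_C] at this
      omega
    have hrootsh : ∀ r' ∈ h.roots, r'.im ≤ 0 := by
      intro r' hr'
      apply hroots
      rw [hgh, roots_mul (hgh ▸ hg)]
      exact Multiset.mem_add.mpr (Or.inr hr')
    have hrim : r.im ≤ 0 := hroots r ((mem_roots hg).mpr hr)
    obtain ⟨hh_ne, hh_le, _⟩ := ih h hdegh hh0 hrootsh τ hτ
    set w : ℂ := τ - r with hw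
    have hwim : 0 < w.im := by
      simp only [hw, Complex.sub_im]
      linarith
    have hw0 : w ≠ 0 := fun hc => by simp [hc] at hwim
    have hevalg : g.eval τ = w * h.eval τ := by rw [hgh]; simp [hw]
    have hg_ne : g.eval τ ≠ 0 := by
      rw [hevalg]; exact mul_ne_zero hw0 hh_ne
    have hderiv : Polynomial.derivative g = h + (X - C r) * Polynomial.derivative h := by
      rw [hgh, derivative_mul]; simp
    have hratio : (Polynomial.derivative g).eval τ / g.eval τ
        = w⁻¹ + (Polynomial.derivative h).eval τ / h.eval τ := by
      rw [hderiv, hevalg]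
      simp only [eval_add, eval_mul, eval_sub, eval_X, eval_C]
      rw [← hw]
      field_simp
    have hinv : (w⁻¹).im < 0 := by
      rw [Complex.inv_im]
      apply div_neg_of_neg_of_pos
      · linarith
      · exact Complex.normSq_pos.mpr hw0
    have hlt : ((Polynomial.derivative g).eval τ / g.eval τ).im < 0 := by
      rw [hratio, Complex.add_im]
      linarith
    exact ⟨hg_ne, le_of_lt hlt, fun _ => hlt⟩

open Polynomial in
lemma deriv_ne_zero_of_upper (g : Polynomial ℂ)
    (hg : ∀ τ : ℂ, 0 < τ.im → Polynomial.eval τ g ≠ 0)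
    (hd : Polynomial.derivative g ≠ 0) (τ : ℂ) (hτ : 0 < τ.im) :
    (Polynomial.derivative g).eval τ ≠ 0 := by
  have hg0 : g ≠ 0 := by
    rintro rfl; simp at hd
  have hroots : ∀ r ∈ g.roots, r.im ≤ 0 := by
    intro r hrr
    by_contra hc
    push_neg at hc
    exact hg r hc ((mem_roots hg0).mp hrr)
  have hdeg : g.natDegree ≠ 0 := by
    intro hdeg0
    obtain ⟨a, rfl⟩ := Polynomial.natDegree_eq_zero.mp hdeg0
    simp at hd
  obtain ⟨hne, _, hstrict⟩ := gl_aux g.natDegree g rfl hg0 hroots τ hτ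
  intro hc
  have := hstrict hdeg
  rw [hc, zero_div] at this
  simp at this

open Polynomial in
lemma analytic_case {d : ℕ} (f : MvPolynomial (Fin d) ℂ)
    (hf : IsUpper f)
    (i : Fin d) (σ : Fin d → ℂ) (hσ : ∀ j, 0 < (σ j).im)
    (h0 : MvPolynomial.pderiv i f ≠ 0)
    (hdg : Polynomial.derivative (subst i σ f) = 0) : False := by
  -- a point where the derivative does not vanish
  obtain ⟨ρ, hρ⟩ : ∃ ρ : Fin d → ℂ, MvPolynomial.eval ρ (MvPolynomial.pderiv i f) ≠ 0 := by
    by_contra hc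
    push_neg at hc
    exact h0 (MvPolynomial.funext (fun x => by simp [hc x]))
  -- the affine line from σ towards ρ, as polynomials in a parameter `s`
  set L : Fin d → Polynomial ℂ :=
    fun j => Polynomial.C (σ j) + Polynomial.X * Polynomial.C (ρ j - σ j) with hL
  have hL0 : ∀ j, (L j).eval 0 = σ j := by intro j; simp [hL]
  have hL1 : ∀ j, (L j).eval 1 = ρ j := by intro j; simp [hL]
  set Φ : MvPolynomial (Fin d) ℂ →+* Polynomial (Polynomial ℂ) :=
    MvPolynomial.eval₂Hom (Polynomial.C.comp Polynomial.C)
      (fun j => if j = i then Polynomial.X else Polynomial.C (L j)) with hΦ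
  have hPW : ∀ (s : ℂ) (p : MvPolynomial (Fin d) ℂ),
      Polynomial.map (Polynomial.evalRingHom s) (Φ p)
        = subst i (fun j => (L j).eval s) p := by
    intro s p
    have h := MvPolynomial.eval₂_comp_left (Polynomial.mapRingHom (Polynomial.evalRingHom s))
      (Polynomial.C.comp Polynomial.C)
      (fun j => if j = i then Polynomial.X else Polynomial.C (L j)) p
    rw [hΦ, MvPolynomial.coe_eval₂Hom,
      show Polynomial.map (Polynomial.evalRingHom s)
        = ⇑(Polynomial.mapRingHom (Polynomial.evalRingHom s)) from rfl, h]
    rw [subst, MvPolynomial.coe_eval₂Hom]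
    congr 1
    · ext x; simp
    · funext j
      by_cases hj : j = i <;> simp [hj]
  set P : Polynomial (Polynomial ℂ) := Φ f with hP
  set D : Polynomial (Polynomial ℂ) := Polynomial.derivative P with hD
  have hDmap : ∀ s : ℂ, Polynomial.map (Polynomial.evalRingHom s) D
      = subst i (fun j => (L j).eval s) (MvPolynomial.pderiv i f) := by
    intro s
    rw [hD, ← Polynomial.derivative_map, hPW, subst_pderiv]
  by_cases hD0 : D = 0
  · apply hρ
    have h1 := hDmap 1
    rw [hD0, Polynomial.map_zero] at h1
    have h2 := congrArg (Polynomial.eval (ρ i)) h1.symm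
    rw [subst_eval, Polynomial.eval_zero] at h2
    rw [show ρ = Function.update (fun j => (L j).eval 1) i (ρ i) by
      funext j
      rcases eq_or_ne j i with rfl | hj
      · simp
      · simp [Function.update_apply, hj, hL1]]
    exact h2
  -- coefficients of D all vanish at s = 0
  have hall0 : ∀ n : ℕ, Polynomial.eval 0 (D.coeff n) = 0 := by
    intro n
    have h1 : Polynomial.map (Polynomial.evalRingHom 0) D = 0 := by
      rw [hDmap 0, show (fun j => (L j).eval 0) = σ from funext hL0, subst_pderiv, hdg]
    have := congrArg (fun q => Polynomial.coeff q n) h1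
    simpa [Polynomial.coeff_map] using this
  have hPne : P ≠ 0 := by
    intro hc
    apply hD0
    rw [hD, hc, Polynomial.derivative_zero]
  set k : ℕ := P.natDegree with hk
  have hkpos : k ≠ 0 := by
    intro hc
    obtain ⟨a, ha⟩ := Polynomial.natDegree_eq_zero.mp (hk ▸ hc)
    apply hD0
    rw [hD, ← ha, Polynomial.derivative_C]
  obtain ⟨k', hk'⟩ := Nat.exists_eq_succ_of_ne_zero hkpos
  set ck : Polynomial ℂ := P.coeff k with hck
  have hckne : ck ≠ 0 := by
    rw [hck, hk]
    exact Polynomial.leadingCoeff_ne_zero.mpr hPne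
  have hck0 : Polynomial.eval 0 ck = 0 := by
    have h1 : D.coeff k' = P.coeff (k' + 1) * ((k' : Polynomial ℂ) + 1) :=
      Polynomial.coeff_derivative P k'
    have h2 := congrArg (Polynomial.eval 0) h1
    rw [hall0 k'] at h2
    rw [Polynomial.eval_mul] at h2
    have h3 : Polynomial.eval 0 ((k' : Polynomial ℂ) + 1) = (k' : ℂ) + 1 := by simp
    rw [h3] at h2
    have h4 : ((k' : ℂ) + 1) ≠ 0 := by
      exact Nat.cast_add_one_ne_zero k'
    have := mul_eq_zero.mp h2.symm
    rcases this with h | h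
    · rw [hck, hk']; exact h
    · exact absurd h h4
  -- a radius within which the off-i coordinates stay in the upper half plane
  obtain ⟨ε, hεpos, hεball⟩ : ∃ ε > 0, ∀ ⦃s : ℂ⦄, dist s 0 < ε →
      ∀ j, j ≠ i → 0 < ((L j).eval s).im := by
    rw [← Metric.eventually_nhds_iff]
    rw [Filter.eventually_all]
    intro j
    by_cases hj : j = i
    · exact Filter.Eventually.of_forall fun s h => absurd hj h
    · have hcont : ContinuousAt (fun s : ℂ => ((L j).eval s).im) 0 :=
        (Complex.continuous_im.comp (L j).continuous).continuousAt
      have h0' : 0 < ((L j).eval 0).im := by rw [hL0]; exact hσ j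
      have := hcont.preimage_mem_nhds (Ioi_mem_nhds h0')
      filter_upwards [this] with s hs _
      exact hs
  set r0 : ℝ := ε / 2 with hr0
  have hr0pos : 0 < r0 := by positivity
  have hupper : ∀ ⦃s : ℂ⦄, ‖s‖ ≤ r0 → ∀ j, j ≠ i → 0 < ((L j).eval s).im := by
    intro s hs j hj
    apply hεball _ j hj
    rw [dist_zero_right]
    calc ‖s‖ ≤ ε / 2 := hs
    _ < ε := by linarith
  -- choose the radius r : positive, ≤ r0, avoiding the nonzero roots of ck
  set Rs : Finset ℝ := insert r0 ((ck.roots.toFinset.filter (fun z => z ≠ 0)).image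
    (fun z => ‖z‖ / 2)) with hRs
  have hRsne : Rs.Nonempty := ⟨r0, Finset.mem_insert_self _ _⟩
  set r : ℝ := Rs.min' hRsne with hr
  have hrpos : 0 < r := by
    rw [hr]
    apply (Finset.lt_min'_iff _ _).mpr
    intro y hy
    rw [hRs] at hy
    rcases Finset.mem_insert.mp hy with rfl | hy
    · exact hr0pos
    · obtain ⟨z, hz, rfl⟩ := Finset.mem_image.mp hy
      have hz0 : z ≠ 0 := (Finset.mem_filter.mp hz).2
      have : 0 < ‖z‖ := norm_pos_iff.mpr hz0
      linarith
  have hrr0 : r ≤ r0 := Finset.min'_le _ _ (Finset.mem_insert_self _ _)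
  have hsphere_ne : ∀ s : ℂ, ‖s‖ = r → Polynomial.eval s ck ≠ 0 := by
    intro s hs hc
    have hs0 : s ≠ 0 := by
      intro h; rw [h, norm_zero] at hs; exact hrpos.ne hs
    have hmem : s ∈ (ck.roots.toFinset.filter (fun z => z ≠ 0)) := by
      rw [Finset.mem_filter, Multiset.mem_toFinset]
      exact ⟨(Polynomial.mem_roots hckne).mpr hc, hs0⟩
    have : ‖s‖ / 2 ∈ Rs := by
      rw [hRs]
      exact Finset.mem_insert_of_mem (Finset.mem_image_of_mem _ hmem)
    have := Finset.min'_le _ _ this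
    rw [← hr, hs] at this
    linarith
  -- δ : minimum of ‖ck‖ on the sphere of radius r
  obtain ⟨s₀, hs₀mem, hs₀min⟩ := (isCompact_sphere (0:ℂ) r).exists_isMinOn
    (NormedSpace.sphere_nonempty.mpr hrpos.le)
    ((continuous_norm.comp (ck.continuous)).continuousOn
      (s := Metric.sphere (0:ℂ) r))
  set δ : ℝ := ‖Polynomial.eval s₀ ck‖ with hδ
  have hδpos : 0 < δ := by
    rw [hδ]
    apply norm_pos_iff.mpr
    apply hsphere_ne
    simpa using hs₀mem
  -- M : maximum of the sum of the low coefficient norms on the closed ball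
  set Fn : ℂ → ℝ := fun s => ∑ m ∈ Finset.range (k' + 1), ‖Polynomial.eval s (P.coeff m)‖
    with hFn
  have hFncont : Continuous Fn := by
    apply continuous_finset_sum
    intro m _
    exact continuous_norm.comp ((P.coeff m).continuous)
  obtain ⟨s₁, _, hs₁max⟩ := (isCompact_closedBall (0:ℂ) r).exists_isMaxOn
    ⟨0, by simp [hrpos.le]⟩ hFncont.continuousOn
  set M : ℝ := Fn s₁ with hM
  have hMnonneg : 0 ≤ M := by
    rw [hM, hFn]
    positivity
  -- the large parameter T
  set T : ℝ := max 1 (2 * M / δ + 1) with hT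
  have hT1 : 1 ≤ T := le_max_left _ _
  have hTpos : 0 < T := lt_of_lt_of_le one_pos hT1
  have hT2 : 2 * M < δ * T := by
    have h1 : 2 * M / δ + 1 ≤ T := le_max_right _ _
    have : δ * (2 * M / δ) = 2 * M := by field_simp
    nlinarith
  set τT : ℂ := (T : ℂ) * Complex.I with hτT
  have hτTim : 0 < τT.im := by
    rw [hτT]
    simp [hTpos]
  have hτTnorm : ‖τT‖ = T := by
    rw [hτT]
    simp [abs_of_pos hTpos]
  -- the function A
  set A : ℂ → ℂ := fun s => ∑ m ∈ Finset.range (k' + 2),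
    Polynomial.eval s (P.coeff m) * τT ^ m with hA
  have hAeq : ∀ s : ℂ, A s = Polynomial.eval τT (Polynomial.map (Polynomial.evalRingHom s) P)
      := by
    intro s
    rw [Polynomial.eval_eq_sum_range' (n := k' + 2)
      (lt_of_le_of_lt Polynomial.natDegree_map_le (by omega))]
    simp only [hA, Polynomial.coeff_map, Polynomial.coe_evalRingHom]
  have hAne : ∀ ⦃s : ℂ⦄, ‖s‖ ≤ r → A s ≠ 0 := by
    intro s hs
    rw [hAeq, hPW, subst_eval]
    apply hf
    intro j
    rcases eq_or_ne j i with rfl | hj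
    · simpa using hτTim
    · rw [Function.update_apply, if_neg hj]
      exact hupper (le_trans hs hrr0) j hj
  have hAdiff : Differentiable ℂ A := by
    apply Differentiable.fun_sum
    intro m _
    exact (P.coeff m).differentiable.mul_const _
  -- splitting off the top coefficient
  have hAsplit : ∀ s : ℂ, A s = (∑ m ∈ Finset.range (k' + 1),
      Polynomial.eval s (P.coeff m) * τT ^ m) + Polynomial.eval s ck * τT ^ (k' + 1) := by
    intro s
    have hcoeff : P.coeff (k' + 1) = ck := by rw [hck, hk']
    simp only [hA]
    rw [Finset.sum_range_succ, hcoeff]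
  have htail : ∀ ⦃s : ℂ⦄, ‖s‖ ≤ r →
      ‖∑ m ∈ Finset.range (k' + 1), Polynomial.eval s (P.coeff m) * τT ^ m‖ ≤ M * T ^ k' := by
    intro s hs
    calc ‖∑ m ∈ Finset.range (k' + 1), Polynomial.eval s (P.coeff m) * τT ^ m‖
        ≤ ∑ m ∈ Finset.range (k' + 1), ‖Polynomial.eval s (P.coeff m) * τT ^ m‖ :=
          norm_sum_le _ _
      _ ≤ ∑ m ∈ Finset.range (k' + 1), ‖Polynomial.eval s (P.coeff m)‖ * T ^ k' := by
          apply Finset.sum_le_sum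
          intro m hm
          rw [norm_mul, norm_pow, hτTnorm]
          apply mul_le_mul_of_nonneg_left _ (norm_nonneg _)
          exact pow_le_pow_right₀ hT1 (Nat.lt_succ_iff.mp (Finset.mem_range.mp hm))
      _ = Fn s * T ^ k' := by rw [hFn, Finset.sum_mul]
      _ ≤ M * T ^ k' := by
          apply mul_le_mul_of_nonneg_right _ (by positivity)
          apply hs₁max
          simpa using hs
  -- lower bound on the sphere
  have hlower : ∀ ⦃s : ℂ⦄, ‖s‖ = r → T ^ k' * (δ * T - M) ≤ ‖A s‖ := by
    intro s hs
    have h1 : δ ≤ ‖Polynomial.eval s ck‖ := isMinOn_iff.mp hs₀min s (by simpa using hs)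
    have h2 : ‖Polynomial.eval s ck * τT ^ (k' + 1)‖ = ‖Polynomial.eval s ck‖ * T ^ (k' + 1) := by
      rw [norm_mul, norm_pow, hτTnorm]
    have h3 := htail hs.le
    have h4 : ‖Polynomial.eval s ck * τT ^ (k' + 1)‖ ≤ ‖A s‖ +
        ‖∑ m ∈ Finset.range (k' + 1), Polynomial.eval s (P.coeff m) * τT ^ m‖ := by
      have h4' := norm_sub_le (A s) (∑ m ∈ Finset.range (k' + 1),
        Polynomial.eval s (P.coeff m) * τT ^ m)
      have h4'' : ‖Polynomial.eval s ck * τT ^ (k' + 1)‖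
          = ‖A s - ∑ m ∈ Finset.range (k' + 1), Polynomial.eval s (P.coeff m) * τT ^ m‖ := by
        rw [hAsplit s, add_sub_cancel_left]
      rw [h4'']
      exact h4'
    have h5 : δ * T ^ (k' + 1) ≤ ‖Polynomial.eval s ck‖ * T ^ (k' + 1) :=
      mul_le_mul_of_nonneg_right h1 (by positivity)
    have hTk : (0:ℝ) < T ^ k' := by positivity
    nlinarith [pow_succ T k']
  have hδTM : 0 < δ * T - M := by nlinarith
  -- maximum modulus principle applied to A⁻¹ on the ball of radius r
  have hmm : ‖(A 0)⁻¹‖ ≤ (T ^ k' * (δ * T - M))⁻¹ := by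
    have hdiffinv : DiffContOnCl ℂ (fun s => (A s)⁻¹) (Metric.ball (0:ℂ) r) := by
      apply DifferentiableOn.diffContOnCl
      rw [closure_ball 0 hrpos.ne']
      exact DifferentiableOn.inv hAdiff.differentiableOn
        (fun s hs => hAne (by simpa using hs))
    refine Complex.norm_le_of_forall_mem_frontier_norm_le (f := fun s => (A s)⁻¹)
      Metric.isBounded_ball hdiffinv ?_ ?_
    · intro z hz
      rw [frontier_ball 0 hrpos.ne'] at hz
      have hznorm : ‖z‖ = r := by simpa using hz
      simp only [norm_inv]
      exact inv_anti₀ (by positivity) (hlower hznorm)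
    · rw [closure_ball 0 hrpos.ne']
      simp [hrpos.le]
  have hA0ge : T ^ k' * (δ * T - M) ≤ ‖A 0‖ := by
    have hA0ne : A 0 ≠ 0 := hAne (by simp [hrpos.le])
    have h1 : 0 < ‖A 0‖ := norm_pos_iff.mpr hA0ne
    have h2 : (0:ℝ) < T ^ k' * (δ * T - M) := by positivity
    rw [norm_inv] at hmm
    exact (inv_le_inv₀ h1 h2).mp hmm
  have hA0le : ‖A 0‖ ≤ M * T ^ k' := by
    rw [hAsplit 0, hck0, zero_mul, add_zero]
    exact htail (by simp [hrpos.le])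
  have hTk : (0:ℝ) < T ^ k' := by positivity
  nlinarith

open Polynomial in
/-- Each partial derivative of an upper polynomial is zero or an upper polynomial. -/
theorem pderiv_isUpper_or_zero {d : ℕ} (f : MvPolynomial (Fin d) ℂ)
    (hf : IsUpper f) (i : Fin d) :
    MvPolynomial.pderiv i f = 0 ∨ IsUpper (MvPolynomial.pderiv i f) := by
  by_cases h0 : MvPolynomial.pderiv i f = 0
  · exact Or.inl h0
  right
  intro σ hσ
  set g := subst i σ f with hgdef
  have hgup : ∀ τ : ℂ, 0 < τ.im → g.eval τ ≠ 0 := by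
    intro τ hτ
    rw [hgdef, subst_eval]
    apply hf
    intro j
    rcases eq_or_ne j i with rfl | hj
    · simpa using hτ
    · simpa [Function.update_apply, hj] using hσ j
  by_cases hdg : Polynomial.derivative g = 0
  · exfalso
    rw [hgdef] at hdg
    exact analytic_case f hf i σ hσ h0 hdg
  · have hne := deriv_ne_zero_of_upper g hgup hdg (σ i) (hσ i)
    intro hc
    apply hne
    rw [hgdef, ← subst_pderiv, subst_eval, Function.update_eq_self]
    exact hc
end

section
/- Suppose f(x₁,…,x_d, y) = Σᵢ fᵢ(x₁,…,x_d)·yⁱ is an upper polynomial in d+1 variables. Then every coefficient fᵢ ∈ ℂ[x₁,…,x_d] is either the zero polynomial or an upper polynomial in d variables. -/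
open Polynomial MvPolynomial Complex

lemma mv_eq_zero_of_vanish : ∀ {d : ℕ} (S : Fin d → Set ℂ), (∀ i, (S i).Infinite) →
    ∀ (g : MvPolynomial (Fin d) ℂ), (∀ σ : Fin d → ℂ, (∀ i, σ i ∈ S i) → MvPolynomial.eval σ g = 0) → g = 0 := by
  intro d
  induction d with
  | zero =>
    intro S hS g h
    obtain ⟨a, rfl⟩ := MvPolynomial.C_surjective (Fin 0) g
    have := h (fun i => i.elim0) (fun i => i.elim0)
    rw [MvPolynomial.eval_C] at this
    rw [this, map_zero]
  | succ d ih =>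
    intro S hS g h
    have hP : MvPolynomial.finSuccEquiv ℂ d g = 0 := by
      refine Polynomial.ext fun m => ?_
      rw [Polynomial.coeff_zero]
      apply ih (fun i => S i.succ) (fun i => hS i.succ)
      intro σ hσ
      have hq : (Polynomial.map (MvPolynomial.eval σ) (MvPolynomial.finSuccEquiv ℂ d g)) = 0 := by
        apply Polynomial.eq_zero_of_infinite_isRoot
        apply (hS 0).mono
        intro x hx
        simp only [Set.mem_setOf_eq, Polynomial.IsRoot]
        rw [← MvPolynomial.eval_eq_eval_mv_eval']
        apply h
        intro i
        refine Fin.cases ?_ ?_ i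
        · simpa using hx
        · intro j; simpa using hσ j
      have := congrArg (fun q => Polynomial.coeff q m) hq
      simpa using this
    have := (MvPolynomial.finSuccEquiv ℂ d).injective
    rw [← map_zero (MvPolynomial.finSuccEquiv ℂ d)] at hP
    exact this hP

lemma ball_infinite (c : ℂ) {ε : ℝ} (hε : 0 < ε) : (Metric.ball c ε).Infinite := by
  have h1 : Set.InjOn (fun t : ℝ => c + (t : ℂ)) (Set.Ioo 0 ε) := by
    intro a _ b _ hab
    simpa [Complex.ofReal_inj] using hab
  have h2 := (Set.Ioo_infinite hε).image h1
  apply h2.mono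
  rintro z ⟨t, ht, rfl⟩
  simp only [Metric.mem_ball]
  have : dist (c + (t:ℂ)) c = ‖(t:ℂ)‖ := by
    rw [Complex.dist_eq]; ring_nf
  rw [this]
  rw [Complex.norm_real, Real.norm_eq_abs, abs_of_pos ht.1]
  exact ht.2

lemma prod_bound (z : ℂ) {r : ℝ} (hr : 0 < r) : ∀ (s : Multiset ℂ), (∀ ρ ∈ s, r ≤ ‖ρ‖) →
    (s.map (fun ρ => ‖z - ρ‖)).prod ≤
      (s.map (fun ρ => ‖ρ‖)).prod * (1 + ‖z‖ / r) ^ Multiset.card s := by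
  intro s
  induction s using Multiset.induction with
  | empty => simp
  | cons a s ih =>
    intro hmem
    have ha : r ≤ ‖a‖ := hmem a (Multiset.mem_cons_self a s)
    have ha0 : 0 < ‖a‖ := lt_of_lt_of_le hr ha
    have h1 : ‖z - a‖ ≤ ‖a‖ * (1 + ‖z‖ / r) := by
      have : ‖z - a‖ ≤ ‖z‖ + ‖a‖ := by
        simpa using norm_sub_le z a
      calc ‖z - a‖ ≤ ‖z‖ + ‖a‖ := this
        _ ≤ ‖a‖ * (1 + ‖z‖ / r) := by
            rw [mul_add, mul_one, mul_div_assoc']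
            have : ‖z‖ ≤ ‖a‖ * ‖z‖ / r := by
              rw [le_div_iff₀ hr]
              nlinarith [norm_nonneg z]
            linarith
    have h2 := ih (fun ρ hρ => hmem ρ (Multiset.mem_cons_of_mem hρ))
    simp only [Multiset.map_cons, Multiset.prod_cons, Multiset.card_cons, pow_succ]
    calc ‖z - a‖ * (s.map (fun ρ => ‖z - ρ‖)).prod
        ≤ (‖a‖ * (1 + ‖z‖ / r)) * ((s.map (fun ρ => ‖ρ‖)).prod * (1 + ‖z‖ / r) ^ Multiset.card s) := by
          apply mul_le_mul h1 h2 (Multiset.prod_nonneg ?_) (by positivity)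
          intro x hx
          obtain ⟨ρ, _, rfl⟩ := Multiset.mem_map.mp hx
          exact norm_nonneg _
      _ = ‖a‖ * (s.map (fun ρ => ‖ρ‖)).prod * ((1 + ‖z‖ / r) ^ Multiset.card s * (1 + ‖z‖ / r)) := by ring

lemma diskBound (p : Polynomial ℂ) {r : ℝ} (hr : 0 < r)
    (hnz : ∀ w : ℂ, ‖w‖ < r → p.eval w ≠ 0) {N : ℕ} (hN : p.natDegree ≤ N) (z : ℂ) :
    ‖p.eval z‖ ≤ ‖p.eval 0‖ * (1 + ‖z‖ / r) ^ N := by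
  have hp0 : p ≠ 0 := by
    intro h; exact hnz 0 (by simpa using hr) (by simp [h])
  have hsplit : p.Splits := IsAlgClosed.splits p
  have hfact := hsplit.eq_prod_roots
  have hroots : ∀ ρ ∈ p.roots, r ≤ ‖ρ‖ := by
    intro ρ hρ
    by_contra hc
    exact hnz ρ (lt_of_not_ge hc) ((Polynomial.mem_roots hp0).mp hρ)
  have hcard : Multiset.card p.roots = p.natDegree := by
    have := (Polynomial.Splits.natDegree_eq_card_roots hsplit).symm
    simpa using this
  have hevz : ∀ w : ℂ, ‖p.eval w‖ =
      ‖p.leadingCoeff‖ * (p.roots.map (fun ρ => ‖w - ρ‖)).prod := by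
    intro w
    conv_lhs => rw [hfact]
    rw [Polynomial.eval_mul, Polynomial.eval_multiset_prod, norm_mul, Polynomial.eval_C]
    congr 1
    rw [show ∀ m : Multiset ℂ, ‖m.prod‖ = (m.map (fun x => ‖x‖)).prod from fun m => map_multiset_prod (normHom : ℂ →*₀ ℝ) m, Multiset.map_map, Multiset.map_map]
    congr 1
    ext ρ
    simp
  have h0 : ‖p.eval 0‖ = ‖p.leadingCoeff‖ * (p.roots.map (fun ρ => ‖ρ‖)).prod := by
    rw [hevz 0]
    congr 1
    congr 1
    ext ρ
    simp
  rw [hevz z, h0]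
  rw [mul_assoc]
  apply mul_le_mul_of_nonneg_left _ (norm_nonneg _)
  calc (p.roots.map (fun ρ => ‖z - ρ‖)).prod
      ≤ (p.roots.map (fun ρ => ‖ρ‖)).prod * (1 + ‖z‖ / r) ^ Multiset.card p.roots :=
        prod_bound z hr p.roots hroots
    _ ≤ (p.roots.map (fun ρ => ‖ρ‖)).prod * (1 + ‖z‖ / r) ^ N := by
        apply mul_le_mul_of_nonneg_left
        · apply pow_le_pow_right₀
          · have : 0 ≤ ‖z‖ / r := by positivity
            linarith
          · rw [hcard]; exact hN
        · apply Multiset.prod_nonneg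
          intro x hx
          obtain ⟨ρ, _, rfl⟩ := Multiset.mem_map.mp hx
          exact norm_nonneg _

lemma eval_aeval_line {d : ℕ} (g : MvPolynomial (Fin d) ℂ) (σ v : Fin d → ℂ) (z : ℂ) :
    Polynomial.eval z (MvPolynomial.aeval
        (fun i => Polynomial.C (σ i) + Polynomial.C (v i) * Polynomial.X) g) =
      MvPolynomial.eval (fun i => σ i + v i * z) g := by
  induction g using MvPolynomial.induction_on with
  | C a => simp
  | add p q hp hq => simp [hp, hq]
  | mul_X p i hp => simp [hp]

lemma prod_ratio (τ : ℂ) (hτ : 0 < τ.im) : ∀ (s : Multiset ℂ), (∀ ρ ∈ s, ρ.im ≤ 0) →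
    Polynomial.eval τ (Polynomial.derivative (s.map (fun ρ => Polynomial.X - Polynomial.C ρ)).prod)
      = Polynomial.eval τ (s.map (fun ρ => Polynomial.X - Polynomial.C ρ)).prod
        * (s.map (fun ρ => (τ - ρ)⁻¹)).sum := by
  intro s
  induction s using Multiset.induction with
  | empty => simp
  | cons a s ih =>
    intro hmem
    have him : a.im ≤ 0 := hmem a (Multiset.mem_cons_self a s)
    have hne : τ - a ≠ 0 := by
      intro h
      have h2 : τ.im - a.im = 0 := by
        have := congrArg Complex.im h
        simpa using this
      linarith
    have ih' := ih (fun ρ hρ => hmem ρ (Multiset.mem_cons_of_mem hρ))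
    simp only [Multiset.map_cons, Multiset.prod_cons, Multiset.sum_cons,
      Polynomial.derivative_mul, Polynomial.derivative_sub, Polynomial.derivative_X,
      Polynomial.derivative_C, sub_zero, one_mul, Polynomial.eval_add, Polynomial.eval_mul,
      Polynomial.eval_sub, Polynomial.eval_X, Polynomial.eval_C]
    rw [ih']
    field_simp

lemma gauss_lucas (p : Polynomial ℂ) (hdeg : p.natDegree ≠ 0)
    (hp : ∀ z : ℂ, 0 < z.im → p.eval z ≠ 0) :
    ∀ τ : ℂ, 0 < τ.im → (Polynomial.derivative p).eval τ ≠ 0 := by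
  intro τ hτ
  have hp0 : p ≠ 0 := fun h => hdeg (by simp [h])
  have hsplit : p.Splits := IsAlgClosed.splits p
  have hfact := hsplit.eq_prod_roots
  have hcard : Multiset.card p.roots = p.natDegree := by
    have := (Polynomial.Splits.natDegree_eq_card_roots hsplit).symm
    simpa using this
  have hroots : ∀ ρ ∈ p.roots, ρ.im ≤ 0 := by
    intro ρ hρ
    by_contra hc
    exact hp ρ (lt_of_not_ge hc) ((Polynomial.mem_roots hp0).mp hρ)
  have hratio := prod_ratio τ hτ p.roots hroots
  -- the sum has negative imaginary part
  have hex : ∃ x, x ∈ p.roots := by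
    apply Multiset.card_pos_iff_exists_mem.mp
    rw [hcard]; exact Nat.pos_of_ne_zero hdeg
  obtain ⟨a, ha⟩ := hex
  obtain ⟨t, hat⟩ := Multiset.exists_cons_of_mem ha
  have hsum_neg : ((p.roots.map (fun ρ => (τ - ρ)⁻¹)).sum).im < 0 := by
    have key : ∀ (s : Multiset ℂ), (∀ ρ ∈ s, ρ.im ≤ 0) → ((s.map (fun ρ => (τ - ρ)⁻¹)).sum).im ≤ 0 := by
      intro s
      induction s using Multiset.induction with
      | empty => simp
      | cons b u ihu =>
        intro hm
        simp only [Multiset.map_cons, Multiset.sum_cons, Complex.add_im]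
        have hb : ((τ - b)⁻¹).im ≤ 0 := by
          rw [Complex.inv_im]
          have h1 : 0 < (τ - b).im := by
            have := hm b (Multiset.mem_cons_self b u)
            simp only [Complex.sub_im]; linarith
          have h2 : 0 < Complex.normSq (τ - b) := by
            apply Complex.normSq_pos.mpr
            intro h; rw [h] at h1; simp at h1
          have := div_nonneg (le_of_lt h1) (le_of_lt h2)
          have hneg : -(τ - b).im / Complex.normSq (τ - b) ≤ 0 := by
            apply div_nonpos_of_nonpos_of_nonneg <;> linarith
          exact hneg
        exact add_nonpos hb (ihu (fun ρ hρ => hm ρ (Multiset.mem_cons_of_mem hρ)))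
    rw [hat]
    simp only [Multiset.map_cons, Multiset.sum_cons, Complex.add_im]
    have hb : ((τ - a)⁻¹).im < 0 := by
      rw [Complex.inv_im]
      have ha : a.im ≤ 0 := hroots a (by rw [hat]; exact Multiset.mem_cons_self a t)
      have h1 : 0 < (τ - a).im := by simp only [Complex.sub_im]; linarith
      have h2 : 0 < Complex.normSq (τ - a) := by
        apply Complex.normSq_pos.mpr
        intro h; rw [h] at h1; simp at h1
      apply div_neg_of_neg_of_pos (by linarith) h2
    have ht' := key t (fun ρ hρ => hroots ρ (by rw [hat]; exact Multiset.mem_cons_of_mem hρ))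
    linarith
  have hpτ : p.eval τ ≠ 0 := hp τ hτ
  have h3 : (Polynomial.derivative p).eval τ
      = p.leadingCoeff * Polynomial.eval τ
        (Polynomial.derivative (p.roots.map (fun ρ => Polynomial.X - Polynomial.C ρ)).prod) := by
    conv_lhs => rw [hfact]
    rw [Polynomial.derivative_mul, Polynomial.derivative_C, zero_mul, zero_add,
      Polynomial.eval_mul, Polynomial.eval_C]
  have h4 : p.eval τ = p.leadingCoeff
      * Polynomial.eval τ (p.roots.map (fun ρ => Polynomial.X - Polynomial.C ρ)).prod := by
    conv_lhs => rw [hfact]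
    rw [Polynomial.eval_mul, Polynomial.eval_C]
  have : (Polynomial.derivative p).eval τ = p.eval τ * (p.roots.map (fun ρ => (τ - ρ)⁻¹)).sum := by
    rw [h3, hratio, h4]; ring
  rw [this]
  apply mul_ne_zero hpτ
  intro h
  rw [h] at hsum_neg
  simp at hsum_neg

lemma hurwitz {d : ℕ} (Q : Polynomial (MvPolynomial (Fin d) ℂ))
    (hQ : ∀ s : ℝ, 0 < s → ∀ σ : Fin d → ℂ, (∀ i, 0 < (σ i).im) →
      Polynomial.eval₂ (MvPolynomial.eval σ) (s : ℂ) Q ≠ 0) :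
    Q.coeff 0 = 0 ∨ IsUpper (Q.coeff 0) := by
  by_cases h0 : IsUpper (Q.coeff 0)
  · exact Or.inr h0
  left
  -- there is a point in UHP^d where coeff 0 vanishes
  unfold IsUpper at h0
  push_neg at h0
  obtain ⟨σ₀, hσ₀, hvan⟩ := h0
  -- get ε with 0 < ε ≤ Im σ₀ j for all j
  have hex : ∃ ε : ℝ, 0 < ε ∧ ∀ j, ε ≤ (σ₀ j).im := by
    rcases isEmpty_or_nonempty (Fin d) with h | h
    · exact ⟨1, one_pos, fun j => absurd (h.false j) not_false⟩
    · obtain ⟨j₀, _, hj₀⟩ := Finset.exists_min_image Finset.univ (fun j => (σ₀ j).im)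
        ⟨Classical.arbitrary (Fin d), Finset.mem_univ _⟩
      exact ⟨(σ₀ j₀).im, hσ₀ j₀, fun j => hj₀ j (Finset.mem_univ j)⟩
  obtain ⟨ε, hε, hεle⟩ := hex
  apply mv_eq_zero_of_vanish (fun j => Metric.ball (σ₀ j) (ε / 2))
    (fun j => ball_infinite _ (by linarith))
  intro σ hσ
  set v : Fin d → ℂ := fun j => σ j - σ₀ j with hv
  have hvsmall : ∀ j, ‖v j‖ < ε / 2 := by
    intro j
    have := hσ j
    rw [Metric.mem_ball, dist_eq] at this
    simpa [hv] using this
  -- line stays in UHP^d for |z| < 2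
  have hline : ∀ z : ℂ, ‖z‖ < 2 → ∀ j, 0 < (σ₀ j + v j * z).im := by
    intro z hz j
    have h1 : ‖v j * z‖ < ε := by
      rw [norm_mul]
      calc ‖v j‖ * ‖z‖ ≤ ‖v j‖ * 2 :=
            mul_le_mul_of_nonneg_left (le_of_lt hz) (norm_nonneg _)
        _ < ε := by have := hvsmall j; linarith
    have h2 : |(v j * z).im| ≤ ‖v j * z‖ := Complex.abs_im_le_norm _
    have h3 : (σ₀ j + v j * z).im = (σ₀ j).im + (v j * z).im := by simp
    rw [h3]
    have := hεle j
    have := abs_lt.mp (lt_of_le_of_lt h2 h1)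
    linarith [this.1]
  -- the affine substitution
  set L : Fin d → Polynomial ℂ := fun i => Polynomial.C (σ₀ i) + Polynomial.C (v i) * Polynomial.X with hL
  set n := Q.natDegree with hn
  set N := (Finset.range (n + 1)).sup (fun m => (MvPolynomial.aeval L (Q.coeff m)).natDegree) with hN
  -- the z-polynomial for parameter s
  set P : ℝ → Polynomial ℂ := fun s =>
    ∑ m ∈ Finset.range (n + 1), MvPolynomial.aeval L (Q.coeff m) * Polynomial.C ((s : ℂ) ^ m) with hP
  have hPeval : ∀ (s : ℝ) (z : ℂ), (P s).eval z =
      Polynomial.eval₂ (MvPolynomial.eval (fun i => σ₀ i + v i * z)) (s : ℂ) Q := by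
    intro s z
    rw [hP]
    simp only [Polynomial.eval_finset_sum, Polynomial.eval_mul, Polynomial.eval_C]
    rw [Polynomial.eval₂_eq_sum_range]
    apply Finset.sum_congr rfl
    intro m _
    rw [eval_aeval_line]
  have hPdeg : ∀ s : ℝ, (P s).natDegree ≤ N := by
    intro s
    apply Polynomial.natDegree_sum_le_of_forall_le
    intro m hm
    calc (MvPolynomial.aeval L (Q.coeff m) * Polynomial.C ((s:ℂ) ^ m)).natDegree
        ≤ (MvPolynomial.aeval L (Q.coeff m)).natDegree + (Polynomial.C ((s:ℂ) ^ m)).natDegree :=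
          Polynomial.natDegree_mul_le
      _ ≤ N := by rw [Polynomial.natDegree_C, add_zero]; exact Finset.le_sup (f := fun m => (MvPolynomial.aeval L (Q.coeff m)).natDegree) hm
  -- key inequality for s > 0
  have hkey : ∀ s : ℝ, 0 < s →
      ‖(P s).eval 1‖ ≤ ‖(P s).eval 0‖ * (1 + 1 / 2) ^ N := by
    intro s hs
    have hb := diskBound (P s) (by norm_num : (0:ℝ) < 2)
      (fun w hw => by
        rw [hPeval]
        exact hQ s hs _ (hline w hw)) (hPdeg s) 1
    simpa using hb
  -- pass to the limit s → 0⁺ using continuity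
  have hcont : ∀ w : ℂ, Continuous (fun s : ℝ =>
      ‖Polynomial.eval₂ (MvPolynomial.eval (fun i => σ₀ i + v i * w)) (s : ℂ) Q‖) := by
    intro w
    apply continuous_norm.comp
    have : (fun s : ℝ => Polynomial.eval₂ (MvPolynomial.eval (fun i => σ₀ i + v i * w)) (s : ℂ) Q)
        = (fun s : ℝ => (Q.map (MvPolynomial.eval (fun i => σ₀ i + v i * w))).eval ((s : ℝ) : ℂ)) := by
      funext s
      rw [Polynomial.eval_map]
    rw [this]
    exact (Polynomial.continuous_aeval _).comp Complex.continuous_ofReal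
  have hle : ∀ s : ℝ, 0 ≤ s →
      ‖Polynomial.eval₂ (MvPolynomial.eval (fun i => σ₀ i + v i * 1)) (s : ℂ) Q‖
        ≤ ‖Polynomial.eval₂ (MvPolynomial.eval (fun i => σ₀ i + v i * 0)) (s : ℂ) Q‖
            * (1 + 1 / 2) ^ N := by
    intro s hs
    have hsub : Set.Ioi (0:ℝ) ⊆ {s : ℝ | ‖Polynomial.eval₂ (MvPolynomial.eval (fun i => σ₀ i + v i * 1)) (s : ℂ) Q‖
        ≤ ‖Polynomial.eval₂ (MvPolynomial.eval (fun i => σ₀ i + v i * 0)) (s : ℂ) Q‖ * (1 + 1 / 2) ^ N} := by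
      intro t ht
      have := hkey t ht
      rw [hPeval, hPeval] at this
      exact this
    have hclosed : IsClosed {s : ℝ | ‖Polynomial.eval₂ (MvPolynomial.eval (fun i => σ₀ i + v i * 1)) (s : ℂ) Q‖
        ≤ ‖Polynomial.eval₂ (MvPolynomial.eval (fun i => σ₀ i + v i * 0)) (s : ℂ) Q‖ * (1 + 1 / 2) ^ N} :=
      isClosed_le (hcont 1) (Continuous.mul (hcont 0) continuous_const)
    have := closure_minimal hsub hclosed
    rw [closure_Ioi] at this
    exact this hs
  have h00 := hle 0 le_rfl
  rw [Complex.ofReal_zero] at h00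
  rw [Polynomial.eval₂_at_zero, Polynomial.eval₂_at_zero] at h00
  have hz : (fun i => σ₀ i + v i * 0) = σ₀ := by funext i; simp
  rw [hz, hvan, norm_zero, zero_mul] at h00
  have : MvPolynomial.eval (fun i => σ₀ i + v i * 1) (Q.coeff 0) = 0 := by
    have := le_antisymm h00 (norm_nonneg _)
    exact norm_eq_zero.mp this
  have hσeq : (fun i => σ₀ i + v i * 1) = σ := by funext i; simp [hv]
  rw [hσeq] at this
  exact this

lemma bottom_coeff {d : ℕ} (f : Polynomial (MvPolynomial (Fin d) ℂ)) (hf : IsUpperY f) :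
    f.coeff 0 = 0 ∨ IsUpper (f.coeff 0) := by
  set n := f.natDegree with hn
  set Q : Polynomial (MvPolynomial (Fin d) ℂ) :=
    ∑ j ∈ Finset.range (n + 1),
      Polynomial.C (f.coeff j * MvPolynomial.C (Complex.I ^ j)) * Polynomial.X ^ j with hQdef
  have hQ0 : Q.coeff 0 = f.coeff 0 := by
    rw [hQdef, Polynomial.finset_sum_coeff]
    rw [Finset.sum_eq_single_of_mem 0 (Finset.mem_range.mpr (Nat.succ_pos n))]
    · simp
    · intro j _ hj
      rw [Polynomial.coeff_C_mul, Polynomial.coeff_X_pow]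
      rw [if_neg (fun h => hj h.symm), mul_zero]
  have hQup : ∀ s : ℝ, 0 < s → ∀ σ : Fin d → ℂ, (∀ i, 0 < (σ i).im) →
      Polynomial.eval₂ (MvPolynomial.eval σ) (s : ℂ) Q ≠ 0 := by
    intro s hs σ hσ
    have heq : Polynomial.eval₂ (MvPolynomial.eval σ) (s : ℂ) Q
        = Polynomial.eval₂ (MvPolynomial.eval σ) (Complex.I * s) f := by
      rw [hQdef, Polynomial.eval₂_finset_sum]
      rw [Polynomial.eval₂_eq_sum_range]
      apply Finset.sum_congr rfl
      intro j _
      simp only [Polynomial.eval₂_mul, Polynomial.eval₂_C, Polynomial.eval₂_X_pow, map_mul,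
        MvPolynomial.eval_C, mul_pow]
      ring
    rw [heq]
    apply hf σ (Complex.I * s) hσ
    simp [Complex.mul_im, hs]
  have := hurwitz Q hQup
  rwa [hQ0] at this

lemma top_coeff {d : ℕ} (f : Polynomial (MvPolynomial (Fin d) ℂ)) (hf : IsUpperY f) :
    f.coeff f.natDegree = 0 ∨ IsUpper (f.coeff f.natDegree) := by
  set n := f.natDegree with hn
  set Q : Polynomial (MvPolynomial (Fin d) ℂ) :=
    ∑ j ∈ Finset.range (n + 1),
      Polynomial.C (f.coeff j * MvPolynomial.C (Complex.I ^ j)) * Polynomial.X ^ (n - j) with hQdef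
  have hQ0 : Q.coeff 0 = f.coeff n * MvPolynomial.C (Complex.I ^ n) := by
    rw [hQdef, Polynomial.finset_sum_coeff]
    rw [Finset.sum_eq_single_of_mem n (Finset.mem_range.mpr (Nat.lt_succ_self n))]
    · rw [Nat.sub_self, pow_zero, mul_one, Polynomial.coeff_C_zero]
    · intro j hj hjn
      rw [Polynomial.coeff_C_mul, Polynomial.coeff_X_pow]
      rw [if_neg, mul_zero]
      intro h
      have hjlt : j < n := lt_of_le_of_ne (Nat.lt_succ_iff.mp (Finset.mem_range.mp hj)) hjn
      omega
  have hQup : ∀ s : ℝ, 0 < s → ∀ σ : Fin d → ℂ, (∀ i, 0 < (σ i).im) →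
      Polynomial.eval₂ (MvPolynomial.eval σ) (s : ℂ) Q ≠ 0 := by
    intro s hs σ hσ
    have hs0 : (s : ℂ) ≠ 0 := by
      simp only [ne_eq, Complex.ofReal_eq_zero]; exact ne_of_gt hs
    have heq : Polynomial.eval₂ (MvPolynomial.eval σ) (s : ℂ) Q
        = (s : ℂ) ^ n * Polynomial.eval₂ (MvPolynomial.eval σ) (Complex.I * (s : ℂ)⁻¹) f := by
      rw [hQdef, Polynomial.eval₂_finset_sum]
      rw [Polynomial.eval₂_eq_sum_range, Finset.mul_sum]
      apply Finset.sum_congr rfl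
      intro j hj
      have hjn : j ≤ n := Nat.lt_succ_iff.mp (Finset.mem_range.mp hj)
      simp only [Polynomial.eval₂_mul, Polynomial.eval₂_C, Polynomial.eval₂_X_pow, map_mul,
        MvPolynomial.eval_C, mul_pow]
      have hpow : (s : ℂ) ^ (n - j) = (s : ℂ) ^ n * ((s : ℂ)⁻¹) ^ j := by
        rw [inv_pow, pow_sub₀ _ hs0 hjn]
      rw [hpow]
      ring
    rw [heq]
    apply mul_ne_zero (pow_ne_zero n hs0)
    apply hf σ _ hσ
    rw [← Complex.ofReal_inv]
    simp [Complex.mul_im]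
    positivity
  have := hurwitz Q hQup
  rw [hQ0] at this
  have hCne : (MvPolynomial.C (Complex.I ^ n) : MvPolynomial (Fin d) ℂ) ≠ 0 := by
    intro h
    rw [← map_zero (MvPolynomial.C : ℂ →+* MvPolynomial (Fin d) ℂ)] at h
    exact pow_ne_zero n Complex.I_ne_zero (MvPolynomial.C_injective (Fin d) ℂ h)
  rcases this with h | h
  · left
    rcases mul_eq_zero.mp h with h' | h'
    · exact h'
    · exact absurd h' hCne
  · right
    intro σ hσ
    have := h σ hσ
    rw [map_mul, MvPolynomial.eval_C] at this
    exact fun hc => this (by rw [hc, zero_mul])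

lemma upperY_ne_zero {d : ℕ} (f : Polynomial (MvPolynomial (Fin d) ℂ)) (hf : IsUpperY f) :
    f ≠ 0 := by
  intro h
  apply hf (fun _ => Complex.I) Complex.I (fun _ => by simp) (by simp)
  rw [h, Polynomial.eval₂_zero]

lemma aux {d : ℕ} : ∀ (n : ℕ) (f : Polynomial (MvPolynomial (Fin d) ℂ)),
    IsUpperY f → f.natDegree ≤ n → ∀ i, f.coeff i = 0 ∨ IsUpper (f.coeff i) := by
  intro n
  induction n with
  | zero =>
    intro f hf hdeg i
    match i with
    | 0 => exact bottom_coeff f hf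
    | (k+1) =>
      left
      apply Polynomial.coeff_eq_zero_of_natDegree_lt
      omega
  | succ n ih =>
    intro f hf hdeg i
    match i with
    | 0 => exact bottom_coeff f hf
    | (k+1) =>
      by_cases hfd : f.natDegree = 0
      · left
        apply Polynomial.coeff_eq_zero_of_natDegree_lt
        omega
      -- leading coefficient is upper
      have hfne : f ≠ 0 := upperY_ne_zero f hf
      have htop : IsUpper (f.coeff f.natDegree) := by
        rcases top_coeff f hf with h | h
        · exact absurd h (by
            rw [← Polynomial.leadingCoeff]
            exact Polynomial.leadingCoeff_ne_zero.mpr hfne)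
        · exact h
      -- the derivative is upper
      have hderiv : IsUpperY (Polynomial.derivative f) := by
        intro σ τ hσ hτ
        have hmap : Polynomial.eval₂ (MvPolynomial.eval σ) τ (Polynomial.derivative f)
            = (Polynomial.derivative (f.map (MvPolynomial.eval σ))).eval τ := by
          rw [Polynomial.eval₂_eq_eval_map, Polynomial.derivative_map]
        rw [hmap]
        apply gauss_lucas
        · rw [Polynomial.natDegree_map_of_leadingCoeff_ne_zero]
          · exact hfd
          · exact htop σ hσ
        · intro z hz
          rw [← Polynomial.eval₂_eq_eval_map]
          exact hf σ z hσ hz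
        · exact hτ
      have hdd : (Polynomial.derivative f).natDegree ≤ n := by
        have := Polynomial.natDegree_derivative_lt hfd
        omega
      rcases ih (Polynomial.derivative f) hderiv hdd k with h | h
      · left
        rw [Polynomial.coeff_derivative] at h
        have hcast : ((k : MvPolynomial (Fin d) ℂ) + 1) ≠ 0 := by
          have h1 : (((k+1) : ℕ) : MvPolynomial (Fin d) ℂ) ≠ 0 :=
            Nat.cast_ne_zero.mpr (Nat.succ_ne_zero k)
          simpa using h1
        exact (mul_eq_zero.mp h).resolve_right hcast
      · right
        intro σ hσ
        have := h σ hσ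
        rw [Polynomial.coeff_derivative, map_mul] at this
        intro hc
        apply this
        rw [hc, zero_mul]

/-- Every coefficient (in the distinguished variable `y`) of an upper polynomial
in `d+1` variables is zero or an upper polynomial in `d` variables. -/
theorem coeff_isUpper_or_zero {d : ℕ} (f : Polynomial (MvPolynomial (Fin d) ℂ))
    (hf : IsUpperY f) (i : ℕ) :
    f.coeff i = 0 ∨ IsUpper (f.coeff i) :=
  aux f.natDegree f hf le_rfl i
end

section
/- Suppose f(x₁,…,x_d, y) = Σᵢ₌₀ⁿ fᵢ(x₁,…,x_d)·yⁱ is an upper polynomial in d+1 variables. Then consecutive coefficients interlace: for each 0 ≤ i < n, if fᵢ and fᵢ₊₁ are not both zero, then fᵢ + y·fᵢ₊₁ is an upper polynomial in d+1 variables. -/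
open Polynomial Filter

namespace InterlaceAux

local notation "conj'" => (starRingEnd ℂ)

/-- stability (non-vanishing on the open upper half plane) of a univariate complex polynomial -/
def St (p : ℂ[X]) : Prop := ∀ τ : ℂ, 0 < τ.im → p.eval τ ≠ 0

lemma St.ne_zero {p : ℂ[X]} (hp : St p) : p ≠ 0 := by
  intro h
  exact hp Complex.I (by simp) (by simp [h])

lemma St.roots_im {p : ℂ[X]} (hp : St p) {r : ℂ} (hr : r ∈ p.roots) : r.im ≤ 0 := by
  by_contra hlt
  exact hp r (lt_of_not_ge hlt) (isRoot_of_mem_roots hr)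

/-- product of linear factors attached to a multiset of roots -/
noncomputable def pr (M : Multiset ℂ) : ℂ[X] := (M.map fun r => X - C r).prod

lemma pr_cons (r : ℂ) (M : Multiset ℂ) : pr (r ::ₘ M) = (X - C r) * pr M := by
  simp [pr]

lemma pr_eval_ne {M : Multiset ℂ} (hM : ∀ r ∈ M, r.im ≤ 0) {τ : ℂ} (hτ : 0 < τ.im) :
    (pr M).eval τ ≠ 0 := by
  rw [pr, eval_multiset_prod]
  apply Multiset.prod_ne_zero
  intro h0
  rw [Multiset.mem_map] at h0
  obtain ⟨q, hq, hq0⟩ := h0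
  rw [Multiset.mem_map] at hq
  obtain ⟨r, hr, rfl⟩ := hq
  rw [eval_sub, eval_X, eval_C, sub_eq_zero] at hq0
  have := hM r hr
  rw [← hq0] at this
  linarith

lemma pr_im_le {M : Multiset ℂ} (hM : ∀ r ∈ M, r.im ≤ 0) {τ : ℂ} (hτ : 0 ≤ τ.im) :
    ((derivative (pr M)).eval τ * conj' ((pr M).eval τ)).im ≤ 0 := by
  induction M using Multiset.induction_on with
  | empty => simp [pr]
  | cons r M ih =>
    have hr : r.im ≤ 0 := hM r (Multiset.mem_cons_self _ _)
    have hM' : ∀ s ∈ M, s.im ≤ 0 := fun s hs => hM s (Multiset.mem_cons_of_mem hs)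
    set A := (pr M).eval τ with hA
    set B := (derivative (pr M)).eval τ with hB
    have hD : (derivative (pr (r ::ₘ M))).eval τ = A + (τ - r) * B := by
      rw [pr_cons, derivative_mul, derivative_sub, derivative_X, derivative_C, sub_zero, one_mul,
        eval_add, eval_mul, eval_sub, eval_X, eval_C]
    have hE : (pr (r ::ₘ M)).eval τ = (τ - r) * A := by
      rw [pr_cons, eval_mul, eval_sub, eval_X, eval_C]
    rw [hD, hE]
    have expand : (A + (τ - r) * B) * conj' ((τ - r) * A)
        = conj' (τ - r) * (A * conj' A) + ((τ - r) * conj' (τ - r)) * (B * conj' A) := by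
      rw [map_mul]; ring
    rw [expand, Complex.mul_conj, Complex.mul_conj]
    have h1 : (conj' (τ - r) * (↑(Complex.normSq A) : ℂ)).im
        = Complex.normSq A * (r.im - τ.im) := by
      simp [Complex.mul_im, Complex.conj_im, Complex.sub_im]
      ring
    have h2 : ((↑(Complex.normSq (τ - r)) : ℂ) * (B * conj' A)).im
        = Complex.normSq (τ - r) * (B * conj' A).im := by
      simp [Complex.mul_im]
    rw [Complex.add_im, h1, h2]
    have h3 : (B * conj' A).im ≤ 0 := ih hM'
    nlinarith [Complex.normSq_nonneg A, Complex.normSq_nonneg (τ - r)]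

lemma pr_im_lt {M : Multiset ℂ} (hM : ∀ r ∈ M, r.im ≤ 0) (hne : M ≠ 0) {τ : ℂ}
    (hτ : 0 < τ.im) :
    ((derivative (pr M)).eval τ * conj' ((pr M).eval τ)).im < 0 := by
  obtain ⟨r, hr⟩ := Multiset.exists_mem_of_ne_zero hne
  obtain ⟨M', rfl⟩ : ∃ M', M = r ::ₘ M' := ⟨M.erase r, (Multiset.cons_erase hr).symm⟩
  have hrim : r.im ≤ 0 := hM r (Multiset.mem_cons_self _ _)
  have hM' : ∀ s ∈ M', s.im ≤ 0 := fun s hs => hM s (Multiset.mem_cons_of_mem hs)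
  set A := (pr M').eval τ with hA
  set B := (derivative (pr M')).eval τ with hB
  have hD : (derivative (pr (r ::ₘ M'))).eval τ = A + (τ - r) * B := by
    rw [pr_cons, derivative_mul, derivative_sub, derivative_X, derivative_C, sub_zero, one_mul,
      eval_add, eval_mul, eval_sub, eval_X, eval_C]
  have hE : (pr (r ::ₘ M')).eval τ = (τ - r) * A := by
    rw [pr_cons, eval_mul, eval_sub, eval_X, eval_C]
  rw [hD, hE]
  have expand : (A + (τ - r) * B) * conj' ((τ - r) * A)
      = conj' (τ - r) * (A * conj' A) + ((τ - r) * conj' (τ - r)) * (B * conj' A) := by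
    rw [map_mul]; ring
  rw [expand, Complex.mul_conj, Complex.mul_conj]
  have h1 : (conj' (τ - r) * (↑(Complex.normSq A) : ℂ)).im
      = Complex.normSq A * (r.im - τ.im) := by
    simp [Complex.mul_im, Complex.conj_im, Complex.sub_im]
    ring
  have h2 : ((↑(Complex.normSq (τ - r)) : ℂ) * (B * conj' A)).im
      = Complex.normSq (τ - r) * (B * conj' A).im := by
    simp [Complex.mul_im]
  rw [Complex.add_im, h1, h2]
  have h3 : (B * conj' A).im ≤ 0 := pr_im_le hM' (le_of_lt hτ)
  have hA0 : A ≠ 0 := pr_eval_ne hM' hτ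
  have h4 : 0 < Complex.normSq A := Complex.normSq_pos.mpr hA0
  nlinarith [Complex.normSq_nonneg (τ - r)]

lemma St.factor {p : ℂ[X]} (hp : St p) :
    p = C p.leadingCoeff * pr p.roots := by
  have hsp : p.roots.card = p.natDegree := splits_iff_card_roots.mp (IsAlgClosed.splits p)
  exact (C_leadingCoeff_mul_prod_multiset_X_sub_C hsp).symm

lemma St.card_roots {p : ℂ[X]} (hp : St p) : p.roots.card = p.natDegree := by
  exact splits_iff_card_roots.mp (IsAlgClosed.splits p)

lemma St.derivative_st {p : ℂ[X]} (hp : St p) (hd : 0 < p.natDegree) : St (derivative p) := by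
  intro τ hτ h0
  have hp0 := hp.ne_zero
  have hlc : p.leadingCoeff ≠ 0 := leadingCoeff_ne_zero.mpr hp0
  have hM : ∀ r ∈ p.roots, r.im ≤ 0 := fun r hr => hp.roots_im hr
  have hMne : p.roots ≠ 0 := by
    intro h
    have hc := hp.card_roots
    rw [h, Multiset.card_zero] at hc
    omega
  have hder : derivative p = C p.leadingCoeff * derivative (pr p.roots) := by
    conv_lhs => rw [hp.factor]
    rw [derivative_mul, derivative_C, zero_mul, zero_add]
  have hDz : (derivative (pr p.roots)).eval τ = 0 := by
    have := h0
    rw [hder, eval_mul, eval_C, mul_eq_zero] at this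
    tauto
  have := pr_im_lt hM hMne hτ
  rw [hDz, zero_mul] at this
  simp at this

lemma St.iterate_st {p : ℂ[X]} (hp : St p) (k : ℕ) :
    St (derivative^[k] p) ∨ derivative^[k] p = 0 := by
  induction k with
  | zero => exact Or.inl hp
  | succ k ih =>
    rw [Function.iterate_succ_apply']
    rcases ih with hst | h0
    · rcases Nat.eq_zero_or_pos (derivative^[k] p).natDegree with hd | hd
      · right
        rw [eq_C_of_natDegree_eq_zero hd, derivative_C]
      · exact Or.inl (hst.derivative_st hd)
    · right; rw [h0, derivative_zero]

-- multiset helper lemmas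
lemma msum_im (s : Multiset ℂ) : s.sum.im = (s.map Complex.im).sum := by
  induction s using Multiset.induction_on with
  | empty => simp
  | cons a s ih => simp [ih]

lemma msum_re (s : Multiset ℂ) : s.sum.re = (s.map Complex.re).sum := by
  induction s using Multiset.induction_on with
  | empty => simp
  | cons a s ih => simp [ih]

lemma msum_nonpos (s : Multiset ℝ) (h : ∀ x ∈ s, x ≤ 0) : s.sum ≤ 0 := by
  induction s using Multiset.induction_on with
  | empty => simp
  | cons a s ih =>
    have ha := h a (Multiset.mem_cons_self _ _)
    have := ih (fun x hx => h x (Multiset.mem_cons_of_mem hx))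
    rw [Multiset.sum_cons]; linarith

lemma msum_nonpos_zero (s : Multiset ℝ) (h : ∀ x ∈ s, x ≤ 0) (h0 : s.sum = 0) :
    ∀ x ∈ s, x = 0 := by
  induction s using Multiset.induction_on with
  | empty => simp
  | cons a s ih =>
    have ha := h a (Multiset.mem_cons_self _ _)
    have hs : ∀ x ∈ s, x ≤ 0 := fun x hx => h x (Multiset.mem_cons_of_mem hx)
    have hsum := msum_nonpos s hs
    rw [Multiset.sum_cons] at h0
    have ha0 : a = 0 := by linarith
    have hs0 : s.sum = 0 := by linarith
    intro x hx
    rcases Multiset.mem_cons.mp hx with rfl | hx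
    · exact ha0
    · exact ih hs hs0 x hx

lemma msum_pos (s : Multiset ℝ) (h : ∀ x ∈ s, 0 < x) (hne : s ≠ 0) : 0 < s.sum := by
  obtain ⟨a, ha⟩ := Multiset.exists_mem_of_ne_zero hne
  obtain ⟨s', rfl⟩ : ∃ s', s = a ::ₘ s' := ⟨s.erase a, (Multiset.cons_erase ha).symm⟩
  have h1 := h a (Multiset.mem_cons_self _ _)
  have h2 : (0:ℝ) ≤ s'.sum := by
    have := msum_nonpos (s'.map (fun x => -x)) (by
      intro x hx
      rw [Multiset.mem_map] at hx
      obtain ⟨y, hy, rfl⟩ := hx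
      have := h y (Multiset.mem_cons_of_mem hy)
      linarith)
    rw [Multiset.sum_map_neg'] at this
    simpa using this
  rw [Multiset.sum_cons]
  linarith

lemma msum_nonneg (s : Multiset ℝ) (h : ∀ x ∈ s, 0 ≤ x) : 0 ≤ s.sum := by
  induction s using Multiset.induction_on with
  | empty => simp
  | cons a s ih =>
    have ha := h a (Multiset.mem_cons_self _ _)
    have := ih (fun x hx => h x (Multiset.mem_cons_of_mem hx))
    rw [Multiset.sum_cons]
    linarith

lemma pr_eval0_ne {M : Multiset ℂ} (hM : ∀ r ∈ M, r ≠ 0) : (pr M).eval 0 ≠ 0 := by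
  rw [pr, eval_multiset_prod]
  apply Multiset.prod_ne_zero
  intro h0
  rw [Multiset.mem_map] at h0
  obtain ⟨q, hq, hq0⟩ := h0
  rw [Multiset.mem_map] at hq
  obtain ⟨r, hr, rfl⟩ := hq
  rw [eval_sub, eval_X, eval_C, zero_sub, neg_eq_zero] at hq0
  exact hM r hr hq0

lemma pr_derivs {M : Multiset ℂ} (hM : ∀ r ∈ M, r ≠ 0) :
    (derivative (pr M)).eval 0 = (pr M).eval 0 * (M.map fun r => -r⁻¹).sum ∧
    (derivative (derivative (pr M))).eval 0 =
      (pr M).eval 0 * ((M.map fun r => -r⁻¹).sum ^ 2 - (M.map fun r => (r⁻¹)^2).sum) := by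
  induction M using Multiset.induction_on with
  | empty => simp [pr]
  | cons r M ih =>
    have hr : r ≠ 0 := hM r (Multiset.mem_cons_self _ _)
    have hM' : ∀ s ∈ M, s ≠ 0 := fun s hs => hM s (Multiset.mem_cons_of_mem hs)
    obtain ⟨ih1, ih2⟩ := ih hM'
    set P0 := (pr M).eval 0 with hP0
    set T1 := (M.map fun r => -r⁻¹).sum with hT1
    set T2 := (M.map fun r => (r⁻¹)^2).sum with hT2
    have hd1 : derivative (pr (r ::ₘ M)) = pr M + (X - C r) * derivative (pr M) := by
      rw [pr_cons, derivative_mul, derivative_sub, derivative_X, derivative_C, sub_zero, one_mul]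
    have hd2 : derivative (derivative (pr (r ::ₘ M)))
        = derivative (pr M) + (derivative (pr M) + (X - C r) * derivative (derivative (pr M))) := by
      rw [hd1, derivative_add, derivative_mul, derivative_sub, derivative_X, derivative_C,
        sub_zero, one_mul]
    have he0 : (pr (r ::ₘ M)).eval 0 = -r * P0 := by
      rw [pr_cons, eval_mul, eval_sub, eval_X, eval_C, zero_sub]
    have he1 : (derivative (pr (r ::ₘ M))).eval 0 = P0 + (-r) * (P0 * T1) := by
      rw [hd1, eval_add, eval_mul, eval_sub, eval_X, eval_C, zero_sub, ih1]
    have he2 : (derivative (derivative (pr (r ::ₘ M)))).eval 0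
        = P0 * T1 + (P0 * T1 + (-r) * (P0 * (T1^2 - T2))) := by
      rw [hd2, eval_add, eval_add, eval_mul, eval_sub, eval_X, eval_C, zero_sub, ih1, ih2]
    have key : r * r⁻¹ = 1 := mul_inv_cancel₀ hr
    constructor
    · rw [he1, he0]
      simp only [Multiset.map_cons, Multiset.sum_cons]
      linear_combination (-P0) * key
    · rw [he2, he0]
      simp only [Multiset.map_cons, Multiset.sum_cons]
      linear_combination (-2*P0*T1) * key

lemma sigma' {p : ℂ[X]} (hp : St p) (h0 : p.eval 0 ≠ 0) (h1 : (derivative p).eval 0 = 0) :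
    ∃ lam : ℝ, 0 ≤ lam ∧ (derivative (derivative p)).eval 0 = -(lam:ℂ) * p.eval 0 ∧
      (0 < p.natDegree → 0 < lam) := by
  have hp0 := hp.ne_zero
  have hlc : p.leadingCoeff ≠ 0 := leadingCoeff_ne_zero.mpr hp0
  set M := p.roots with hMdef
  have hMim : ∀ r ∈ M, r.im ≤ 0 := fun r hr => hp.roots_im hr
  have hMne0 : ∀ r ∈ M, r ≠ 0 := by
    intro r hr hrz
    apply h0
    have := isRoot_of_mem_roots hr
    rwa [hrz] at this
  obtain ⟨hd1, hd2⟩ := pr_derivs hMne0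
  set T1 := (M.map fun r => -r⁻¹).sum with hT1def
  set T2 := (M.map fun r => (r⁻¹)^2).sum with hT2def
  have hP0 : (pr M).eval 0 ≠ 0 := pr_eval0_ne hMne0
  have hev0 : p.eval 0 = p.leadingCoeff * (pr M).eval 0 := by
    conv_lhs => rw [hp.factor]
    rw [eval_mul, eval_C]
  have hder1 : (derivative p).eval 0 = p.leadingCoeff * ((pr M).eval 0 * T1) := by
    conv_lhs => rw [hp.factor]
    rw [derivative_mul, derivative_C, zero_mul, zero_add, eval_mul, eval_C, hd1]
  have hder2 : (derivative (derivative p)).eval 0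
      = p.leadingCoeff * ((pr M).eval 0 * (T1^2 - T2)) := by
    conv_lhs => rw [hp.factor]
    rw [derivative_mul, derivative_C, zero_mul, zero_add, derivative_mul, derivative_C,
      zero_mul, zero_add, eval_mul, eval_C, hd2]
  have hT1z : T1 = 0 := by
    rw [hder1, mul_eq_zero, mul_eq_zero] at h1
    tauto
  -- all roots are real
  have hreal : ∀ r ∈ M, r.im = 0 := by
    have him : ((M.map fun r => -r⁻¹).map Complex.im).sum = 0 := by
      rw [← msum_im, ← hT1def, hT1z, Complex.zero_im]
    have hle : ∀ x ∈ (M.map fun r => -r⁻¹).map Complex.im, x ≤ 0 := by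
      intro x hx
      rw [Multiset.map_map, Multiset.mem_map] at hx
      obtain ⟨r, hr, rfl⟩ := hx
      simp only [Function.comp_apply, Complex.neg_im, Complex.inv_im, neg_neg, neg_nonpos]
      have h1 := hMim r hr
      have h2 : 0 < Complex.normSq r := Complex.normSq_pos.mpr (hMne0 r hr)
      exact div_nonneg (by linarith) (le_of_lt h2)
    have hall := msum_nonpos_zero _ hle him
    intro r hr
    have hmem : (-r⁻¹).im ∈ (M.map fun r => -r⁻¹).map Complex.im := by
      rw [Multiset.map_map]
      exact Multiset.mem_map_of_mem _ hr
    have := hall _ hmem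
    simp only [Complex.neg_im, Complex.inv_im, neg_neg] at this
    have h2 : 0 < Complex.normSq r := Complex.normSq_pos.mpr (hMne0 r hr)
    field_simp at this
    simpa using this
  -- T2 is a nonnegative real
  have hterm_im : ∀ r ∈ M, ((r⁻¹)^2 : ℂ).im = 0 := by
    intro r hr
    have : (r⁻¹).im = 0 := by
      rw [Complex.inv_im, hreal r hr]
      simp
    rw [pow_two, Complex.mul_im, this]
    ring
  have hterm_re : ∀ r ∈ M, 0 < ((r⁻¹)^2 : ℂ).re := by
    intro r hr
    have him : (r⁻¹).im = 0 := by
      rw [Complex.inv_im, hreal r hr]; simp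
    have hne : r⁻¹ ≠ 0 := inv_ne_zero (hMne0 r hr)
    have hre : (r⁻¹).re ≠ 0 := by
      intro h
      exact hne (Complex.ext h him)
    rw [pow_two, Complex.mul_re, him]
    simp only [mul_zero, sub_zero]
    exact mul_self_pos.mpr hre
  have hT2im : T2.im = 0 := by
    rw [hT2def, msum_im]
    apply Multiset.sum_eq_zero
    intro x hx
    rw [Multiset.map_map, Multiset.mem_map] at hx
    obtain ⟨r, hr, rfl⟩ := hx
    exact hterm_im r hr
  have hT2C : T2 = ((T2.re : ℝ) : ℂ) := by
    apply Complex.ext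
    · simp
    · simp [hT2im]
  refine ⟨T2.re, ?_, ?_, ?_⟩
  · rw [msum_re]
    apply msum_nonneg
    intro x hx
    rw [Multiset.map_map, Multiset.mem_map] at hx
    obtain ⟨r, hr, rfl⟩ := hx
    exact le_of_lt (hterm_re r hr)
  · rw [hder2, hT1z, hev0]
    rw [← hT2C]
    ring
  · intro hdeg
    have hMne : M ≠ 0 := by
      intro h
      have hc := hp.card_roots
      rw [← hMdef, h, Multiset.card_zero] at hc
      omega
    rw [msum_re]
    apply msum_pos
    · intro x hx
      rw [Multiset.map_map, Multiset.mem_map] at hx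
      obtain ⟨r, hr, rfl⟩ := hx
      exact hterm_re r hr
    · simp only [ne_eq, Multiset.map_eq_zero]
      exact hMne

lemma iter_deriv_eval0 (p : ℂ[X]) (k : ℕ) :
    (derivative^[k] p).eval 0 = (k.factorial : ℂ) * p.coeff k := by
  rw [← coeff_zero_eq_eval_zero, coeff_iterate_derivative, zero_add, Nat.descFactorial_self,
    nsmul_eq_mul]

/-- the stable pencil lemma for two consecutive coefficients of a stable polynomial -/
lemma pencil {p : ℂ[X]} (hp : St p) {i : ℕ}
    (hpair : ¬(p.coeff i = 0 ∧ p.coeff (i+1) = 0)) {τ : ℂ} (hτ : 0 < τ.im) :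
    p.coeff i + τ * p.coeff (i + 1) ≠ 0 := by
  intro heq
  have hfact_i : ((i.factorial : ℂ)) ≠ 0 := Nat.cast_ne_zero.mpr (Nat.factorial_ne_zero i)
  have hfact_i1 : (((i+1).factorial : ℂ)) ≠ 0 := Nat.cast_ne_zero.mpr (Nat.factorial_ne_zero (i+1))
  rcases hp.iterate_st i with hst | h0
  swap
  · -- iterated derivative vanishes, so both coefficients vanish
    apply hpair
    constructor
    · have := iter_deriv_eval0 p i
      rw [h0] at this
      simp only [eval_zero] at this
      exact (mul_eq_zero.mp this.symm).resolve_left hfact_i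
    · have h1 : derivative^[i+1] p = 0 := by
        rw [Function.iterate_succ_apply', h0, derivative_zero]
      have := iter_deriv_eval0 p (i+1)
      rw [h1] at this
      simp only [eval_zero] at this
      exact (mul_eq_zero.mp this.symm).resolve_left hfact_i1
  set q := derivative^[i] p with hq
  have hci1 : p.coeff (i+1) ≠ 0 := by
    intro hz
    apply hpair
    refine ⟨?_, hz⟩
    rw [hz, mul_zero, add_zero] at heq
    exact heq
  have hci : p.coeff i = -(τ * p.coeff (i+1)) := by linear_combination heq
  have ha : q.eval 0 = (i.factorial : ℂ) * (-(τ * p.coeff (i+1))) := by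
    rw [iter_deriv_eval0, hci]
  have hb : (derivative q).eval 0 = ((i+1).factorial : ℂ) * p.coeff (i+1) := by
    rw [hq, show derivative (derivative^[i] p) = derivative^[i+1] p from
      (Function.iterate_succ_apply' _ _ _).symm, iter_deriv_eval0]
  -- upper bound for the imaginary part from stability
  have hroots : ∀ r ∈ q.roots, r.im ≤ 0 := fun r hr => hst.roots_im hr
  have him_le : ((derivative q).eval 0 * conj' (q.eval 0)).im ≤ 0 := by
    have hfac := hst.factor
    have hder : derivative q = C q.leadingCoeff * derivative (pr q.roots) := by
      conv_lhs => rw [hfac]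
      rw [derivative_mul, derivative_C, zero_mul, zero_add]
    have he1 : q.eval 0 = q.leadingCoeff * (pr q.roots).eval 0 := by
      conv_lhs => rw [hfac]
      rw [eval_mul, eval_C]
    have he2 : (derivative q).eval 0 = q.leadingCoeff * (derivative (pr q.roots)).eval 0 := by
      rw [hder, eval_mul, eval_C]
    rw [he1, he2, map_mul]
    have expand : q.leadingCoeff * (derivative (pr q.roots)).eval 0 *
        (conj' q.leadingCoeff * conj' ((pr q.roots).eval 0))
        = (q.leadingCoeff * conj' q.leadingCoeff) *
          ((derivative (pr q.roots)).eval 0 * conj' ((pr q.roots).eval 0)) := by ring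
    rw [expand, Complex.mul_conj]
    have him := pr_im_le hroots (le_of_eq (Complex.zero_im).symm)
    have : ((↑(Complex.normSq q.leadingCoeff) : ℂ) * ((derivative (pr q.roots)).eval 0 *
        conj' ((pr q.roots).eval 0))).im = Complex.normSq q.leadingCoeff *
        ((derivative (pr q.roots)).eval 0 * conj' ((pr q.roots).eval 0)).im := by
      simp [Complex.mul_im]
    rw [this]
    exact mul_nonpos_of_nonneg_of_nonpos (Complex.normSq_nonneg _) him
  -- lower bound: direct computation
  have hkey : (derivative q).eval 0 * conj' (q.eval 0)
      = (((i+1).factorial : ℂ) * (i.factorial : ℂ) * Complex.normSq (p.coeff (i+1))) *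
        (-(conj' τ)) := by
    rw [ha, hb, map_mul, map_neg, map_mul, map_natCast]
    have : p.coeff (i+1) * conj' (p.coeff (i+1)) = (Complex.normSq (p.coeff (i+1)) : ℂ) :=
      Complex.mul_conj _
    calc ((i+1).factorial : ℂ) * p.coeff (i+1) *
          ((i.factorial : ℂ) * -(conj' τ * conj' (p.coeff (i+1))))
        = ((i+1).factorial : ℂ) * (i.factorial : ℂ) *
            (p.coeff (i+1) * conj' (p.coeff (i+1))) * (-(conj' τ)) := by ring
      _ = _ := by rw [this]
  have him_pos : 0 < ((derivative q).eval 0 * conj' (q.eval 0)).im := by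
    rw [hkey]
    have hcast : (((i+1).factorial : ℂ) * (i.factorial : ℂ) *
        Complex.normSq (p.coeff (i+1))) = ((((i+1).factorial * (i.factorial) : ℕ) : ℝ) *
        Complex.normSq (p.coeff (i+1)) : ℝ) := by push_cast; ring
    rw [hcast]
    have : ((((((i+1).factorial * i.factorial : ℕ) : ℝ)) * Complex.normSq (p.coeff (i+1)) : ℝ)
        * (-(conj' τ)) : ℂ).im = ((((i+1).factorial * i.factorial : ℕ) : ℝ) *
        Complex.normSq (p.coeff (i+1))) * τ.im := by
      simp [Complex.mul_im, Complex.conj_im]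
    rw [this]
    apply mul_pos _ hτ
    apply mul_pos
    · exact_mod_cast Nat.pos_of_ne_zero (by positivity)
    · exact Complex.normSq_pos.mpr hci1
  linarith

/-- support structure: two consecutive vanishing coefficients force a whole block to vanish -/
lemma support {p : ℂ[X]} (hp : St p) {i : ℕ} (h1 : p.coeff i = 0) (h2 : p.coeff (i+1) = 0) :
    (∀ k, k ≤ i + 1 → p.coeff k = 0) ∨ (∀ k, i ≤ k → p.coeff k = 0) := by
  classical
  by_contra hcon
  push_neg at hcon
  obtain ⟨⟨k₁, hk₁le, hk₁⟩, ⟨k₂, hk₂le, hk₂⟩⟩ := hcon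
  have hk₁lt : k₁ < i := by
    have e1 : k₁ ≠ i := fun h => hk₁ (h ▸ h1)
    have e2 : k₁ ≠ i + 1 := fun h => hk₁ (h ▸ h2)
    omega
  have hk₂ge : i + 2 ≤ k₂ := by
    have e1 : k₂ ≠ i := fun h => hk₂ (h ▸ h1)
    have e2 : k₂ ≠ i + 1 := fun h => hk₂ (h ▸ h2)
    omega
  set P : ℕ → Prop := fun l => p.coeff l ≠ 0 with hP
  set ks := Nat.findGreatest P i with hks
  have hPks : P ks := Nat.findGreatest_spec (le_of_lt hk₁lt) hk₁
  have hksle : ks ≤ i := Nat.findGreatest_le i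
  have hkslt : ks < i := by
    have : ks ≠ i := fun h => hPks (h ▸ h1)
    omega
  have hgt : ∀ k, ks < k → k ≤ i → p.coeff k = 0 := by
    intro k hlt hle
    by_contra hne
    exact (Nat.findGreatest_is_greatest (hks ▸ hlt) hle) hne
  have hz1 : p.coeff (ks+1) = 0 := hgt (ks+1) (by omega) (by omega)
  have hz2 : p.coeff (ks+2) = 0 := by
    by_cases hc : ks + 2 ≤ i
    · exact hgt _ (by omega) hc
    · have : ks + 2 = i + 1 := by omega
      rw [this]; exact h2
  have he0 : (derivative^[ks] p).eval 0 = (ks.factorial : ℂ) * p.coeff ks :=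
    iter_deriv_eval0 p ks
  have hq0ne : (derivative^[ks] p).eval 0 ≠ 0 := by
    rw [he0]
    exact mul_ne_zero (Nat.cast_ne_zero.mpr (Nat.factorial_ne_zero ks)) hPks
  have hqne : derivative^[ks] p ≠ 0 := fun h => hq0ne (by rw [h]; simp)
  have hstq : St (derivative^[ks] p) := (hp.iterate_st ks).resolve_right hqne
  have hit1 : derivative (derivative^[ks] p) = derivative^[ks+1] p :=
    (Function.iterate_succ_apply' _ _ _).symm
  have hit2 : derivative (derivative^[ks+1] p) = derivative^[ks+2] p :=
    (Function.iterate_succ_apply' _ _ _).symm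
  have hd1 : (derivative (derivative^[ks] p)).eval 0 = 0 := by
    rw [hit1, iter_deriv_eval0, hz1, mul_zero]
  have hd2 : (derivative (derivative (derivative^[ks] p))).eval 0 = 0 := by
    rw [hit1, hit2, iter_deriv_eval0, hz2, mul_zero]
  obtain ⟨lam, hlam0, hlameq, hlampos⟩ := sigma' hstq hq0ne hd1
  have hlamz : lam = 0 := by
    rw [hd2] at hlameq
    rcases mul_eq_zero.mp hlameq.symm with hc | hc
    · exact_mod_cast neg_eq_zero.mp hc
    · exact absurd hc hq0ne
  have hdeg0 : (derivative^[ks] p).natDegree = 0 := by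
    by_contra hdeg
    have := hlampos (Nat.pos_of_ne_zero hdeg)
    linarith
  have hcoeffk2 : (derivative^[ks] p).coeff (k₂ - ks) ≠ 0 := by
    rw [coeff_iterate_derivative]
    have hsub : k₂ - ks + ks = k₂ := by omega
    rw [hsub, nsmul_eq_mul]
    refine mul_ne_zero ?_ hk₂
    exact Nat.cast_ne_zero.mpr (by rw [Ne, Nat.descFactorial_eq_zero_iff_lt]; omega)
  have hle := le_natDegree_of_ne_zero hcoeffk2
  rw [hdeg0] at hle
  omega

/-- If `Im (A/B) ≥ 0` on a punctured disc around `t₀` (wherever `B ≠ 0`), then the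
vanishing orders of `A` and `B` at `t₀` coincide. -/
lemma core {A B : ℂ[X]} (hA : A ≠ 0) (hB : B ≠ 0) {t₀ : ℂ} {δ : ℝ} (hδ : 0 < δ)
    (h : ∀ t : ℂ, ‖(t - t₀)‖ < δ → B.eval t ≠ 0 → 0 ≤ (A.eval t / B.eval t).im) :
    rootMultiplicity t₀ A = rootMultiplicity t₀ B := by
  by_contra hne
  obtain ⟨A₁, hA₁eq, hA₁nd⟩ := A.exists_eq_pow_rootMultiplicity_mul_and_not_dvd hA t₀
  obtain ⟨B₁, hB₁eq, hB₁nd⟩ := B.exists_eq_pow_rootMultiplicity_mul_and_not_dvd hB t₀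
  have hA₁0 : A₁.eval t₀ ≠ 0 := fun hh => hA₁nd (dvd_iff_isRoot.mpr hh)
  have hB₁0 : B₁.eval t₀ ≠ 0 := fun hh => hB₁nd (dvd_iff_isRoot.mpr hh)
  set a := rootMultiplicity t₀ A with ha
  set b := rootMultiplicity t₀ B with hb
  set γ := A₁.eval t₀ / B₁.eval t₀ with hγdef
  have hγ : γ ≠ 0 := div_ne_zero hA₁0 hB₁0
  set e : ℤ := (a : ℤ) - b with he_def
  have he : e ≠ 0 := sub_ne_zero.mpr (by exact_mod_cast hne)
  set n := e.natAbs with hn_def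
  have hn : 0 < n := Int.natAbs_pos.mpr he
  set w : ℂ := -Complex.I * (‖γ‖ : ℂ) / γ with hw_def
  have habsγ : (0:ℝ) < ‖γ‖ := norm_pos_iff.mpr hγ
  have hw : w ≠ 0 := by
    apply div_ne_zero _ hγ
    apply mul_ne_zero (neg_ne_zero.mpr Complex.I_ne_zero)
    exact_mod_cast ne_of_gt habsγ
  obtain ⟨u, hu0, hue⟩ : ∃ u : ℂ, u ≠ 0 ∧ u ^ e = w := by
    rcases Int.natAbs_eq e with he' | he'
    · obtain ⟨u, hu⟩ := IsAlgClosed.exists_pow_nat_eq w hn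
      refine ⟨u, ?_, ?_⟩
      · intro hz
        rw [hz, zero_pow hn.ne'] at hu
        exact hw hu.symm
      · rw [he', zpow_natCast, hu]
    · obtain ⟨u, hu⟩ := IsAlgClosed.exists_pow_nat_eq w⁻¹ hn
      refine ⟨u, ?_, ?_⟩
      · intro hz
        rw [hz, zero_pow hn.ne'] at hu
        exact hw (inv_eq_zero.mp hu.symm)
      · rw [he', zpow_neg, zpow_natCast, hu, inv_inv]
  have huγ : u ^ e * γ = -Complex.I * (‖γ‖ : ℂ) := by
    rw [hue, hw_def]
    field_simp
  set c : ℝ → ℂ := fun r => t₀ + (r : ℂ) * u with hc_def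
  set l : Filter ℝ := nhdsWithin 0 (Set.Ioi 0) with hl_def
  have hc0 : Tendsto c l (nhds t₀) := by
    have h1 : Continuous c := by
      apply continuous_const.add
      exact (Complex.continuous_ofReal.mul continuous_const)
    have h2 : Tendsto c l (nhds (c 0)) :=
      Tendsto.mono_left (h1.tendsto 0) (nhdsWithin_le_nhds (s := Set.Ioi (0:ℝ)))
    simpa [hc_def] using h2
  have hgA : Tendsto (fun r => A₁.eval (c r)) l (nhds (A₁.eval t₀)) :=
    ((A₁.continuous).tendsto t₀).comp hc0
  have hgB : Tendsto (fun r => B₁.eval (c r)) l (nhds (B₁.eval t₀)) :=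
    ((B₁.continuous).tendsto t₀).comp hc0
  set F : ℝ → ℂ := fun r => u ^ e * (A₁.eval (c r) / B₁.eval (c r)) with hF_def
  have hF : Tendsto F l (nhds (u ^ e * γ)) := tendsto_const_nhds.mul (hgA.div hgB hB₁0)
  have hev1 : ∀ᶠ r in l, 0 < r := eventually_mem_nhdsWithin
  have habs : ∀ r : ℝ, ‖(c r - t₀)‖ = |r| * ‖u‖ := by
    intro r
    have : c r - t₀ = (r:ℂ) * u := by rw [hc_def]; ring
    rw [this, norm_mul, Complex.norm_real, Real.norm_eq_abs]
  have hev2 : ∀ᶠ r in l, ‖(c r - t₀)‖ < δ := by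
    have htend : Tendsto (fun r : ℝ => |r| * ‖u‖) (nhds 0) (nhds 0) := by
      have : Tendsto (fun r : ℝ => |r| * ‖u‖) (nhds 0) (nhds (|(0:ℝ)| * ‖u‖)) :=
        (continuous_abs.mul continuous_const).tendsto 0
      simpa using this
    have := (htend.mono_left nhdsWithin_le_nhds : Tendsto _ l _)
    have hlt := this.eventually_lt_const hδ
    filter_upwards [hlt] with r hr
    rw [habs r]; exact hr
  have hev3 : ∀ᶠ r in l, B₁.eval (c r) ≠ 0 := hgB.eventually_ne hB₁0
  have hev : ∀ᶠ r in l, 0 ≤ (F r).im := by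
    filter_upwards [hev1, hev2, hev3] with r hr1 hr2 hr3
    have hrne : ((r:ℝ):ℂ) ≠ 0 := by exact_mod_cast ne_of_gt hr1
    have hx : ((r:ℝ):ℂ) * u ≠ 0 := mul_ne_zero hrne hu0
    have hcr : c r - t₀ = (r:ℂ) * u := by rw [hc_def]; ring
    have hBev : B.eval (c r) ≠ 0 := by
      rw [hB₁eq, eval_mul, eval_pow, eval_sub, eval_X, eval_C, hcr]
      exact mul_ne_zero (pow_ne_zero _ hx) hr3
    have hh := h (c r) hr2 hBev
    have hAB : A.eval (c r) / B.eval (c r) = ((r ^ e : ℝ) : ℂ) * F r := by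
      rw [hA₁eq, hB₁eq, eval_mul, eval_mul, eval_pow, eval_pow, eval_sub, eval_X, eval_C, hcr]
      rw [show (((r:ℝ):ℂ) * u)^a = (((r:ℝ):ℂ) * u) ^ (a:ℤ) from (zpow_natCast _ a).symm,
        show (((r:ℝ):ℂ) * u)^b = (((r:ℝ):ℂ) * u) ^ (b:ℤ) from (zpow_natCast _ b).symm]
      rw [mul_div_mul_comm, ← zpow_sub₀ hx, ← he_def, mul_zpow, ← Complex.ofReal_zpow]
      rw [hF_def]
      ring
    rw [hAB] at hh
    have him : (((r ^ e : ℝ) : ℂ) * F r).im = (r ^ e : ℝ) * (F r).im := by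
      rw [Complex.mul_im, Complex.ofReal_re, Complex.ofReal_im, zero_mul, add_zero]
    rw [him] at hh
    have hpow : (0:ℝ) < r ^ e := zpow_pos hr1 e
    nlinarith
  have hlim : 0 ≤ (u ^ e * γ).im := by
    have htnd : Tendsto (fun r => (F r).im) l (nhds ((u ^ e * γ).im)) :=
      (Complex.continuous_im.tendsto _).comp hF
    exact ge_of_tendsto htnd hev
  rw [huγ] at hlim
  simp only [Complex.mul_im, Complex.neg_re, Complex.I_re, neg_zero, Complex.ofReal_im,
    mul_zero, Complex.neg_im, Complex.I_im, Complex.ofReal_re, zero_mul] at hlim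
  linarith

/-- the top coefficient of a polynomial stable on (disc around 0) × (upper half plane)
does not vanish at the center of the disc. -/
lemma top2 {Φ : Polynomial (Polynomial ℂ)} {δ : ℝ} (hδ : 0 < δ)
    (hst : ∀ (t τ : ℂ), ‖t‖ < δ → 0 < τ.im →
      Polynomial.eval₂ (Polynomial.evalRingHom t) τ Φ ≠ 0) :
    (Φ.coeff Φ.natDegree).eval 0 ≠ 0 := by
  have hStp : ∀ t : ℂ, ‖t‖ < δ → St (Φ.map (evalRingHom t)) := by
    intro t ht τ hτ
    rw [eval_map]
    exact hst t τ ht hτ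
  have hcoe : ∀ (t : ℂ) (k : ℕ), (Φ.map (evalRingHom t)).coeff k = (Φ.coeff k).eval t := by
    intro t k
    rw [coeff_map, coe_evalRingHom]
  have hSt0 : St (Φ.map (evalRingHom 0)) := hStp 0 (by simpa using hδ)
  have hp₀ : Φ.map (evalRingHom 0) ≠ 0 := hSt0.ne_zero
  set j := (Φ.map (evalRingHom 0)).natDegree with hjdef
  have hj0 : (Φ.coeff j).eval 0 ≠ 0 := by
    rw [← hcoe]
    exact leadingCoeff_ne_zero.mpr hp₀
  have hjgt : ∀ k, j < k → (Φ.coeff k).eval 0 = 0 := by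
    intro k hk
    rw [← hcoe]
    exact coeff_eq_zero_of_natDegree_lt hk
  have hΦ0 : Φ ≠ 0 := by
    intro hz
    apply hp₀
    rw [hz, Polynomial.map_zero]
  set M := Φ.natDegree with hMdef
  have hφM : Φ.coeff M ≠ 0 := leadingCoeff_ne_zero.mpr hΦ0
  have hjM : j ≤ M := natDegree_map_le
  have hφj : Φ.coeff j ≠ 0 := fun hz => hj0 (by rw [hz, eval_zero])
  by_cases hjeq : j = M
  · rw [← hjeq]; exact hj0
  have hjlt : j < M := lt_of_le_of_ne hjM hjeq
  -- Claim 1 : the next coefficient vanishes identically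
  have hclaim1 : Φ.coeff (j+1) = 0 := by
    by_contra hne1
    have hcore := core hφj hne1 hδ (t₀ := 0) ?_
    · have hl : rootMultiplicity 0 (Φ.coeff j) = 0 :=
        rootMultiplicity_eq_zero (fun hr => hj0 hr)
      have hr : 0 < rootMultiplicity 0 (Φ.coeff (j+1)) :=
        (rootMultiplicity_pos hne1).mpr (hjgt (j+1) (by omega))
      omega
    · intro t hdist hBt
      rw [sub_zero] at hdist
      have hstp := hStp t hdist
      have hpair : ¬((Φ.map (evalRingHom t)).coeff j = 0 ∧
          (Φ.map (evalRingHom t)).coeff (j+1) = 0) := by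
        rintro ⟨-, h2⟩
        rw [hcoe] at h2
        exact hBt h2
      by_contra hlt
      push_neg at hlt
      set z := (Φ.coeff j).eval t / (Φ.coeff (j+1)).eval t with hzdef
      have hτ : 0 < (-z).im := by
        rw [Complex.neg_im]
        linarith
      apply pencil hstp hpair hτ
      rw [hcoe, hcoe, hzdef, neg_mul, div_mul_cancel₀ _ hBt]
      ring
  have hj1M : j + 1 ≠ M := by
    intro hh
    rw [hh] at hclaim1
    exact hφM hclaim1
  have hj2M : j + 2 ≤ M := by omega
  -- pointwise ratio claim
  have hreal : ∀ t : ℂ, ‖t‖ < δ → (Φ.coeff j).eval t ≠ 0 →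
      (Φ.coeff M).eval t ≠ 0 →
      ∃ lam : ℝ, 0 < lam ∧ (Φ.coeff (j+2)).eval t = -(lam:ℂ) * (Φ.coeff j).eval t := by
    intro t hd hjt hMt
    set p := Φ.map (evalRingHom t) with hpdef
    have hstp : St p := hStp t hd
    have he0 : (derivative^[j] p).eval 0 = (j.factorial : ℂ) * (Φ.coeff j).eval t := by
      rw [iter_deriv_eval0, hcoe]
    have hq0 : (derivative^[j] p).eval 0 ≠ 0 := by
      rw [he0]
      exact mul_ne_zero (Nat.cast_ne_zero.mpr (Nat.factorial_ne_zero _)) hjt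
    have hqne : derivative^[j] p ≠ 0 := fun hz => hq0 (by rw [hz]; simp)
    have hstq : St (derivative^[j] p) := (hstp.iterate_st j).resolve_right hqne
    have hit1 : derivative (derivative^[j] p) = derivative^[j+1] p :=
      (Function.iterate_succ_apply' _ _ _).symm
    have hit2 : derivative (derivative^[j+1] p) = derivative^[j+2] p :=
      (Function.iterate_succ_apply' _ _ _).symm
    have hd1 : (derivative (derivative^[j] p)).eval 0 = 0 := by
      rw [hit1, iter_deriv_eval0, hcoe, hclaim1, eval_zero, mul_zero]
    obtain ⟨lam, hlam0, hlameq, hlampos⟩ := sigma' hstq hq0 hd1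
    have hdegpos : 0 < (derivative^[j] p).natDegree := by
      have hc : (derivative^[j] p).coeff (M - j) ≠ 0 := by
        rw [coeff_iterate_derivative]
        have hsub : M - j + j = M := by omega
        rw [hsub, nsmul_eq_mul]
        refine mul_ne_zero ?_ (by rw [hcoe]; exact hMt)
        exact Nat.cast_ne_zero.mpr (by rw [Ne, Nat.descFactorial_eq_zero_iff_lt]; omega)
      have := le_natDegree_of_ne_zero hc
      omega
    have hlampos' := hlampos hdegpos
    have heq2 : ((j+2).factorial : ℂ) * (Φ.coeff (j+2)).eval t
        = -(lam:ℂ) * ((j.factorial : ℂ) * (Φ.coeff j).eval t) := by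
      rw [← hcoe, ← iter_deriv_eval0, ← hit2, ← hit1, hlameq, he0]
    refine ⟨lam * (j.factorial : ℝ) / ((j+2).factorial : ℝ), by positivity, ?_⟩
    have hfact : (((j+2).factorial : ℝ)) ≠ 0 := Nat.cast_ne_zero.mpr (Nat.factorial_ne_zero _)
    have hfactC : (((j+2).factorial : ℂ)) ≠ 0 := Nat.cast_ne_zero.mpr (Nat.factorial_ne_zero _)
    have hinv : ((j+2).factorial : ℂ) * (((j+2).factorial : ℂ))⁻¹ = 1 := mul_inv_cancel₀ hfactC
    push_cast
    linear_combination (((j+2).factorial : ℂ))⁻¹ * heq2 - (eval t (Φ.coeff (j+2))) * hinv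
  -- the (j+2) coefficient is a nonzero polynomial
  have hφj2 : Φ.coeff (j+2) ≠ 0 := by
    have hRne : Φ.coeff j * Φ.coeff M ≠ 0 := mul_ne_zero hφj hφM
    have hfin : {x : ℂ | (Φ.coeff j * Φ.coeff M).IsRoot x}.Finite :=
      finite_setOf_isRoot hRne
    have hinf : (Complex.ofReal '' Set.Ioo 0 δ).Infinite :=
      (Set.Ioo_infinite hδ).image (Complex.ofReal_injective.injOn)
    obtain ⟨z, hzmem, hznr⟩ := ((hinf.diff hfin).nonempty)
    obtain ⟨x, hx, rfl⟩ := hzmem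
    have habs : ‖(x:ℂ)‖ < δ := by
      rw [Complex.norm_real, Real.norm_eq_abs, abs_of_pos hx.1]
      exact hx.2
    have hnr : ¬ (Φ.coeff j * Φ.coeff M).IsRoot (x:ℂ) := hznr
    rw [IsRoot, eval_mul, mul_eq_zero] at hnr
    push_neg at hnr
    obtain ⟨lam, hlam, heval⟩ := hreal x habs hnr.1 hnr.2
    intro hz
    rw [hz, eval_zero] at heval
    have : (lam : ℂ) = 0 := by
      rcases mul_eq_zero.mp heval.symm with hc | hc
      · exact neg_eq_zero.mp hc
      · exact absurd hc hnr.1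
    have : lam = 0 := by exact_mod_cast this
    exact (ne_of_gt hlam) this
  -- apply core to the products
  have hAne : Φ.coeff (j+2) * Φ.coeff M ≠ 0 := mul_ne_zero hφj2 hφM
  have hBne : Φ.coeff j * Φ.coeff M ≠ 0 := mul_ne_zero hφj hφM
  have hcore := core hAne hBne hδ (t₀ := 0) ?_
  · rw [rootMultiplicity_mul hAne, rootMultiplicity_mul hBne] at hcore
    have hrj : rootMultiplicity 0 (Φ.coeff j) = 0 :=
      rootMultiplicity_eq_zero (fun hr => hj0 hr)
    have hrj2 : 0 < rootMultiplicity 0 (Φ.coeff (j+2)) :=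
      (rootMultiplicity_pos hφj2).mpr (hjgt (j+2) (by omega))
    omega
  · intro t hdist hBt
    rw [sub_zero] at hdist
    rw [eval_mul, mul_ne_zero_iff] at hBt
    obtain ⟨lam, hlam, heval⟩ := hreal t hdist hBt.1 hBt.2
    rw [eval_mul, eval_mul, mul_div_mul_right _ _ hBt.2, heval,
      mul_div_assoc, div_self hBt.1, mul_one]
    simp
/-- a nonzero polynomial has a nonvanishing point with all coordinates in the upper half plane -/
lemma nv : ∀ {d : ℕ} (L : MvPolynomial (Fin d) ℂ), L ≠ 0 →
    ∃ ρ : Fin d → ℂ, (∀ j, 0 < (ρ j).im) ∧ MvPolynomial.eval ρ L ≠ 0 := by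
  intro d
  induction d with
  | zero =>
    intro L hL
    refine ⟨Fin.elim0, fun j => j.elim0, ?_⟩
    obtain ⟨c, rfl⟩ := MvPolynomial.C_surjective (Fin 0) L
    rw [MvPolynomial.eval_C]
    intro h
    apply hL
    rw [h, map_zero]
  | succ d ih =>
    intro L hL
    set L' := MvPolynomial.finSuccEquiv ℂ d L with hL'def
    have hL' : L' ≠ 0 := by
      intro h
      apply hL
      have := congrArg (MvPolynomial.finSuccEquiv ℂ d).symm h
      simpa [hL'def] using this
    have hck : L'.coeff L'.natDegree ≠ 0 := leadingCoeff_ne_zero.mpr hL'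
    obtain ⟨ρ', hρ'im, hρ'⟩ := ih _ hck
    set P := L'.map (MvPolynomial.eval ρ') with hPdef
    have hP : P ≠ 0 := by
      intro h
      apply hρ'
      have := congrArg (fun q => Polynomial.coeff q L'.natDegree) h
      simpa [hPdef, coeff_map] using this
    have hfin := finite_setOf_isRoot hP
    have hinj : Set.InjOn (fun x : ℝ => (x:ℂ) + Complex.I) (Set.Ioi 0) := by
      intro a _ b _ h
      have : (a:ℂ) = (b:ℂ) := by linear_combination h
      exact_mod_cast this
    have hinf : ((fun x : ℝ => (x:ℂ) + Complex.I) '' Set.Ioi 0).Infinite :=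
      (Set.Ioi_infinite 0).image hinj
    obtain ⟨τ, hτmem, hτnr⟩ := (hinf.diff hfin).nonempty
    obtain ⟨x, _, rfl⟩ := hτmem
    refine ⟨Fin.cons ((x:ℂ) + Complex.I) ρ', ?_, ?_⟩
    · intro j
      refine Fin.cases ?_ ?_ j
      · rw [Fin.cons_zero]
        simp
      · intro i
        rw [Fin.cons_succ]
        exact hρ'im i
    · rw [MvPolynomial.eval_eq_eval_mv_eval']
      exact hτnr

/-- leading coefficient of an upper polynomial in d+1 variables does not vanish on H^d -/
lemma topmv {d : ℕ} {F : Polynomial (MvPolynomial (Fin d) ℂ)}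
    (hF : ∀ (σ' : Fin d → ℂ) (τ : ℂ), (∀ i, 0 < (σ' i).im) → 0 < τ.im →
      Polynomial.eval₂ (MvPolynomial.eval σ') τ F ≠ 0)
    {σ : Fin d → ℂ} (hσ : ∀ j, 0 < (σ j).im) :
    MvPolynomial.eval σ (F.coeff F.natDegree) ≠ 0 := by
  have hFne : F ≠ 0 := by
    intro hz
    have := hF (fun _ => Complex.I) Complex.I (fun i => by simp) (by simp)
    rw [hz] at this
    simp at this
  set m := F.natDegree with hmdef
  set L := F.coeff m with hLdef
  have hL : L ≠ 0 := leadingCoeff_ne_zero.mpr hFne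
  intro h0
  obtain ⟨ρ, hρim, hρ⟩ := nv L hL
  set θ : MvPolynomial (Fin d) ℂ →+* Polynomial ℂ :=
    MvPolynomial.eval₂Hom (Polynomial.C) (fun j => Polynomial.C (σ j)
      + Polynomial.C (ρ j - σ j) * Polynomial.X) with hθdef
  have hcomp : ∀ t : ℂ, (Polynomial.evalRingHom t).comp θ
      = (MvPolynomial.eval (fun j => σ j + (ρ j - σ j) * t) :
          MvPolynomial (Fin d) ℂ →+* ℂ) := by
    intro t
    apply MvPolynomial.ringHom_ext
    · intro r
      simp [hθdef]
    · intro i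
      simp [hθdef]
  obtain ⟨δ, hδ, hball⟩ : ∃ δ : ℝ, 0 < δ ∧ ∀ (t : ℂ), ‖t‖ < δ →
      ∀ j, 0 < (σ j + (ρ j - σ j) * t).im := by
    rcases isEmpty_or_nonempty (Fin d) with he | hne
    · exact ⟨1, one_pos, fun t _ j => isEmptyElim j⟩
    · set g : Fin d → ℝ := fun j => (σ j).im / (‖(ρ j - σ j)‖ + 1) with hgdef
      refine ⟨Finset.univ.inf' Finset.univ_nonempty g, ?_, ?_⟩
      · rw [Finset.lt_inf'_iff]
        intro j _
        have h1 := hσ j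
        have h2 : (0:ℝ) < ‖(ρ j - σ j)‖ + 1 := by positivity
        exact div_pos h1 h2
      · intro t ht j
        have h1 : ‖t‖ < g j :=
          lt_of_lt_of_le ht (Finset.inf'_le _ (Finset.mem_univ j))
        have h3 : |((ρ j - σ j) * t).im| ≤ ‖((ρ j - σ j) * t)‖ :=
          Complex.abs_im_le_norm _
        rw [norm_mul] at h3
        have h5 : ‖(ρ j - σ j)‖ * ‖t‖ < (σ j).im := by
          rw [hgdef] at h1
          simp only at h1
          rw [div_eq_mul_inv] at h1
          have h6 : (0:ℝ) ≤ ‖t‖ := norm_nonneg _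
          have h7 : (0:ℝ) ≤ ‖(ρ j - σ j)‖ := norm_nonneg _
          have h8 : (0:ℝ) < ‖(ρ j - σ j)‖ + 1 := by positivity
          calc ‖(ρ j - σ j)‖ * ‖t‖
              ≤ (‖(ρ j - σ j)‖ + 1) * ‖t‖ := by nlinarith
            _ < (‖(ρ j - σ j)‖ + 1) * ((σ j).im * (‖(ρ j - σ j)‖ + 1)⁻¹) := by
                exact mul_lt_mul_of_pos_left h1 h8
            _ = (σ j).im := by field_simp
        rw [Complex.add_im]
        have h9 : -((ρ j - σ j) * t).im ≤ ‖(ρ j - σ j)‖ * ‖t‖ := by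
          have := neg_abs_le (((ρ j - σ j) * t).im)
          linarith [h3]
        linarith
  set Φ := F.map θ with hΦdef
  have hΦst : ∀ (t τ : ℂ), ‖t‖ < δ → 0 < τ.im →
      Polynomial.eval₂ (Polynomial.evalRingHom t) τ Φ ≠ 0 := by
    intro t τ ht hτ
    rw [hΦdef, Polynomial.eval₂_map, hcomp t]
    exact hF _ τ (hball t ht) hτ
  have hΦm : Φ.coeff m = θ L := by
    rw [hΦdef, coeff_map, hLdef]
  have hθL : θ L ≠ 0 := by
    intro hz
    apply hρ
    have h1 : Polynomial.eval 1 (θ L) = 0 := by rw [hz, eval_zero]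
    have h2 : Polynomial.eval 1 (θ L) = ((Polynomial.evalRingHom 1).comp θ) L := rfl
    rw [h2, hcomp 1] at h1
    have h3 : (fun j => σ j + (ρ j - σ j) * 1) = ρ := by
      funext j; ring
    rwa [h3] at h1
  have hΦdeg : Φ.natDegree = m := by
    refine le_antisymm (by rw [hΦdef]; exact natDegree_map_le) ?_
    apply le_natDegree_of_ne_zero
    rw [hΦm]
    exact hθL
  have htop := top2 hδ hΦst
  rw [hΦdeg, hΦm] at htop
  apply htop
  have h00 : Polynomial.eval 0 (θ L) = ((Polynomial.evalRingHom 0).comp θ) L := rfl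
  rw [h00, hcomp 0]
  have h3 : (fun j => σ j + (ρ j - σ j) * 0) = σ := by
    funext j; ring
  rw [h3]
  exact h0


end InterlaceAux

/-- Consecutive coefficients of an upper polynomial `f = Σᵢ₌₀ⁿ fᵢ(𝐱) yⁱ` interlace:
for `0 ≤ i < n`, if `fᵢ, fᵢ₊₁` are not both zero then `fᵢ + y·fᵢ₊₁ ∈ U_{d+1}`. -/
theorem consecutive_coeffs_interlace {d : ℕ}
    (f : Polynomial (MvPolynomial (Fin d) ℂ)) (n : ℕ) (hn : f.natDegree ≤ n)
    (hf : IsUpperY f) (i : ℕ) (hi : i < n)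
    (h : ¬(f.coeff i = 0 ∧ f.coeff (i + 1) = 0)) :
    IsUpperY (Polynomial.C (f.coeff i) + Polynomial.X * Polynomial.C (f.coeff (i + 1))) := by
  intro σ τ hσ hτ
  set p := f.map (MvPolynomial.eval σ : MvPolynomial (Fin d) ℂ →+* ℂ) with hpdef
  have hstp : InterlaceAux.St p := by
    intro τ' hτ'
    rw [hpdef, eval_map]
    exact hf σ τ' hσ hτ'
  have hcoe : ∀ k, p.coeff k = MvPolynomial.eval σ (f.coeff k) := by
    intro k
    rw [hpdef, coeff_map]
  by_cases hpair : p.coeff i = 0 ∧ p.coeff (i+1) = 0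
  swap
  · have hpen := InterlaceAux.pencil hstp hpair hτ
    rw [hcoe, hcoe] at hpen
    have hgoal : Polynomial.eval₂ (MvPolynomial.eval σ) τ
        (Polynomial.C (f.coeff i) + Polynomial.X * Polynomial.C (f.coeff (i + 1)))
        = MvPolynomial.eval σ (f.coeff i) + τ * MvPolynomial.eval σ (f.coeff (i+1)) := by
      rw [eval₂_add, eval₂_C, eval₂_mul, eval₂_X, eval₂_C]
    rw [hgoal]
    exact hpen
  exfalso
  obtain ⟨k₀, hk₀mem, hk₀⟩ : ∃ k₀, (k₀ = i ∨ k₀ = i + 1) ∧ f.coeff k₀ ≠ 0 := by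
    by_contra hc
    push_neg at hc
    exact h ⟨hc i (Or.inl rfl), hc (i+1) (Or.inr rfl)⟩
  set m := f.natDegree with hmdef
  have hk₀m : k₀ ≤ m := le_natDegree_of_ne_zero hk₀
  have hk₀i : k₀ ≤ i + 1 := by rcases hk₀mem with rfl | rfl <;> omega
  have hik₀ : i ≤ k₀ := by rcases hk₀mem with rfl | rfl <;> omega
  rcases InterlaceAux.support hstp hpair.1 hpair.2 with hL | hR
  · -- lower block vanishes at σ : contradiction via the reversal
    set G : Polynomial (MvPolynomial (Fin d) ℂ) :=
      ∑ k ∈ Finset.range (m+1), Polynomial.monomial k ((-1)^(m-k) * f.coeff (m-k)) with hGdef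
    have hGcoeff : ∀ k, k ≤ m → G.coeff k = (-1)^(m-k) * f.coeff (m-k) := by
      intro k hk
      rw [hGdef, finset_sum_coeff]
      simp only [coeff_monomial]
      rw [Finset.sum_ite_eq' (Finset.range (m+1)) k
        (fun k' => (-1)^(m-k') * f.coeff (m-k'))]
      rw [if_pos (Finset.mem_range.mpr (by omega))]
    have hGcoeff' : ∀ k, m < k → G.coeff k = 0 := by
      intro k hk
      rw [hGdef, finset_sum_coeff]
      simp only [coeff_monomial]
      rw [Finset.sum_ite_eq' (Finset.range (m+1)) k
        (fun k' => (-1)^(m-k') * f.coeff (m-k'))]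
      rw [if_neg (by simp; omega)]
    have hG : ∀ (σ' : Fin d → ℂ) (τ' : ℂ), (∀ i, 0 < (σ' i).im) → 0 < τ'.im →
        Polynomial.eval₂ (MvPolynomial.eval σ') τ' G ≠ 0 := by
      intro σ' τ' hσ' hτ'
      have hτ'ne : τ' ≠ 0 := by
        intro hz
        rw [hz] at hτ'
        simp at hτ'
      have hτ'' : 0 < (-τ'⁻¹).im := by
        rw [Complex.neg_im, Complex.inv_im, neg_div, neg_neg]
        have hns : 0 < Complex.normSq τ' := Complex.normSq_pos.mpr hτ'ne
        positivity
      have hiden : Polynomial.eval₂ (MvPolynomial.eval σ') τ' G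
          = τ'^m * Polynomial.eval₂ (MvPolynomial.eval σ') (-τ'⁻¹) f := by
        rw [hGdef, eval₂_finset_sum,
          Polynomial.eval₂_eq_sum_range' (MvPolynomial.eval σ') (Nat.lt_succ_self m) (-τ'⁻¹),
          Finset.mul_sum,
          ← Finset.sum_range_reflect
            (fun j => τ'^m * (MvPolynomial.eval σ' (f.coeff j) * (-τ'⁻¹)^j)) (m+1)]
        apply Finset.sum_congr rfl
        intro k hk
        have hk' : k ≤ m := Nat.lt_succ_iff.mp (Finset.mem_range.mp hk)
        have hsub : m + 1 - 1 - k = m - k := by omega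
        rw [hsub, eval₂_monomial, map_mul, map_pow, map_neg, map_one]
        have hpow : τ'^m = τ'^(m-k) * τ'^k := by
          rw [← pow_add]
          congr 1
          omega
        rw [hpow]
        field_simp
        have hinvp : τ'^(m-k) * τ'⁻¹^(m-k) = 1 := by rw [← mul_pow, mul_inv_cancel₀ hτ'ne, one_pow]
        linear_combination (-(MvPolynomial.eval σ') (f.coeff (m - k)) * (-1) ^ (m - k)) * hinvp
      rw [hiden]
      exact mul_ne_zero (pow_ne_zero _ hτ'ne) (hf σ' _ hσ' hτ'')
    have hGk₀ : G.coeff (m - k₀) ≠ 0 := by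
      rw [hGcoeff _ (by omega)]
      have hsub : m - (m - k₀) = k₀ := by omega
      rw [hsub]
      exact mul_ne_zero (pow_ne_zero _ (neg_ne_zero.mpr one_ne_zero)) hk₀
    have hGne : G ≠ 0 := fun hz => hGk₀ (by rw [hz, coeff_zero])
    have hm'le : G.natDegree ≤ m := by
      by_contra hc
      push_neg at hc
      exact (leadingCoeff_ne_zero.mpr hGne) (hGcoeff' _ hc)
    have hm'ge : m - k₀ ≤ G.natDegree := le_natDegree_of_ne_zero hGk₀
    have htop := InterlaceAux.topmv hG hσ
    apply htop
    rw [hGcoeff _ hm'le, map_mul, map_pow, map_neg, map_one]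
    have hmm' : m - G.natDegree ≤ i + 1 := by omega
    have hz := hL (m - G.natDegree) hmm'
    rw [hcoe] at hz
    rw [hz, mul_zero]
  · -- upper block vanishes at σ : contradiction via the top coefficient
    have htop := InterlaceAux.topmv hf hσ
    apply htop
    have him : i ≤ m := le_trans hik₀ hk₀m
    have hz := hR m him
    rw [hcoe] at hz
    exact hz
end

section
/- If f ∈ ℂ[x₁,…,x_d] is an upper polynomial, then f interlaces each of its partial derivatives: for each i, the polynomial f + y·(∂f/∂xᵢ) is an upper polynomial in d+1 variables (y a new variable). -/
/-- Chain rule: derivative of the univariate specialization equals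
specialization of the partial derivative. -/
lemma derivative_aeval_update {d : ℕ} (i : Fin d) (σ : Fin d → ℂ)
    (f : MvPolynomial (Fin d) ℂ) :
    Polynomial.derivative
        (MvPolynomial.aeval (fun j => if j = i then (Polynomial.X : Polynomial ℂ)
          else Polynomial.C (σ j)) f)
      = MvPolynomial.aeval (fun j => if j = i then (Polynomial.X : Polynomial ℂ)
          else Polynomial.C (σ j)) (MvPolynomial.pderiv i f) := by
  induction f using MvPolynomial.induction_on with
  | C a => simp [MvPolynomial.algebraMap_eq]
  | add p q hp hq => simp [map_add, hp, hq]
  | mul_X p j hp =>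
      rw [map_mul, MvPolynomial.aeval_X, Polynomial.derivative_mul, hp,
        MvPolynomial.pderiv_mul, map_add, map_mul, MvPolynomial.aeval_X, map_mul]
      by_cases h : j = i
      · subst h
        simp [MvPolynomial.pderiv_X_self]
      · simp [h, MvPolynomial.pderiv_X_of_ne h]

/-- Log derivative of a polynomial with no roots in the upper half plane has
nonpositive imaginary part on the upper half plane. -/
lemma logDeriv_im_nonpos (n : ℕ) :
    ∀ p : Polynomial ℂ, p.natDegree ≤ n → (∀ z : ℂ, 0 < z.im → p.eval z ≠ 0) →
      ∀ z : ℂ, 0 < z.im → ((Polynomial.derivative p).eval z / p.eval z).im ≤ 0 := by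
  induction n with
  | zero =>
      intro p hdeg _ z _
      obtain ⟨c, rfl⟩ := Polynomial.natDegree_eq_zero.mp (Nat.le_zero.mp hdeg)
      simp
  | succ n ih =>
      intro p hdeg hp z hz
      by_cases h0 : p.natDegree = 0
      · obtain ⟨c, rfl⟩ := Polynomial.natDegree_eq_zero.mp h0
        simp
      · have hpne : p ≠ 0 := fun h => hp Complex.I (by simp) (by simp [h])
        obtain ⟨r, hr⟩ := Complex.exists_root (f := p)
          (Polynomial.natDegree_pos_iff_degree_pos.mp (Nat.pos_of_ne_zero h0))
        obtain ⟨q, hq⟩ := (Polynomial.dvd_iff_isRoot.mpr hr)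
        have hqne : q ≠ 0 := by rintro rfl; simp at hq; exact hpne hq
        have hXne : (Polynomial.X - Polynomial.C r) ≠ 0 := Polynomial.X_sub_C_ne_zero r
        have hdq : q.natDegree ≤ n := by
          have := Polynomial.natDegree_mul hXne hqne
          rw [hq, this, Polynomial.natDegree_X_sub_C] at hdeg
          omega
        have hqroot : ∀ w : ℂ, 0 < w.im → q.eval w ≠ 0 := by
          intro w hw hwe
          exact hp w hw (by simp [hq, hwe])
        have hrim : r.im ≤ 0 := by
          by_contra h
          exact hp r (lt_of_not_ge h) hr
        have hA : (z - r) ≠ 0 := by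
          intro h
          have : z.im - r.im = 0 := by
            have := congrArg Complex.im h
            simpa [Complex.sub_im] using this
          linarith
        have hB := hqroot z hz
        have key : (Polynomial.derivative p).eval z / p.eval z
            = (z - r)⁻¹ + (Polynomial.derivative q).eval z / q.eval z := by
          rw [hq, Polynomial.derivative_mul]
          simp only [Polynomial.derivative_X_sub_C, Polynomial.eval_add,
            Polynomial.eval_mul, Polynomial.eval_one, Polynomial.eval_sub,
            Polynomial.eval_X, Polynomial.eval_C, one_mul]
          field_simp
        rw [key, Complex.add_im]
        have h1 : ((z - r)⁻¹).im ≤ 0 := by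
          rw [Complex.inv_im]
          apply div_nonpos_of_nonpos_of_nonneg
          · simp only [Complex.sub_im]; linarith
          · exact Complex.normSq_nonneg _
        have h2 := ih q hdq hqroot z hz
        linarith

/-- A univariate polynomial with no roots in the upper half plane interlaces
its derivative. -/
lemma poly_interlaces_derivative (p : Polynomial ℂ)
    (hp : ∀ z : ℂ, 0 < z.im → p.eval z ≠ 0) (z τ : ℂ)
    (hz : 0 < z.im) (hτ : 0 < τ.im) :
    p.eval z + τ * (Polynomial.derivative p).eval z ≠ 0 := by
  intro h
  have hpz : p.eval z ≠ 0 := hp z hz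
  have hτ0 : τ ≠ 0 := by
    intro h'
    rw [h', zero_mul, add_zero] at h
    exact hpz h
  have hratio : (Polynomial.derivative p).eval z / p.eval z = -τ⁻¹ := by
    rw [div_eq_iff hpz, neg_mul, eq_neg_iff_add_eq_zero]
    field_simp
    linear_combination h
  have him := logDeriv_im_nonpos p.natDegree p le_rfl hp z hz
  rw [hratio] at him
  have : (-τ⁻¹).im = τ.im / Complex.normSq τ := by
    rw [Complex.neg_im, Complex.inv_im]
    ring
  rw [this] at him
  have : 0 < τ.im / Complex.normSq τ :=
    div_pos hτ (Complex.normSq_pos.mpr hτ0)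
  linarith

/-- An upper polynomial interlaces each of its partial derivatives:
`f + y·(∂f/∂xᵢ) ∈ U_{d+1}`. -/
theorem isUpper_interlaces_pderiv {d : ℕ} (f : MvPolynomial (Fin d) ℂ)
    (hf : IsUpper f) (i : Fin d) :
    IsUpperY (Polynomial.C f + Polynomial.X * Polynomial.C (MvPolynomial.pderiv i f)) := by
  intro σ τ hσ hτ
  -- the univariate specialization of f in the i-th variable
  set g : Fin d → Polynomial ℂ :=
    fun j => if j = i then Polynomial.X else Polynomial.C (σ j) with hg
  set p : Polynomial ℂ := MvPolynomial.aeval g f with hpdef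
  have heval : ∀ (h : MvPolynomial (Fin d) ℂ) (t : ℂ),
      (MvPolynomial.aeval g h).eval t
        = MvPolynomial.eval (Function.update σ i t) h := by
    intro h t
    induction h using MvPolynomial.induction_on with
    | C a => simp [MvPolynomial.algebraMap_eq]
    | add u v hu hv => simp [map_add, hu, hv]
    | mul_X u j hu =>
        rw [map_mul, MvPolynomial.aeval_X, Polynomial.eval_mul, hu, map_mul,
          MvPolynomial.eval_X]
        congr 1
        by_cases hj : j = i <;> simp [hg, hj, Function.update_apply]
  have hproots : ∀ z : ℂ, 0 < z.im → p.eval z ≠ 0 := by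
    intro z hz
    rw [hpdef, heval]
    apply hf
    intro j
    by_cases hj : j = i <;> simp [hj, Function.update_apply, hz, hσ j]
  have h1 : p.eval (σ i) = MvPolynomial.eval σ f := by
    rw [hpdef, heval, Function.update_eq_self]
  have h2 : (Polynomial.derivative p).eval (σ i)
      = MvPolynomial.eval σ (MvPolynomial.pderiv i f) := by
    rw [hpdef, derivative_aeval_update i σ f, heval, Function.update_eq_self]
  have := poly_interlaces_derivative p hproots (σ i) τ (hσ i) hτ
  rw [h1, h2] at this
  rw [Polynomial.eval₂_add, Polynomial.eval₂_mul, Polynomial.eval₂_C,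
    Polynomial.eval₂_X, Polynomial.eval₂_C]
  intro heq
  exact this (by linear_combination heq)
end

section
/- Let f ∈ ℂ[x₁,…,x_d] be an upper polynomial of total degree n. Then its leading form f^H, the sum of all terms of f of total degree n, is again an upper polynomial (and it is homogeneous of degree n). -/
open MvPolynomial

section Aux

/-- Evaluating a homogeneous polynomial at a scaled point. -/
lemma eval_mul_of_isHomogeneous {d : ℕ} {φ : MvPolynomial (Fin d) ℂ} {k : ℕ}
    (hφ : φ.IsHomogeneous k) (c : ℂ) (x : Fin d → ℂ) :
    eval (fun j => c * x j) φ = c ^ k * eval x φ := by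
  rw [eval_eq, eval_eq, Finset.mul_sum]
  apply Finset.sum_congr rfl
  intro m hm
  have hdeg : m.degree = k := by
    by_contra h
    exact (MvPolynomial.mem_support_iff.mp hm) (hφ.coeff_eq_zero h)
  have : ∏ i ∈ m.support, (c * x i) ^ m i
      = (∏ i ∈ m.support, c ^ m i) * ∏ i ∈ m.support, x i ^ m i := by
    rw [← Finset.prod_mul_distrib]
    exact Finset.prod_congr rfl fun i _ => mul_pow _ _ _
  rw [this, Finset.prod_pow_eq_pow_sum]
  have hsum : ∑ i ∈ m.support, m i = k := by
    rw [← hdeg]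
    rfl
  rw [hsum]
  ring


/-- multiset product inequality -/
lemma multiset_prod_ineq (δ : ℝ) (hδ0 : 0 ≤ δ) (t₀ t₁ : ℂ)
    (s : Multiset ℂ) (h : ∀ r ∈ s, δ * ‖t₀ - r‖ ≤ ‖t₁ - r‖) :
    δ ^ Multiset.card s * (s.map fun r => ‖t₀ - r‖).prod
      ≤ (s.map fun r => ‖t₁ - r‖).prod := by
  induction s using Multiset.induction with
  | empty => simp
  | cons a s ih =>
    simp only [Multiset.map_cons, Multiset.prod_cons, Multiset.card_cons]
    have h1 : δ * ‖t₀ - a‖ ≤ ‖t₁ - a‖ := h a (Multiset.mem_cons_self a s)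
    have h2 := ih (fun r hr => h r (Multiset.mem_cons_of_mem hr))
    have hp0 : (0:ℝ) ≤ (s.map fun r => ‖t₀ - r‖).prod :=
      Multiset.prod_nonneg (by
        intro x hx
        obtain ⟨r, _, rfl⟩ := Multiset.mem_map.mp hx
        exact norm_nonneg _)
    calc δ ^ (Multiset.card s + 1) * (‖t₀ - a‖ * (s.map fun r => ‖t₀ - r‖).prod)
        = (δ * ‖t₀ - a‖) * (δ ^ Multiset.card s * (s.map fun r => ‖t₀ - r‖).prod) := by ring
      _ ≤ ‖t₁ - a‖ * (s.map fun r => ‖t₁ - r‖).prod := by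
          apply mul_le_mul h1 h2 (by positivity) (norm_nonneg _)

/-- Key inequality: a polynomial of degree ≤ D whose roots all satisfy
`δ|t₀ - r| ≤ |t₁ - r|` satisfies `δ^D |q(t₀)| ≤ |q(t₁)|`. -/
lemma poly_root_ineq (q : Polynomial ℂ) (D : ℕ) (hD : q.natDegree ≤ D)
    (δ : ℝ) (hδ0 : 0 < δ) (hδ1 : δ ≤ 1) (t₀ t₁ : ℂ)
    (h : ∀ r ∈ q.roots, δ * ‖t₀ - r‖ ≤ ‖t₁ - r‖) :
    δ ^ D * ‖q.eval t₀‖ ≤ ‖q.eval t₁‖ := by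
  have hsplit := IsAlgClosed.splits q
  have hcard : Multiset.card q.roots = q.natDegree := by
    have := hsplit.natDegree_eq_card_roots
    omega
  have heval : ∀ t : ℂ, ‖q.eval t‖
      = ‖q.leadingCoeff‖ * (q.roots.map fun r => ‖t - r‖).prod := by
    intro t
    rw [hsplit.eval_eq_prod_roots t, norm_mul,
      show ‖(Multiset.map (fun x => t - x) q.roots).prod‖
        = NormedField.toAbsoluteValue ℂ (Multiset.map (fun x => t - x) q.roots).prod from rfl,
      map_multiset_prod, Multiset.map_map]
    rfl
  have hprod := multiset_prod_ineq δ hδ0.le t₀ t₁ q.roots h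
  have hδD : δ ^ D ≤ δ ^ Multiset.card q.roots := by
    apply pow_le_pow_of_le_one hδ0.le hδ1
    omega
  have hp0 : (0:ℝ) ≤ (q.roots.map fun r => ‖t₀ - r‖).prod :=
    Multiset.prod_nonneg (by
      intro x hx
      obtain ⟨r, _, rfl⟩ := Multiset.mem_map.mp hx
      exact norm_nonneg _)
  rw [heval t₀, heval t₁]
  have hlc : (0:ℝ) ≤ ‖q.leadingCoeff‖ := norm_nonneg _
  calc δ ^ D * (‖q.leadingCoeff‖ * (q.roots.map fun r => ‖t₀ - r‖).prod)
      ≤ δ ^ Multiset.card q.roots * (‖q.leadingCoeff‖ * (q.roots.map fun r => ‖t₀ - r‖).prod) := by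
        apply mul_le_mul_of_nonneg_right hδD (by positivity)
    _ = ‖q.leadingCoeff‖ * (δ ^ Multiset.card q.roots * (q.roots.map fun r => ‖t₀ - r‖).prod) := by ring
    _ ≤ ‖q.leadingCoeff‖ * (q.roots.map fun r => ‖t₁ - r‖).prod :=
        mul_le_mul_of_nonneg_left hprod hlc


lemma eval_aeval_line_s9 {d : ℕ} (u : Fin d → Polynomial ℂ) (t : ℂ) (g : MvPolynomial (Fin d) ℂ) :
    Polynomial.eval t (MvPolynomial.aeval u g) = eval (fun j => Polynomial.eval t (u j)) g := by
  induction g using MvPolynomial.induction_on with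
  | C a => simp
  | add p q hp hq => simp [hp, hq]
  | mul_X p j hp => simp [hp]

lemma exists_ne_zero_point {d : ℕ} {H : MvPolynomial (Fin d) ℂ} (hH : H ≠ 0) :
    ∃ a : Fin d → ℂ, eval a H ≠ 0 := by
  by_contra h
  push_neg at h
  exact hH (MvPolynomial.funext (q := 0) (fun x => by simp [h x]))

lemma top_component_ne_zero {d : ℕ} {f : MvPolynomial (Fin d) ℂ} (hf : f ≠ 0) :
    homogeneousComponent f.totalDegree f ≠ 0 := by
  obtain ⟨m, hm, hsup⟩ := Finset.exists_mem_eq_sup f.support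
    (MvPolynomial.support_nonempty.mpr hf) (fun s => s.sum fun _ e => e)
  intro h0
  have hc : coeff m (homogeneousComponent f.totalDegree f) = coeff m f := by
    rw [coeff_homogeneousComponent, if_pos]
    show m.degree = f.totalDegree
    rw [MvPolynomial.totalDegree, hsup]
    rfl
  rw [h0] at hc
  exact MvPolynomial.mem_support_iff.mp hm hc.symm

end Aux

/-- The leading form `f^H` (sum of the terms of top total degree) of an upper
polynomial is again an upper polynomial, and it is homogeneous. -/
theorem leadingForm_isUpper {d : ℕ} (f : MvPolynomial (Fin d) ℂ) (hf : IsUpper f) :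
    IsUpper (MvPolynomial.homogeneousComponent f.totalDegree f) ∧
      (MvPolynomial.homogeneousComponent f.totalDegree f).IsHomogeneous f.totalDegree := by
  refine ⟨?_, homogeneousComponent_isHomogeneous _ _⟩
  -- f is nonzero
  have hf0 : f ≠ 0 := by
    intro h
    exact hf (fun _ => Complex.I) (fun i => by simp) (by simp [h])
  set n := f.totalDegree with hn
  set H := homogeneousComponent n f with hH
  have hHne : H ≠ 0 := top_component_ne_zero hf0
  obtain ⟨a, ha⟩ := exists_ne_zero_point hHne
  intro σ hσ
  -- setup
  set e : Fin d → ℂ := fun j => a j - σ j with he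
  set U : Set ℂ := {t : ℂ | ∀ j, 0 < (σ j + e j * t).im} with hUdef
  have hUopen : IsOpen U := by
    have : U = ⋂ j, {t : ℂ | 0 < (σ j + e j * t).im} := by
      ext t; simp [hUdef, Set.mem_iInter]
    rw [this]
    exact isOpen_iInter_of_finite fun j =>
      isOpen_lt continuous_const (Complex.continuous_im.comp (by continuity))
  have h0U : (0 : ℂ) ∈ U := by
    intro j; simpa using hσ j
  obtain ⟨ε, hε, hball⟩ := Metric.isOpen_iff.mp hUopen 0 h0U
  set δ : ℝ := ε / (ε + 1) with hδ
  have hδ0 : 0 < δ := by positivity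
  have hδ1 : δ ≤ 1 := by
    rw [hδ, div_le_one (by linarith)]; linarith
  have hdist : ∀ r : ℂ, r ∉ U → δ * ‖1 - r‖ ≤ ‖0 - r‖ := by
    intro r hr
    have hrε : ε ≤ ‖r‖ := by
      by_contra hlt
      push_neg at hlt
      exact hr (hball (by simpa [Metric.mem_ball, Complex.dist_eq] using hlt))
    have h1r : ‖1 - r‖ ≤ 1 + ‖r‖ := by
      calc ‖1 - r‖ ≤ ‖(1:ℂ)‖ + ‖r‖ := by
            simpa [sub_eq_add_neg] using norm_add_le (1:ℂ) (-r)
        _ = 1 + ‖r‖ := by simp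
    have h0r : ‖0 - r‖ = ‖r‖ := by simp
    rw [h0r]
    have habs : 0 ≤ ‖r‖ := norm_nonneg _
    rw [hδ, div_mul_eq_mul_div, div_le_iff₀ (by linarith)]
    nlinarith
  -- the polynomial family
  set Φ : MvPolynomial (Fin d) ℂ → Polynomial ℂ :=
    fun g => MvPolynomial.aeval (fun j => Polynomial.C (σ j) + Polynomial.C (e j) * Polynomial.X) g with hΦ
  have hΦeval : ∀ (g : MvPolynomial (Fin d) ℂ) (t : ℂ),
      Polynomial.eval t (Φ g) = eval (fun j => σ j + e j * t) g := by
    intro g t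
    rw [hΦ, eval_aeval_line_s9]
    simp
  set D : ℕ := (Finset.range (n + 1)).sup fun k => (Φ (homogeneousComponent k f)).natDegree with hD
  set q : ℝ → Polynomial ℂ :=
    fun s => ∑ k ∈ Finset.range (n + 1),
      Polynomial.C ((s : ℂ) ^ (n - k)) * Φ (homogeneousComponent k f) with hq
  have hqdeg : ∀ s : ℝ, (q s).natDegree ≤ D := by
    intro s
    apply Polynomial.natDegree_sum_le_of_forall_le
    intro k hk
    refine le_trans (Polynomial.natDegree_C_mul_le _ _) ?_
    rw [hD]
    exact Finset.le_sup (f := fun k => (Φ (homogeneousComponent k f)).natDegree) hk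
  have hqeval : ∀ (s : ℝ) (t : ℂ), (q s).eval t
      = ∑ k ∈ Finset.range (n + 1),
          (s : ℂ) ^ (n - k) * eval (fun j => σ j + e j * t) (homogeneousComponent k f) := by
    intro s t
    rw [hq]
    simp only [Polynomial.eval_finset_sum, Polynomial.eval_mul, Polynomial.eval_C]
    exact Finset.sum_congr rfl fun k _ => by rw [hΦeval]
  -- nonvanishing of q s on U for s > 0
  have hne : ∀ s : ℝ, 0 < s → ∀ t ∈ U, (q s).eval t ≠ 0 := by
    intro s hs t ht
    have hsne : ((s : ℝ) : ℂ) ≠ 0 := by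
      simp [ne_of_gt hs]
    set x : Fin d → ℂ := fun j => σ j + e j * t with hx
    have key : (q s).eval t = (s : ℂ) ^ n * eval (fun j => ((s : ℂ))⁻¹ * x j) f := by
      conv_rhs => rw [← MvPolynomial.sum_homogeneousComponent f]
      rw [map_sum, Finset.mul_sum, hqeval]
      apply Finset.sum_congr rfl
      intro k hk
      rw [eval_mul_of_isHomogeneous (homogeneousComponent_isHomogeneous k f)]
      rw [← mul_assoc]
      congr 1
      rw [inv_pow, pow_sub₀ _ hsne (Nat.lt_succ_iff.mp (Finset.mem_range.mp hk))]
    rw [key]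
    apply mul_ne_zero (pow_ne_zero _ hsne)
    apply hf
    intro j
    have hcast : ((s : ℂ))⁻¹ * x j = ((s⁻¹ : ℝ) : ℂ) * x j := by
      push_cast
      ring
    rw [hcast, Complex.im_ofReal_mul]
    have hxj : 0 < (x j).im := ht j
    positivity
  -- the inequality for each s > 0
  have hineq : ∀ s : ℝ, 0 < s →
      δ ^ D * ‖(q s).eval 1‖ ≤ ‖(q s).eval 0‖ := by
    intro s hs
    apply poly_root_ineq (q s) D (hqdeg s) δ hδ0 hδ1
    intro r hr
    apply hdist
    intro hrU
    exact hne s hs r hrU (Polynomial.isRoot_of_mem_roots hr)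
  -- limits as s → 0⁺
  have hcont : ∀ t : ℂ, Continuous fun s : ℝ => (q s).eval t := by
    intro t
    simp only [hqeval]
    apply continuous_finset_sum
    intro k _
    exact (Complex.continuous_ofReal.pow _).mul continuous_const
  have hq0eval : ∀ t : ℂ, (q 0).eval t = eval (fun j => σ j + e j * t) H := by
    intro t
    rw [hqeval]
    rw [Finset.sum_eq_single n]
    · simp [hH]
    · intro k hk hkn
      have hklt : k < n := lt_of_le_of_ne (Nat.lt_succ_iff.mp (Finset.mem_range.mp hk)) hkn
      rw [Complex.ofReal_zero, zero_pow (by omega), zero_mul]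
    · intro hn'
      exact absurd (Finset.self_mem_range_succ n) hn'
  have hq01 : (q 0).eval 1 = eval a H := by
    have h1 : (fun j => σ j + e j * (1 : ℂ)) = a := by
      funext j
      simp [he]
    rw [hq0eval, h1]
  have hq00 : (q 0).eval 0 = eval σ H := by
    have h1 : (fun j => σ j + e j * (0 : ℂ)) = σ := by
      funext j
      simp
    rw [hq0eval, h1]
  -- pass to the limit
  have hlim : δ ^ D * ‖eval a H‖ ≤ ‖eval σ H‖ := by
    rw [← hq01, ← hq00]
    have hF : Filter.Tendsto (fun s : ℝ => δ ^ D * ‖(q s).eval 1‖)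
        (nhdsWithin 0 (Set.Ioi 0)) (nhds (δ ^ D * ‖(q 0).eval 1‖)) := by
      apply Filter.Tendsto.mono_left _ nhdsWithin_le_nhds
      exact ((continuous_const.mul (continuous_norm.comp (hcont 1))).tendsto 0)
    have hG : Filter.Tendsto (fun s : ℝ => ‖(q s).eval 0‖)
        (nhdsWithin 0 (Set.Ioi 0)) (nhds (‖(q 0).eval 0‖)) := by
      apply Filter.Tendsto.mono_left _ nhdsWithin_le_nhds
      exact ((continuous_norm.comp (hcont 0)).tendsto 0)
    apply le_of_tendsto_of_tendsto hF hG
    filter_upwards [eventually_mem_nhdsWithin] with s hs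
    exact hineq s hs
  intro h0
  rw [h0] at hlim
  simp only [norm_zero] at hlim
  have : 0 < ‖eval a H‖ := by
    simpa [norm_pos_iff] using ha
  nlinarith [pow_pos hδ0 D]
end

section
/- Let f ∈ ℂ[x₁,…,x_d] be an upper polynomial of total degree n, and let f^H be its leading form. Then all coefficients of f^H have the same argument: there exists a nonzero complex number α such that for every monomial, the coefficient of that monomial in f^H divided by α is a nonnegative real number. -/
noncomputable def linSub {d : ℕ} (a b : Fin d → ℂ) (p : MvPolynomial (Fin d) ℂ) : Polynomial ℂ :=
  MvPolynomial.aeval (fun j => Polynomial.C (a j) * Polynomial.X + Polynomial.C (b j)) p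

namespace UpperAux
open MvPolynomial Polynomial

variable {d : ℕ}

theorem eval_linSub (a b : Fin d → ℂ) (p : MvPolynomial (Fin d) ℂ) (t : ℂ) :
    Polynomial.eval t (linSub a b p) = MvPolynomial.eval (fun j => a j * t + b j) p := by
  unfold linSub
  rw [MvPolynomial.aeval_def]
  rw [show Polynomial.eval t (MvPolynomial.eval₂ (algebraMap ℂ ℂ[X])
      (fun j => Polynomial.C (a j) * Polynomial.X + Polynomial.C (b j)) p)
    = (Polynomial.evalRingHom t) (MvPolynomial.eval₂ (algebraMap ℂ ℂ[X])
      (fun j => Polynomial.C (a j) * Polynomial.X + Polynomial.C (b j)) p) from rfl]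
  rw [MvPolynomial.eval₂_comp_left (Polynomial.evalRingHom t) (algebraMap ℂ ℂ[X])
      (fun j => Polynomial.C (a j) * Polynomial.X + Polynomial.C (b j)) p]
  simp only [MvPolynomial.eval, Function.comp_def, coe_evalRingHom]
  congr 1
  · ext x : 1; simp [Polynomial.algebraMap_eq]
  · funext j; simp

theorem coeff_zero_linSub (a b : Fin d → ℂ) (p : MvPolynomial (Fin d) ℂ) :
    (linSub a b p).coeff 0 = MvPolynomial.eval b p := by
  have := eval_linSub a b p 0
  rw [← Polynomial.coeff_zero_eq_eval_zero] at this
  rw [this]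
  simp

theorem coeff_pderiv (i : Fin d) (p : MvPolynomial (Fin d) ℂ) (m : Fin d →₀ ℕ) :
    MvPolynomial.coeff m (MvPolynomial.pderiv i p)
      = (m i + 1) * MvPolynomial.coeff (m + Finsupp.single i 1) p := by
  induction p using MvPolynomial.induction_on' with
  | monomial s a =>
    rw [pderiv_monomial]
    rw [MvPolynomial.coeff_monomial, MvPolynomial.coeff_monomial]
    by_cases hs : s = m + Finsupp.single i 1
    · subst hs
      rw [if_pos (by simp [add_tsub_cancel_right])]
      simp [Finsupp.add_apply, Finsupp.single_apply, mul_comm]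
    · rw [if_neg hs]
      by_cases hsm : s - Finsupp.single i 1 = m
      · have hsi : s i = 0 := by
          by_contra hne
          apply hs
          rw [← hsm, tsub_add_cancel_of_le]
          rw [Finsupp.single_le_iff]
          omega
        rw [if_pos hsm]
        simp [hsi]
      · rw [if_neg hsm]; ring
  | add p q hp hq =>
    rw [map_add, MvPolynomial.coeff_add, MvPolynomial.coeff_add, hp, hq]; ring




theorem sum_univ_of_homog {n : ℕ} {p : MvPolynomial (Fin d) ℂ} (hp : p.IsHomogeneous n)
    {m : Fin d →₀ ℕ} (hm : MvPolynomial.coeff m p ≠ 0) : ∑ i, m i = n := by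
  have h1 := hp hm
  rw [show (Finsupp.weight 1 : (Fin d →₀ ℕ) →+ ℕ) = Finsupp.degree from Finsupp.degree_eq_weight_one.symm] at h1
  rw [← h1]
  unfold Finsupp.degree
  exact (Finset.sum_subset (Finset.subset_univ _)
    (fun x _ hx => Finsupp.notMem_support_iff.mp hx)).symm

theorem eval_scale_homog {n : ℕ} {p : MvPolynomial (Fin d) ℂ} (hp : p.IsHomogeneous n)
    (c : ℂ) (y : Fin d → ℂ) :
    MvPolynomial.eval (fun j => c * y j) p = c ^ n * MvPolynomial.eval y p := by
  rw [MvPolynomial.eval_eq', MvPolynomial.eval_eq', Finset.mul_sum]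
  apply Finset.sum_congr rfl
  intro m hm
  have hdeg : ∑ i, m i = n := sum_univ_of_homog hp (MvPolynomial.mem_support_iff.mp hm)
  calc MvPolynomial.coeff m p * ∏ i, (c * y i) ^ m i
      = MvPolynomial.coeff m p * ((∏ i, c ^ m i) * ∏ i, y i ^ m i) := by
        rw [← Finset.prod_mul_distrib]; simp_rw [mul_pow]
    _ = c ^ n * (MvPolynomial.coeff m p * ∏ i, y i ^ m i) := by
        rw [Finset.prod_pow_eq_pow_sum, hdeg]; ring



theorem linSub_eq_sum (a b : Fin d → ℂ) (p : MvPolynomial (Fin d) ℂ) :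
    linSub a b p = ∑ m ∈ p.support, Polynomial.C (MvPolynomial.coeff m p) *
      ∏ i, (Polynomial.C (a i) * Polynomial.X + Polynomial.C (b i)) ^ m i := by
  unfold linSub
  rw [MvPolynomial.aeval_def, MvPolynomial.eval₂_eq']
  simp [Polynomial.algebraMap_eq]

theorem natDegree_linear_le {a b : ℂ} :
    (Polynomial.C a * Polynomial.X + Polynomial.C b).natDegree ≤ 1 := by
  apply (Polynomial.natDegree_add_le _ _).trans
  simp only [Polynomial.natDegree_C, max_le_iff]
  constructor
  · exact (Polynomial.natDegree_C_mul_le _ _).trans (by simp)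
  · omega

theorem natDegree_linSub_le {n : ℕ} {p : MvPolynomial (Fin d) ℂ} (hp : p.IsHomogeneous n)
    (a b : Fin d → ℂ) : (linSub a b p).natDegree ≤ n := by
  rw [linSub_eq_sum]
  apply Polynomial.natDegree_sum_le_of_forall_le
  intro m hm
  apply (Polynomial.natDegree_mul_le).trans
  simp only [Polynomial.natDegree_C, zero_add]
  apply (Polynomial.natDegree_prod_le _ _).trans
  calc ∑ i, ((Polynomial.C (a i) * Polynomial.X + Polynomial.C (b i)) ^ m i).natDegree
      ≤ ∑ i, m i := by
        apply Finset.sum_le_sum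
        intro i _
        exact (Polynomial.natDegree_pow_le).trans
          (by calc m i * (Polynomial.C (a i) * Polynomial.X + Polynomial.C (b i)).natDegree
                ≤ m i * 1 := Nat.mul_le_mul_left _ natDegree_linear_le
              _ = m i := by omega)
    _ = n := sum_univ_of_homog hp (MvPolynomial.mem_support_iff.mp hm)

theorem coeff_top_linSub {n : ℕ} {p : MvPolynomial (Fin d) ℂ} (hp : p.IsHomogeneous n)
    {a : Fin d → ℂ} (ha : ∀ j, a j ≠ 0) (b : Fin d → ℂ) :
    (linSub a b p).coeff n = MvPolynomial.eval a p := by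
  rw [linSub_eq_sum, Polynomial.finset_sum_coeff, MvPolynomial.eval_eq']
  apply Finset.sum_congr rfl
  intro m hm
  have hdeg : ∑ i, m i = n := sum_univ_of_homog hp (MvPolynomial.mem_support_iff.mp hm)
  have hlin : ∀ i : Fin d, (Polynomial.C (a i) * Polynomial.X + Polynomial.C (b i)) ≠ 0 := by
    intro i
    apply Polynomial.ne_zero_of_natDegree_gt (n := 0)
    rw [Polynomial.natDegree_linear (ha i)]; omega
  have hND : (∏ i, (Polynomial.C (a i) * Polynomial.X + Polynomial.C (b i)) ^ m i).natDegree
      = n := by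
    rw [Polynomial.natDegree_prod _ _ (fun i _ => pow_ne_zero _ (hlin i))]
    rw [← hdeg]
    apply Finset.sum_congr rfl
    intro i _
    rw [Polynomial.natDegree_pow, Polynomial.natDegree_linear (ha i), mul_one]
  rw [Polynomial.coeff_C_mul, ← hND, Polynomial.coeff_natDegree,
    Polynomial.leadingCoeff_prod]
  congr 1
  apply Finset.prod_congr rfl
  intro i _
  rw [Polynomial.leadingCoeff_pow, Polynomial.leadingCoeff_linear (ha i)]





theorem coeff_one_linSub (a b : Fin d → ℂ) (p : MvPolynomial (Fin d) ℂ) :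
    (linSub a b p).coeff 1 = ∑ j, a j * MvPolynomial.eval b (MvPolynomial.pderiv j p) := by
  induction p using MvPolynomial.induction_on with
  | C c => simp [linSub]
  | add p q hp hq =>
    unfold linSub at *
    simp only [map_add, Polynomial.coeff_add, hp, hq, MvPolynomial.eval_add, mul_add,
      Finset.sum_add_distrib]
  | mul_X p j hp =>
    have hmul : linSub a b (p * MvPolynomial.X j)
        = Polynomial.C (a j) * (Polynomial.X * linSub a b p)
          + Polynomial.C (b j) * linSub a b p := by
      unfold linSub
      rw [map_mul, MvPolynomial.aeval_X]
      ring
    rw [hmul]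
    rw [Polynomial.coeff_add, Polynomial.coeff_C_mul, Polynomial.coeff_C_mul,
      show (1:ℕ) = 0 + 1 from rfl, Polynomial.coeff_X_mul, coeff_zero_linSub, hp]
    have hR : ∀ j' : Fin d,
        a j' * MvPolynomial.eval b (MvPolynomial.pderiv j' (p * MvPolynomial.X j))
        = (a j' * MvPolynomial.eval b (MvPolynomial.pderiv j' p)) * b j
          + a j' * MvPolynomial.eval b p * (if j' = j then 1 else 0) := by
      intro j'
      rw [MvPolynomial.pderiv_mul, MvPolynomial.eval_add, map_mul, MvPolynomial.eval_X,
        MvPolynomial.pderiv_X]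
      rw [Pi.single_apply]
      by_cases h : j = j' <;> simp [h, eq_comm] <;> ring
    rw [Finset.sum_congr rfl (fun j' _ => hR j'), Finset.sum_add_distrib]
    rw [← Finset.sum_mul]
    have : ∑ j' : Fin d, a j' * MvPolynomial.eval b p * (if j' = j then 1 else 0)
        = a j * MvPolynomial.eval b p := by
      rw [Finset.sum_eq_single j]
      · simp
      · intro c _ hc; simp [hc]
      · simp
    rw [this]
    ring



theorem prod_linear_neg_coeffs (S : Multiset ℂ) (hS : ∀ r ∈ S, r.im = 0 ∧ r.re < 0) :
    (∃ t0 : ℝ, 0 < t0 ∧ (S.map (fun r => Polynomial.X - Polynomial.C r)).prod.coeff 0 = (t0:ℂ))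
    ∧ ∀ k, ∃ t : ℝ, 0 ≤ t ∧ (S.map (fun r => Polynomial.X - Polynomial.C r)).prod.coeff k = (t:ℂ) := by
  induction S using Multiset.induction_on with
  | empty =>
    refine ⟨⟨1, by norm_num⟩, fun k => ?_⟩
    rcases Nat.eq_zero_or_pos k with hk | hk
    · subst hk; exact ⟨1, by norm_num⟩
    · refine ⟨0, le_refl _, ?_⟩
      simp only [Multiset.map_zero, Multiset.prod_zero, Polynomial.coeff_one]
      rw [if_neg (by omega)]
      simp
  | cons r S ih =>
    have hr := hS r (Multiset.mem_cons_self r S)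
    have hS' : ∀ x ∈ S, x.im = 0 ∧ x.re < 0 := fun x hx => hS x (Multiset.mem_cons_of_mem hx)
    obtain ⟨⟨t0, ht0, h0⟩, hall⟩ := ih hS'
    have hrr : r = ((r.re : ℝ) : ℂ) := Complex.ext rfl (by simp [hr.1])
    set P := (S.map (fun r => Polynomial.X - Polynomial.C r)).prod with hP
    have hcons : ((r ::ₘ S).map (fun r => Polynomial.X - Polynomial.C r)).prod
        = Polynomial.X * P - Polynomial.C r * P := by
      rw [Multiset.map_cons, Multiset.prod_cons, sub_mul]
    constructor
    · refine ⟨(-r.re) * t0, by nlinarith [hr.2], ?_⟩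
      rw [hcons, Polynomial.coeff_sub, Polynomial.coeff_C_mul, Polynomial.mul_coeff_zero,
        Polynomial.coeff_X_zero, h0, hrr]
      push_cast
      simp
    · intro k
      rcases Nat.eq_zero_or_pos k with hk | hk
      · subst hk
        refine ⟨(-r.re) * t0, by nlinarith [hr.2], ?_⟩
        rw [hcons, Polynomial.coeff_sub, Polynomial.coeff_C_mul, Polynomial.mul_coeff_zero,
          Polynomial.coeff_X_zero, h0, hrr]
        push_cast; simp
      · obtain ⟨k', rfl⟩ : ∃ k', k = k' + 1 := ⟨k - 1, by omega⟩
        obtain ⟨t1, ht1, h1⟩ := hall k'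
        obtain ⟨t2, ht2, h2⟩ := hall (k' + 1)
        refine ⟨t1 + (-r.re) * t2, by nlinarith [hr.2], ?_⟩
        rw [hcons, Polynomial.coeff_sub, Polynomial.coeff_C_mul, Polynomial.coeff_X_mul,
          h1, h2, hrr]
        push_cast
        simp
        ring

theorem prod_linear_lower_ratio (S : Multiset ℂ) (hS : ∀ r ∈ S, r.im < 0) :
    (S.map (fun r => Polynomial.X - Polynomial.C r)).prod.coeff 0 ≠ 0
    ∧ ((S.map (fun r => Polynomial.X - Polynomial.C r)).prod.coeff 1
        / (S.map (fun r => Polynomial.X - Polynomial.C r)).prod.coeff 0).im ≤ 0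
    ∧ (S ≠ 0 → ((S.map (fun r => Polynomial.X - Polynomial.C r)).prod.coeff 1
        / (S.map (fun r => Polynomial.X - Polynomial.C r)).prod.coeff 0).im < 0) := by
  induction S using Multiset.induction_on with
  | empty => refine ⟨by simp, by simp [Polynomial.coeff_one], by simp⟩
  | cons r S ih =>
    have hr := hS r (Multiset.mem_cons_self r S)
    have hS' : ∀ x ∈ S, x.im < 0 := fun x hx => hS x (Multiset.mem_cons_of_mem hx)
    obtain ⟨h0, hle, _⟩ := ih hS'
    have hrne : r ≠ 0 := fun h => by simp [h] at hr
    set P := (S.map (fun r => Polynomial.X - Polynomial.C r)).prod with hP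
    have hcons : ((r ::ₘ S).map (fun r => Polynomial.X - Polynomial.C r)).prod
        = Polynomial.X * P - Polynomial.C r * P := by
      rw [Multiset.map_cons, Multiset.prod_cons, sub_mul]
    have hc0 : ((r ::ₘ S).map (fun r => Polynomial.X - Polynomial.C r)).prod.coeff 0
        = -r * P.coeff 0 := by
      rw [hcons, Polynomial.coeff_sub, Polynomial.coeff_C_mul, Polynomial.mul_coeff_zero,
        Polynomial.coeff_X_zero]
      ring
    have hc1 : ((r ::ₘ S).map (fun r => Polynomial.X - Polynomial.C r)).prod.coeff 1
        = P.coeff 0 - r * P.coeff 1 := by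
      rw [hcons, Polynomial.coeff_sub, Polynomial.coeff_C_mul,
        show (1:ℕ) = 0 + 1 from rfl, Polynomial.coeff_X_mul]
    have hc0ne : -r * P.coeff 0 ≠ 0 := mul_ne_zero (neg_ne_zero.mpr hrne) h0
    have hratio : (P.coeff 0 - r * P.coeff 1) / (-r * P.coeff 0)
        = -r⁻¹ + P.coeff 1 / P.coeff 0 := by
      field_simp
      ring
    have him : (-r⁻¹ + P.coeff 1 / P.coeff 0).im < 0 := by
      rw [Complex.add_im, Complex.neg_im, Complex.inv_im]
      have : 0 < Complex.normSq r := Complex.normSq_pos.mpr hrne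
      have h2 : -(-r.im / Complex.normSq r) < 0 := by
        rw [neg_div, neg_neg]
        exact div_neg_of_neg_of_pos hr this
      linarith
    refine ⟨by rw [hc0]; exact hc0ne, ?_, fun _ => ?_⟩ <;>
      rw [hc0, hc1, hratio] <;> linarith

def Upper {d : ℕ} (h : MvPolynomial (Fin d) ℂ) : Prop :=
  ∀ σ : Fin d → ℂ, (∀ i, 0 < (σ i).im) → MvPolynomial.eval σ h ≠ 0

theorem eval_pos_ne_zero {n : ℕ} {h : MvPolynomial (Fin d) ℂ} (hst : Upper h)
    (hh : h.IsHomogeneous n) {x : Fin d → ℝ} (hx : ∀ i, 0 < x i) :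
    MvPolynomial.eval (fun j => (x j : ℂ)) h ≠ 0 := by
  intro h0
  have h2 := hst (fun j => Complex.I * (x j : ℂ)) (by
    intro i
    simp [Complex.mul_im, hx i])
  rw [eval_scale_homog hh Complex.I (fun j => (x j : ℂ)), h0, mul_zero] at h2
  exact h2 rfl

theorem natDegree_slice {n : ℕ} {h : MvPolynomial (Fin d) ℂ} (hst : Upper h)
    (hh : h.IsHomogeneous n) {x : Fin d → ℝ} (hx : ∀ i, 0 < x i) (b : Fin d → ℂ) :
    (linSub (fun j => (x j : ℂ)) b h).natDegree = n
    ∧ (linSub (fun j => (x j : ℂ)) b h).leadingCoeff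
        = MvPolynomial.eval (fun j => (x j : ℂ)) h
    ∧ linSub (fun j => (x j : ℂ)) b h ≠ 0 := by
  have htop : (linSub (fun j => (x j : ℂ)) b h).coeff n
      = MvPolynomial.eval (fun j => (x j : ℂ)) h :=
    coeff_top_linSub hh (fun j => Complex.ofReal_ne_zero.mpr (ne_of_gt (hx j))) b
  have hne := eval_pos_ne_zero hst hh hx
  have hcne : (linSub (fun j => (x j : ℂ)) b h).coeff n ≠ 0 := by rw [htop]; exact hne
  have hdeg : (linSub (fun j => (x j : ℂ)) b h).natDegree = n :=
    le_antisymm (natDegree_linSub_le hh _ _) (Polynomial.le_natDegree_of_ne_zero hcne)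
  refine ⟨hdeg, ?_, fun h0 => by simp [h0] at hcne⟩
  rw [Polynomial.leadingCoeff, hdeg, htop]

theorem slice_coeffs {n : ℕ} {h : MvPolynomial (Fin d) ℂ} (hst : Upper h)
    (hh : h.IsHomogeneous n) {x y : Fin d → ℝ} (hx : ∀ i, 0 < x i) (hy : ∀ i, 0 < y i) :
    ∀ k, ∃ t : ℝ, 0 ≤ t ∧ (linSub (fun j => (x j : ℂ)) (fun j => (y j : ℂ)) h).coeff k
      = MvPolynomial.eval (fun j => (y j : ℂ)) h * t := by
  set a : Fin d → ℂ := fun j => (x j : ℂ) with ha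
  set b : Fin d → ℂ := fun j => (y j : ℂ) with hb
  set q := linSub a b h with hq
  obtain ⟨hdeg, hlc, hqne⟩ := natDegree_slice hst hh hx b
  have hroots : ∀ r ∈ q.roots, r.im = 0 ∧ r.re < 0 := by
    intro r hr
    have hroot : MvPolynomial.eval (fun j => a j * r + b j) h = 0 := by
      have := (Polynomial.mem_roots'.mp hr).2
      rw [Polynomial.IsRoot, hq, eval_linSub] at this
      exact this
    have hzim : ∀ i, (a i * r + b i).im = x i * r.im := by
      intro i; simp [ha, hb, Complex.add_im, Complex.mul_im]
    have hzre : ∀ i, (a i * r + b i).re = x i * r.re + y i := by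
      intro i; simp [ha, hb, Complex.add_re, Complex.mul_re]
    rcases lt_trichotomy r.im 0 with him | him | him
    · exfalso
      have hsc := eval_scale_homog hh (-1) (fun j => a j * r + b j)
      rw [hroot, mul_zero] at hsc
      refine hst (fun j => (-1) * (a j * r + b j)) ?_ hsc
      intro i
      have heq : ((-1 : ℂ) * (a i * r + b i)).im = -(x i * r.im) := by
        rw [neg_one_mul, Complex.neg_im, hzim]
      rw [heq]
      nlinarith [hx i]
    · refine ⟨him, ?_⟩
      by_contra hre
      push_neg at hre
      have hsc := eval_scale_homog hh Complex.I (fun j => a j * r + b j)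
      rw [hroot, mul_zero] at hsc
      refine hst (fun j => Complex.I * (a j * r + b j)) ?_ hsc
      intro i
      have heq : (Complex.I * (a i * r + b i)).im = (a i * r + b i).re := by
        simp [Complex.mul_im]
      rw [heq, hzre]
      nlinarith [hx i, hy i]
    · exfalso
      refine hst (fun j => a j * r + b j) ?_ hroot
      intro i
      rw [hzim]
      nlinarith [hx i]
  have hsplit := (IsAlgClosed.splits q).eq_prod_roots
  obtain ⟨⟨t0, ht0, hM0⟩, hall⟩ := prod_linear_neg_coeffs q.roots hroots
  have hq0 : q.coeff 0 = MvPolynomial.eval b h := coeff_zero_linSub a b h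
  have hq0' : q.coeff 0 = q.leadingCoeff * t0 := by
    conv_lhs => rw [hsplit]
    rw [Polynomial.coeff_C_mul, hM0]
  intro k
  obtain ⟨tk, htk, hMk⟩ := hall k
  refine ⟨tk / t0, div_nonneg htk (le_of_lt ht0), ?_⟩
  have hqk : q.coeff k = q.leadingCoeff * tk := by
    conv_lhs => rw [hsplit]
    rw [Polynomial.coeff_C_mul, hMk]
  rw [hqk, ← hq0, hq0']
  have ht0ne : (t0 : ℂ) ≠ 0 := by exact_mod_cast ne_of_gt ht0
  push_cast
  field_simp

theorem isHomogeneous_of_sum {n : ℕ} {p : MvPolynomial (Fin d) ℂ}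
    (hp : ∀ m : Fin d →₀ ℕ, MvPolynomial.coeff m p ≠ 0 → ∑ i, m i = n) :
    p.IsHomogeneous n := by
  intro m hm
  rw [show (Finsupp.weight 1 : (Fin d →₀ ℕ) →+ ℕ) = Finsupp.degree from Finsupp.degree_eq_weight_one.symm]
  unfold Finsupp.degree
  show ∑ i ∈ m.support, m i = n
  rw [Finset.sum_subset (Finset.subset_univ m.support)
    (fun x _ hx => Finsupp.notMem_support_iff.mp hx)]
  exact hp m hm

theorem dirderiv_ne_zero {n : ℕ} {h : MvPolynomial (Fin d) ℂ} (hst : Upper h)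
    (hh : h.IsHomogeneous (n + 1)) {w : Fin d → ℝ} (hw : ∀ i, 0 < w i)
    {σ : Fin d → ℂ} (hσ : ∀ i, 0 < (σ i).im) :
    (∑ j, (w j : ℂ) * MvPolynomial.eval σ (MvPolynomial.pderiv j h)) ≠ 0 := by
  set a : Fin d → ℂ := fun j => (w j : ℂ) with ha
  set q := linSub a σ h with hq
  obtain ⟨hdeg, hlc, hqne⟩ := natDegree_slice hst hh hw σ
  have hroots : ∀ r ∈ q.roots, r.im < 0 := by
    intro r hr
    by_contra him
    push_neg at him
    have hroot : MvPolynomial.eval (fun j => a j * r + σ j) h = 0 := by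
      have := (Polynomial.mem_roots'.mp hr).2
      rw [Polynomial.IsRoot, hq, eval_linSub] at this
      exact this
    refine hst (fun j => a j * r + σ j) ?_ hroot
    intro i
    have : (a i * r + σ i).im = w i * r.im + (σ i).im := by
      simp [ha, Complex.add_im, Complex.mul_im]
    rw [this]
    nlinarith [hw i, hσ i]
  have hsplit := (IsAlgClosed.splits q).eq_prod_roots
  have hcard : q.roots.card = n + 1 := by
    rw [← hdeg]
    exact (Polynomial.splits_iff_card_roots.mp (IsAlgClosed.splits q))
  have hne : q.roots ≠ 0 := by
    intro h0
    rw [h0] at hcard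
    simp at hcard
  obtain ⟨hM0, _, hlt⟩ := prod_linear_lower_ratio q.roots hroots
  have hratio := hlt hne
  have hM1 : (q.roots.map (fun r => Polynomial.X - Polynomial.C r)).prod.coeff 1 ≠ 0 := by
    intro h0
    rw [h0] at hratio
    simp at hratio
  have hlcne : q.leadingCoeff ≠ 0 := Polynomial.leadingCoeff_ne_zero.mpr hqne
  have hq1 : q.coeff 1 ≠ 0 := by
    conv_lhs => rw [hsplit]
    rw [Polynomial.coeff_C_mul]
    exact mul_ne_zero hlcne hM1
  rw [← coeff_one_linSub a σ h]
  exact hq1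

theorem ray_of_affine {α u U : ℂ} (hα : α ≠ 0)
    (H : ∀ ε : ℝ, 0 < ε → ∃ r : ℝ, 0 ≤ r ∧ u + ε * U = α * r) :
    ∃ r : ℝ, 0 ≤ r ∧ u = α * r := by
  obtain ⟨r1, _, h1⟩ := H 1 one_pos
  obtain ⟨r2, _, h2⟩ := H 2 two_pos
  have hu : u = α * (2 * r1 - r2) := by
    push_cast
    push_cast at h1 h2
    linear_combination 2 * h1 - h2
  have hU : U = α * (r2 - r1) := by
    push_cast
    push_cast at h1 h2
    linear_combination h2 - h1
  set A : ℝ := 2 * r1 - r2 with hA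
  set B : ℝ := r2 - r1 with hB
  have key : ∀ ε : ℝ, 0 < ε → 0 ≤ A + ε * B := by
    intro ε hε
    obtain ⟨r, hr, heq⟩ := H ε hε
    rw [hu, hU] at heq
    have hcan : ((A : ℂ) + (ε : ℂ) * (B : ℂ)) = ((r : ℝ) : ℂ) := by
      apply mul_left_cancel₀ hα
      simp only [hA, hB]
      push_cast
      linear_combination heq
    have hreal : A + ε * B = r := by exact_mod_cast hcan
    linarith
  have hApos : 0 ≤ A := by
    by_contra hAneg
    push_neg at hAneg
    have hden : (0:ℝ) < 2 * (|B| + 1) := by positivity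
    have hεpos : 0 < -A / (2 * (|B| + 1)) := div_pos (by linarith) hden
    have hk := key _ hεpos
    have hB1 : B ≤ |B| := le_abs_self B
    have hB2 : -A / (2 * (|B| + 1)) * B ≤ -A / (2 * (|B| + 1)) * |B| :=
      mul_le_mul_of_nonneg_left hB1 (le_of_lt hεpos)
    have hB3 : -A / (2 * (|B| + 1)) * |B| ≤ -A / 2 := by
      rw [div_mul_eq_mul_div, div_le_div_iff₀ hden (by norm_num)]
      nlinarith [abs_nonneg B]
    linarith
  refine ⟨A, hApos, ?_⟩
  rw [hu]
  congr 1
  simp only [hA]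
  push_cast
  ring

theorem coeffs_ray (n : ℕ) : ∀ h : MvPolynomial (Fin d) ℂ, Upper h → h.IsHomogeneous n →
    ∀ m : Fin d →₀ ℕ, ∃ r : ℝ, 0 ≤ r ∧ MvPolynomial.coeff m h
      = MvPolynomial.eval (fun _ => (1 : ℂ)) h * r := by
  induction n with
  | zero =>
    intro h _ hh m
    by_cases hm : m = 0
    · subst hm
      refine ⟨1, zero_le_one, ?_⟩
      rw [Complex.ofReal_one, mul_one]
      have hsub : h.support ⊆ {0} := by
        intro s hs
        rw [Finset.mem_singleton]
        have hsum := sum_univ_of_homog hh (MvPolynomial.mem_support_iff.mp hs)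
        ext i
        exact (Finset.sum_eq_zero_iff.mp hsum) i (Finset.mem_univ i)
      rw [MvPolynomial.eval_eq']
      simp only [one_pow, Finset.prod_const_one, mul_one]
      rw [Finset.sum_subset hsub (fun s _ hs => MvPolynomial.notMem_support_iff.mp hs)]
      simp
    · refine ⟨0, le_refl _, ?_⟩
      rw [Complex.ofReal_zero, mul_zero]
      by_contra hc
      have hsum := sum_univ_of_homog hh hc
      apply hm
      ext i
      exact (Finset.sum_eq_zero_iff.mp hsum) i (Finset.mem_univ i)
  | succ n ih =>
    intro h hst hh m
    by_cases hds : ∑ i, m i = n + 1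
    · have ⟨i, hi⟩ : ∃ i, 0 < m i := by
        by_contra hno
        push_neg at hno
        have : ∑ i, m i = 0 := Finset.sum_eq_zero (fun i _ => by have := hno i; omega)
        omega
      set m' := m - Finsupp.single i 1 with hm'
      have hle : Finsupp.single i 1 ≤ m := by
        rw [Finsupp.single_le_iff]
        omega
      have hm'add : m' + Finsupp.single i 1 = m := tsub_add_cancel_of_le hle
      have hm'i : m' i + 1 = m i := by
        have := DFunLike.congr_fun hm'add i
        simpa using this
      set α := MvPolynomial.eval (fun _ => (1 : ℂ)) h with hα
      have hαne : α ≠ 0 := by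
        have := eval_pos_ne_zero hst hh (x := fun _ => (1 : ℝ)) (fun _ => one_pos)
        simpa using this
      set u : Fin d → ℂ := fun j => ((m' j : ℂ) + 1) * MvPolynomial.coeff (m' + Finsupp.single j 1) h with hudef
      have key : ∀ ε : ℝ, 0 < ε → ∃ r : ℝ, 0 ≤ r ∧ u i + ε * (∑ j, u j) = α * r := by
        intro ε hε
        set w : Fin d → ℝ := fun j => (if j = i then 1 else 0) + ε with hwdef
        have hw : ∀ j, 0 < w j := by
          intro j
          simp only [hwdef]
          by_cases hj : j = i <;> simp only [hj, if_pos, if_neg, ite_true, ite_false] <;> linarith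
        set h' : MvPolynomial (Fin d) ℂ :=
          ∑ j, MvPolynomial.C ((w j : ℂ)) * MvPolynomial.pderiv j h with hh'def
        have hcoeffh' : ∀ s : Fin d →₀ ℕ, MvPolynomial.coeff s h'
            = ∑ j, (w j : ℂ) * (((s j : ℂ) + 1) * MvPolynomial.coeff (s + Finsupp.single j 1) h) := by
          intro s
          rw [hh'def, MvPolynomial.coeff_sum]
          apply Finset.sum_congr rfl
          intro j _
          rw [MvPolynomial.coeff_C_mul, coeff_pderiv]
        have hevalh' : ∀ σ : Fin d → ℂ, MvPolynomial.eval σ h'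
            = ∑ j, (w j : ℂ) * MvPolynomial.eval σ (MvPolynomial.pderiv j h) := by
          intro σ
          rw [hh'def, map_sum]
          apply Finset.sum_congr rfl
          intro j _
          rw [map_mul, MvPolynomial.eval_C]
        have hh'up : Upper h' := by
          intro σ hσ
          rw [hevalh']
          exact dirderiv_ne_zero hst hh hw hσ
        have hh'hom : h'.IsHomogeneous n := by
          apply isHomogeneous_of_sum
          intro s hs
          rw [hcoeffh'] at hs
          obtain ⟨j, _, hj⟩ := Finset.exists_ne_zero_of_sum_ne_zero hs
          have hcj : MvPolynomial.coeff (s + Finsupp.single j 1) h ≠ 0 := by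
            intro h0
            rw [h0] at hj
            simp at hj
          have h2 := sum_univ_of_homog hh hcj
          simp only [Finsupp.add_apply] at h2
          rw [Finset.sum_add_distrib] at h2
          simp only [Finsupp.single_apply] at h2
          rw [Finset.sum_ite_eq Finset.univ j (fun _ => 1)] at h2
          simp only [Finset.mem_univ, if_true] at h2
          omega
        obtain ⟨r1, hr1, hr1eq⟩ := ih h' hh'up hh'hom m'
        -- eval 1 h' lies on the ray
        have hβ : ∃ t : ℝ, 0 ≤ t ∧ MvPolynomial.eval (fun _ => (1 : ℂ)) h' = α * t := by
          obtain ⟨t, ht, hteq⟩ := slice_coeffs hst hh hw (y := fun _ => (1 : ℝ))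
            (fun _ => one_pos) 1
          refine ⟨t, ht, ?_⟩
          rw [hevalh', ← coeff_one_linSub]
          simp only [Complex.ofReal_one] at hteq ⊢
          rw [hteq, hα]
        obtain ⟨t, ht, hteq⟩ := hβ
        refine ⟨t * r1, mul_nonneg ht hr1, ?_⟩
        have hui : MvPolynomial.coeff m' h' = u i + ε * (∑ j, u j) := by
          rw [hcoeffh' m']
          have : ∀ j : Fin d, (w j : ℂ) * (((m' j : ℂ) + 1) * MvPolynomial.coeff (m' + Finsupp.single j 1) h)
              = (if j = i then 1 else 0) * u j + ε * u j := by
            intro j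
            rw [hwdef, hudef]
            push_cast
            by_cases hj : j = i <;> simp [hj] <;> ring
          rw [Finset.sum_congr rfl (fun j _ => this j), Finset.sum_add_distrib]
          congr 1
          · rw [Finset.sum_eq_single i]
            · simp
            · intro c _ hc; simp [hc]
            · intro hmem; exact absurd (Finset.mem_univ i) hmem
          · rw [← Finset.mul_sum]
        rw [← hui, hr1eq, hteq]
        push_cast
        ring
      obtain ⟨r, hr, hreq⟩ := ray_of_affine hαne key
      refine ⟨r / m i, div_nonneg hr (by positivity), ?_⟩
      have h1 : ((m' i : ℂ) + 1) = (m i : ℂ) := by exact_mod_cast hm'i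
      have hui : u i = (m i : ℂ) * MvPolynomial.coeff m h := by
        simp only [hudef]
        rw [hm'add, h1]
      rw [hui] at hreq
      have hmine : (m i : ℂ) ≠ 0 := by
        have : m i ≠ 0 := by omega
        exact_mod_cast this
      apply mul_left_cancel₀ hmine
      rw [hreq]
      push_cast
      field_simp
    · refine ⟨0, le_refl _, ?_⟩
      rw [Complex.ofReal_zero, mul_zero]
      by_contra hc
      exact hds (sum_univ_of_homog hh hc)

theorem upper_leading {f : MvPolynomial (Fin d) ℂ} (hf : Upper f) :
    Upper (MvPolynomial.homogeneousComponent f.totalDegree f) := by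
  classical
  set n := f.totalDegree with hn
  set h := MvPolynomial.homogeneousComponent n f with hhdef
  -- h ≠ 0
  have hfne : f ≠ 0 := by
    intro h0
    exact hf (fun _ => Complex.I) (fun i => by simp) (by simp [h0])
  have hhne : h ≠ 0 := by
    obtain ⟨m, hm, hdeg⟩ := Finset.exists_mem_eq_sup f.support
      (MvPolynomial.support_nonempty.mpr hfne) (fun s => s.sum fun _ e => e)
    have hcm : MvPolynomial.coeff m h = MvPolynomial.coeff m f := by
      rw [hhdef, MvPolynomial.coeff_homogeneousComponent, if_pos]
      rw [hn, MvPolynomial.totalDegree, hdeg]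
      rfl
    intro h0
    have := MvPolynomial.mem_support_iff.mp hm
    rw [← hcm, h0] at this
    simp at this
  intro σ hσ
  by_contra h0
  -- a point where h does not vanish
  have hw : ∃ w : Fin d → ℂ, MvPolynomial.eval w h ≠ 0 := by
    by_contra hall
    push_neg at hall
    exact hhne (MvPolynomial.funext (fun x => by rw [hall x, map_zero]))
  obtain ⟨w, hwne⟩ := hw
  set v : Fin d → ℂ := fun j => w j - σ j with hv
  set Q := linSub v σ h with hQ
  have hQ1 : Polynomial.eval 1 Q = MvPolynomial.eval w h := by
    rw [hQ, eval_linSub]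
    have harg : (fun j => v j * 1 + σ j) = w := by funext j; simp [hv]
    rw [harg]
  have hQne : Q ≠ 0 := by
    intro hz
    rw [hz] at hQ1
    simp at hQ1
    exact hwne hQ1.symm
  have hQ0 : Polynomial.eval 0 Q = 0 := by
    rw [hQ, eval_linSub]
    have : (fun j => v j * 0 + σ j) = σ := by funext j; simp
    rw [this]
    exact h0
  -- δ such that the closed δ-ball stays in the upper region
  have hδ : ∃ δ : ℝ, 0 < δ ∧ ∀ u : ℂ, ‖u‖ ≤ δ → ∀ j, 0 < (v j * u + σ j).im := by
    rcases isEmpty_or_nonempty (Fin d) with hE | hNE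
    · exact ⟨1, one_pos, fun u _ j => (hE.false j).elim⟩
    · set g : Fin d → ℝ := fun j => (σ j).im / (‖v j‖ + 1) with hg
      have hgpos : ∀ j, 0 < g j := by
        intro j
        apply div_pos (hσ j)
        positivity
      set δ : ℝ := (Finset.univ.inf' Finset.univ_nonempty g) / 2 with hδdef
      have hδpos : 0 < δ := by
        apply div_pos _ two_pos
        rw [Finset.lt_inf'_iff]
        exact fun j _ => hgpos j
      refine ⟨δ, hδpos, fun u hu j => ?_⟩
      have h1 : (v j * u + σ j).im = (v j * u).im + (σ j).im := Complex.add_im _ _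
      have h2 : |(v j * u).im| ≤ ‖v j * u‖ := Complex.abs_im_le_norm _
      have h3 : ‖v j * u‖ = ‖v j‖ * ‖u‖ := norm_mul _ _
      have h4 : δ ≤ g j / 2 := by
        have := Finset.inf'_le g (Finset.mem_univ j)
        rw [hδdef]
        linarith
      have h5 : ‖v j‖ * ‖u‖ ≤ ‖v j‖ * (g j / 2) :=
        mul_le_mul_of_nonneg_left (le_trans hu h4) (norm_nonneg _)
      have h6 : ‖v j‖ * (g j / 2) < (σ j).im := by
        rw [hg]
        have hσj := hσ j
        have hvn : (0:ℝ) ≤ ‖v j‖ := norm_nonneg _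
        rw [div_div]
        rw [mul_div_assoc']
        rw [div_lt_iff₀ (by positivity)]
        nlinarith
      have h7 := abs_le.mp h2
      linarith
  obtain ⟨δ, hδpos, hδball⟩ := hδ
  -- pick a radius avoiding the finitely many roots of Q
  have hBad : Set.Finite ((fun z : ℂ => ‖z‖) '' ({ z : ℂ | Q.IsRoot z } \ {0})) :=
    Set.Finite.image _ (Set.Finite.diff (Polynomial.finite_setOf_isRoot hQne))
  have hInf : (Set.Ioo (0:ℝ) δ).Infinite := Set.Ioo_infinite hδpos
  obtain ⟨ρ, hρmem⟩ := (hInf.diff hBad).nonempty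
  obtain ⟨⟨hρ0, hρδ⟩, hρbad⟩ := hρmem
  have hsphere : ∀ z : ℂ, ‖z‖ = ρ → Polynomial.eval z Q ≠ 0 := by
    intro z hz hzq
    apply hρbad
    refine ⟨z, ⟨hzq, ?_⟩, hz⟩
    intro hz0
    rw [Set.mem_singleton_iff] at hz0
    rw [hz0, norm_zero] at hz
    linarith

  -- minimum of ‖Q‖ on the sphere
  have hcompact : IsCompact (Metric.sphere (0:ℂ) ρ) := isCompact_sphere 0 ρ
  have hnonempty : (Metric.sphere (0:ℂ) ρ).Nonempty :=
    NormedSpace.sphere_nonempty.mpr (le_of_lt hρ0)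
  obtain ⟨z₀, hz₀mem, hz₀min⟩ := hcompact.exists_isMinOn hnonempty
    ((Q.continuous).norm.continuousOn)
  set mv : ℝ := ‖Polynomial.eval z₀ Q‖ with hmv
  have hmvpos : 0 < mv := by
    rw [hmv, norm_pos_iff]
    apply hsphere
    simpa using hz₀mem
  have hmin : ∀ z : ℂ, ‖z‖ = ρ → mv ≤ ‖Polynomial.eval z Q‖ := by
    intro z hz
    exact hz₀min (by simpa using hz)
  -- bound for the lower-order components on the closed ball
  set gB : ℂ → ℝ := fun u => ∑ k ∈ Finset.range n,
    ‖Polynomial.eval u (linSub v σ (MvPolynomial.homogeneousComponent k f))‖ with hgB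
  have hgBcont : Continuous gB := by
    apply continuous_finset_sum
    intro k _
    exact (Polynomial.continuous _).norm
  obtain ⟨u₀, _, hu₀max⟩ := (isCompact_closedBall (0:ℂ) ρ).exists_isMaxOn
    ⟨0, Metric.mem_closedBall_self (le_of_lt hρ0)⟩ hgBcont.continuousOn
  set B : ℝ := gB u₀ with hB
  have hBnn : 0 ≤ B := by
    have h1 : gB 0 ≤ B := hu₀max (Metric.mem_closedBall_self (le_of_lt hρ0))
    have h2 : 0 ≤ gB 0 := Finset.sum_nonneg (fun k _ => norm_nonneg _)
    linarith
  have hBbound : ∀ u ∈ Metric.closedBall (0:ℂ) ρ, gB u ≤ B := fun u hu => hu₀max hu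
  -- choose t
  set t : ℝ := max 1 (2 * B / mv + 1) with ht
  have ht1 : 1 ≤ t := le_max_left _ _
  have ht0 : 0 < t := lt_of_lt_of_le one_pos ht1
  have htB : B < t * mv / 2 := by
    have h1 : 2 * B / mv + 1 ≤ t := le_max_right _ _
    have h2 : 2 * B / mv < t := by linarith
    rw [div_lt_iff₀ hmvpos] at h2
    linarith
  -- the scaled polynomial
  set P : Polynomial ℂ := linSub (fun j => (t:ℂ) * v j) (fun j => (t:ℂ) * σ j) f with hP
  have hPeval : ∀ u : ℂ, Polynomial.eval u P
      = ∑ k ∈ Finset.range (n + 1), (t:ℂ)^k *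
        Polynomial.eval u (linSub v σ (MvPolynomial.homogeneousComponent k f)) := by
    intro u
    rw [hP, eval_linSub]
    have hpt : (fun j => (t:ℂ) * v j * u + (t:ℂ) * σ j)
        = fun j => (t:ℂ) * (v j * u + σ j) := by funext j; ring
    rw [hpt]
    conv_lhs => rw [← MvPolynomial.sum_homogeneousComponent f]
    rw [map_sum]
    rw [← hn]
    apply Finset.sum_congr rfl
    intro k _
    rw [eval_scale_homog (MvPolynomial.homogeneousComponent_isHomogeneous k f) ((t:ℂ))
      (fun j => v j * u + σ j), eval_linSub]
  have hQn : linSub v σ (MvPolynomial.homogeneousComponent n f) = Q := rfl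
  -- error bound
  have herr : ∀ u ∈ Metric.closedBall (0:ℂ) ρ,
      ‖Polynomial.eval u P - (t:ℂ)^n * Polynomial.eval u Q‖ ≤ t^n / t * B := by
    intro u hu
    have hsplit : Polynomial.eval u P - (t:ℂ)^n * Polynomial.eval u Q
        = ∑ k ∈ Finset.range n, (t:ℂ)^k *
          Polynomial.eval u (linSub v σ (MvPolynomial.homogeneousComponent k f)) := by
      rw [hPeval u, Finset.sum_range_succ, hQn]
      ring
    rw [hsplit]
    apply le_trans (norm_sum_le _ _)
    have hterm : ∀ k ∈ Finset.range n, ‖(t:ℂ)^k *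
        Polynomial.eval u (linSub v σ (MvPolynomial.homogeneousComponent k f))‖
        ≤ t^n / t * ‖Polynomial.eval u (linSub v σ (MvPolynomial.homogeneousComponent k f))‖ := by
      intro k hk
      rw [norm_mul, norm_pow, Complex.norm_real, Real.norm_eq_abs, abs_of_pos ht0]
      apply mul_le_mul_of_nonneg_right _ (norm_nonneg _)
      rw [le_div_iff₀ ht0, ← pow_succ]
      apply pow_le_pow_right₀ ht1
      rw [Finset.mem_range] at hk
      omega
    apply le_trans (Finset.sum_le_sum hterm)
    rw [← Finset.mul_sum]
    exact mul_le_mul_of_nonneg_left (hBbound u hu) (by positivity)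
  -- P does not vanish on the closed ball
  have hPne : ∀ u ∈ Metric.closedBall (0:ℂ) ρ, Polynomial.eval u P ≠ 0 := by
    intro u hu
    rw [hP, eval_linSub]
    have hpt : (fun j => (t:ℂ) * v j * u + (t:ℂ) * σ j)
        = fun j => (t:ℂ) * (v j * u + σ j) := by funext j; ring
    rw [hpt]
    apply hf
    intro j
    have him := hδball u (by
      rw [Metric.mem_closedBall, dist_zero_right] at hu
      linarith) j
    have : ((t:ℂ) * (v j * u + σ j)).im = t * (v j * u + σ j).im := by
      simp [Complex.mul_im]
    rw [this]
    positivity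
  -- min modulus principle
  set F : ℂ → ℂ := fun u => (Polynomial.eval u P)⁻¹ with hF
  have hdiff : DifferentiableOn ℂ F (closure (Metric.ball (0:ℂ) ρ)) := by
    rw [closure_ball 0 (ne_of_gt hρ0)]
    apply DifferentiableOn.inv
    · exact (P.differentiable).differentiableOn
    · exact hPne
  have hFbound : ∀ z ∈ frontier (Metric.ball (0:ℂ) ρ), ‖F z‖ ≤ (t^n * mv / 2)⁻¹ := by
    intro z hz
    rw [frontier_ball 0 (ne_of_gt hρ0)] at hz
    have hzn : ‖z‖ = ρ := by simpa using hz
    have hlow : t^n * mv - t^n / t * B ≤ ‖Polynomial.eval z P‖ := by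
      have h1 := herr z (Metric.sphere_subset_closedBall hz)
      have h2 : ‖(t:ℂ)^n * Polynomial.eval z Q‖ - ‖Polynomial.eval z P‖
          ≤ ‖Polynomial.eval z P - (t:ℂ)^n * Polynomial.eval z Q‖ := by
        rw [norm_sub_rev]
        exact norm_sub_norm_le _ _
      have h3 : ‖(t:ℂ)^n * Polynomial.eval z Q‖ = t^n * ‖Polynomial.eval z Q‖ := by
        rw [norm_mul, norm_pow, Complex.norm_real, Real.norm_eq_abs, abs_of_pos ht0]
      have h4 := hmin z hzn
      have h5 : (0:ℝ) < t^n := by positivity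
      nlinarith
    have hhalf : t^n * mv / 2 ≤ ‖Polynomial.eval z P‖ := by
      have hq : t^n / t * B < t^n / t * (t * mv / 2) := by
        apply mul_lt_mul_of_pos_left htB
        positivity
      have he : t^n / t * (t * mv / 2) = t^n * mv / 2 := by
        field_simp
      nlinarith
    rw [hF]
    simp only [norm_inv]
    apply inv_anti₀ (by positivity) hhalf
  have hcenter := Complex.norm_le_of_forall_mem_frontier_norm_le
    Metric.isBounded_ball (hdiff.diffContOnCl) hFbound
    (z := 0) (by
      rw [closure_ball 0 (ne_of_gt hρ0)]
      exact Metric.mem_closedBall_self (le_of_lt hρ0))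
  -- contradiction at the center
  have hcval : ‖Polynomial.eval 0 P‖ ≤ t^n / t * B := by
    have := herr 0 (Metric.mem_closedBall_self (le_of_lt hρ0))
    rw [hQ0, mul_zero, sub_zero] at this
    exact this
  have hcinv : t^n * mv / 2 ≤ ‖Polynomial.eval 0 P‖ := by
    have hPne0 : Polynomial.eval 0 P ≠ 0 := hPne 0 (Metric.mem_closedBall_self (le_of_lt hρ0))
    have hnorm0 : 0 < ‖Polynomial.eval 0 P‖ := norm_pos_iff.mpr hPne0
    rw [hF] at hcenter
    simp only [norm_inv] at hcenter
    have h1 : 0 < t^n * mv / 2 := by positivity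
    rw [inv_le_inv₀ hnorm0 h1] at hcenter
    exact hcenter
  have hfin : t^n / t * B < t^n * mv / 2 := by
    have hq : t^n / t * B < t^n / t * (t * mv / 2) := by
      apply mul_lt_mul_of_pos_left htB
      positivity
    have he : t^n / t * (t * mv / 2) = t^n * mv / 2 := by
      field_simp
    linarith [hq.trans_le he.le]
  linarith

end UpperAux

/-- All coefficients of the leading form `f^H` of an upper polynomial have the
same argument: every coefficient is a nonnegative real multiple of a fixed
nonzero complex number `α`. -/
theorem leadingForm_coeffs_same_argument {d : ℕ} (f : MvPolynomial (Fin d) ℂ)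
    (hf : IsUpper f) :
    ∃ α : ℂ, α ≠ 0 ∧ ∀ m : Fin d →₀ ℕ, ∃ r : ℝ, 0 ≤ r ∧
      (MvPolynomial.homogeneousComponent f.totalDegree f).coeff m = α * r := by
  have hst : UpperAux.Upper f := fun σ hσ => hf σ hσ
  have hup := UpperAux.upper_leading hst
  have hhom := MvPolynomial.homogeneousComponent_isHomogeneous f.totalDegree f
  refine ⟨MvPolynomial.eval (fun _ => (1 : ℂ)) (MvPolynomial.homogeneousComponent f.totalDegree f),
    ?_, ?_⟩
  · have := UpperAux.eval_pos_ne_zero hup hhom (x := fun _ => (1 : ℝ)) (fun _ => one_pos)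
    simpa using this
  · intro m
    exact UpperAux.coeffs_ray f.totalDegree _ hup hhom m
end

section
/- A polynomial f ∈ ℂ[x₁,…,x_d] is an upper polynomial if and only if for every vector a ∈ ℝ^d and every vector b ∈ ℝ^d with all coordinates positive, the univariate polynomial x ↦ f(a₁ + x·b₁, …, a_d + x·b_d) is a (nonzero) polynomial with no roots in the open upper half plane. -/
lemma eval_aeval_comm {d : ℕ} (f : MvPolynomial (Fin d) ℂ) (g : Fin d → Polynomial ℂ)
    (z : ℂ) :
    Polynomial.eval z (MvPolynomial.aeval g f) =
      MvPolynomial.eval (fun i => Polynomial.eval z (g i)) f := by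
  induction f using MvPolynomial.induction_on with
  | C a => simp
  | add p q hp hq => simp [hp, hq]
  | mul_X p i hp => simp [hp]

/-- `f ∈ U_d` iff for all `a ∈ ℝ^d` and `b ∈ ℝ^d` with positive coordinates, the
univariate polynomial `x ↦ f(a + x·b)` is nonzero and has no roots in the open
upper half plane. -/
theorem isUpper_iff_lines {d : ℕ} (f : MvPolynomial (Fin d) ℂ) :
    IsUpper f ↔
      ∀ a b : Fin d → ℝ, (∀ i, 0 < b i) →
        (MvPolynomial.aeval
            (fun i => Polynomial.C ((a i : ℂ)) + Polynomial.C ((b i : ℂ)) * Polynomial.X) f ≠ 0 ∧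
          ∀ z : ℂ, 0 < z.im →
            Polynomial.eval z (MvPolynomial.aeval
              (fun i => Polynomial.C ((a i : ℂ)) + Polynomial.C ((b i : ℂ)) * Polynomial.X) f) ≠ 0) := by
  constructor
  · intro hf a b hb
    have key : ∀ z : ℂ, 0 < z.im →
        Polynomial.eval z (MvPolynomial.aeval
          (fun i => Polynomial.C ((a i : ℂ)) + Polynomial.C ((b i : ℂ)) * Polynomial.X) f) ≠ 0 := by
      intro z hz
      rw [eval_aeval_comm]
      apply hf
      intro i
      simp only [Polynomial.eval_add, Polynomial.eval_mul, Polynomial.eval_C, Polynomial.eval_X,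
        Complex.add_im, Complex.ofReal_im, Complex.mul_im, Complex.ofReal_re, zero_add, zero_mul,
        add_zero]
      exact mul_pos (hb i) hz
    refine ⟨?_, key⟩
    intro h0
    exact key Complex.I (by simp) (by rw [h0]; simp)
  · intro h σ hσ
    have := (h (fun i => (σ i).re) (fun i => (σ i).im) hσ).2 Complex.I (by simp)
    rw [eval_aeval_comm] at this
    have heq : (fun i => Polynomial.eval Complex.I
        (Polynomial.C ((σ i).re : ℂ) + Polynomial.C ((σ i).im : ℂ) * Polynomial.X)) = σ := by
      funext i
      simp [Complex.re_add_im]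
    rwa [heq] at this
end

section
/- Let f, g ∈ ℂ[x₁,…,x_d] be upper polynomials such that f interlaces g and g interlaces f, i.e. both f + y·g ∈ U_{d+1} and g + y·f ∈ U_{d+1}. Then f and g are constant multiples of one another: there exists a nonzero complex constant c with g = c·f. -/
/- ### Auxiliary lemmas -/

lemma aux_im_div_nonpos (a b : ℂ) (ha : a ≠ 0) (hb : b ≠ 0)
    (h : ∀ τ : ℂ, 0 < τ.im → a + τ * b ≠ 0) : (b / a).im ≤ 0 := by
  by_contra hlt
  push_neg at hlt
  have hw : b / a ≠ 0 := div_ne_zero hb ha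
  have hns : 0 < Complex.normSq (b / a) := Complex.normSq_pos.mpr hw
  have h1 : 0 < (-(b / a)⁻¹).im := by
    have : (-(b / a)⁻¹).im = (b / a).im / Complex.normSq (b / a) := by
      rw [Complex.neg_im, Complex.inv_im]; ring
    rw [this]
    exact div_pos hlt hns
  refine h _ h1 ?_
  rw [inv_div]
  field_simp
  ring

/-- A real-valued analytic function on an open preconnected set is constant. -/
lemma aux_analytic_real_const {φ : ℂ → ℂ} {T : Set ℂ} (hT : IsOpen T)
    (hTc : IsPreconnected T) (hφ : AnalyticOnNhd ℂ φ T)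
    (hreal : ∀ t ∈ T, (φ t).im = 0) {t0 t1 : ℂ} (h0 : t0 ∈ T) (h1 : t1 ∈ T) :
    φ t1 = φ t0 := by
  rcases hφ.is_constant_or_isOpen hTc with ⟨w, hw⟩ | hopen
  · rw [hw t1 h1, hw t0 h0]
  · exfalso
    have himg : IsOpen (φ '' T) := hopen T subset_rfl hT
    obtain ⟨ε, hε, hball⟩ := Metric.isOpen_iff.mp himg _ ⟨t0, h0, rfl⟩
    have hmem : φ t0 + (ε / 2 : ℝ) * Complex.I ∈ φ '' T := by
      apply hball
      rw [Metric.mem_ball, Complex.dist_eq]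
      have : φ t0 + (ε / 2 : ℝ) * Complex.I - φ t0 = (ε / 2 : ℝ) * Complex.I := by ring
      rw [this]
      rw [norm_mul, Complex.norm_I, Complex.norm_real, mul_one, Real.norm_eq_abs, abs_of_pos (by linarith)]
      linarith
    obtain ⟨t, ht, heq⟩ := hmem
    have h1' := hreal t ht
    have h2' := hreal t0 h0
    rw [heq, Complex.add_im, Complex.mul_im] at h1'
    simp at h1'
    rw [h2'] at h1'
    simp at h1'
    linarith

/-- Evaluation of the composition of a multivariate polynomial with an affine line. -/
lemma aux_eval_lineComp {d : ℕ} (a b : Fin d → ℂ) (p : MvPolynomial (Fin d) ℂ) (t : ℂ) :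
    Polynomial.eval t (MvPolynomial.eval₂ Polynomial.C
        (fun i => Polynomial.C (a i) + Polynomial.C (b i) * Polynomial.X) p)
      = MvPolynomial.eval (fun i => a i + b i * t) p := by
  have hcomp := MvPolynomial.eval₂_comp_left (Polynomial.evalRingHom t)
    (Polynomial.C : ℂ →+* Polynomial ℂ)
    (fun i => Polynomial.C (a i) + Polynomial.C (b i) * Polynomial.X) p
  have h1 : ((Polynomial.evalRingHom t).comp (Polynomial.C : ℂ →+* Polynomial ℂ))
      = RingHom.id ℂ := by ext x; simp
  rw [h1] at hcomp
  simp only [Polynomial.coe_evalRingHom] at hcomp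
  rw [hcomp]
  rw [show (MvPolynomial.eval (fun i => a i + b i * t) p)
      = MvPolynomial.eval₂ (RingHom.id ℂ) (fun i => a i + b i * t) p from rfl]
  congr 1
  funext i
  simp

/-- A polynomial vanishing on the open upper polydisc is zero. -/
lemma aux_eq_zero_of_upper_vanish {d : ℕ} (p : MvPolynomial (Fin d) ℂ)
    (h : ∀ σ : Fin d → ℂ, (∀ i, 0 < (σ i).im) → MvPolynomial.eval σ p = 0) :
    p = 0 := by
  have hall : ∀ σ : Fin d → ℂ, MvPolynomial.eval σ p = 0 := by
    intro σ
    set q : Polynomial ℂ := MvPolynomial.eval₂ Polynomial.C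
      (fun i => Polynomial.C (σ i) + Polynomial.C Complex.I * Polynomial.X) p with hqdef
    have hq0 : q = 0 := by
      apply Polynomial.eq_zero_of_infinite_isRoot
      obtain ⟨M, hM⟩ := Finite.exists_le (fun i : Fin d => -(σ i).im)
      apply Set.Infinite.mono (s := (fun x : ℝ => (x : ℂ)) '' Set.Ioi M)
      · rintro z ⟨x, hx, rfl⟩
        show q.IsRoot _
        rw [Polynomial.IsRoot, hqdef, aux_eval_lineComp]
        apply h
        intro i
        have hMi := hM i
        rw [Set.mem_Ioi] at hx
        simp only [Complex.add_im, Complex.mul_im, Complex.I_re, Complex.I_im,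
          Complex.ofReal_re, Complex.ofReal_im]
        nlinarith [hMi]
      · exact (Set.Ioi_infinite M).image Complex.ofReal_injective.injOn
    have hfun : (fun i => σ i + Complex.I * 0) = σ := by funext i; ring
    have hkey := aux_eval_lineComp σ (fun _ => Complex.I) p 0
    rw [hfun, ← hqdef, hq0, Polynomial.eval_zero] at hkey
    exact hkey.symm
  have : p = (0 : MvPolynomial (Fin d) ℂ) := by
    apply MvPolynomial.funext
    intro x
    simp [hall x]
  exact this

/-- If two upper polynomials interlace each other in both orders, then they are
constant multiples of one another. -/
theorem interlace_symm_const_multiple {d : ℕ} (f g : MvPolynomial (Fin d) ℂ)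
    (hf : IsUpper f) (hg : IsUpper g)
    (hfg : IsUpperY (Polynomial.C f + Polynomial.X * Polynomial.C g))
    (hgf : IsUpperY (Polynomial.C g + Polynomial.X * Polynomial.C f)) :
    ∃ c : ℂ, c ≠ 0 ∧ g = MvPolynomial.C c * f := by
  -- Step 1: the ratio g/f is real on the upper polydisc
  have key : ∀ σ : Fin d → ℂ, (∀ i, 0 < (σ i).im) →
      (MvPolynomial.eval σ g / MvPolynomial.eval σ f).im = 0 := by
    intro σ hσ
    have ha := hf σ hσ
    have hb := hg σ hσ
    have h1 : ∀ τ : ℂ, 0 < τ.im →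
        MvPolynomial.eval σ f + τ * MvPolynomial.eval σ g ≠ 0 := by
      intro τ hτ
      have := hfg σ τ hσ hτ
      simpa only [Polynomial.eval₂_add, Polynomial.eval₂_mul, Polynomial.eval₂_X,
        Polynomial.eval₂_C] using this
    have h2 : ∀ τ : ℂ, 0 < τ.im →
        MvPolynomial.eval σ g + τ * MvPolynomial.eval σ f ≠ 0 := by
      intro τ hτ
      have := hgf σ τ hσ hτ
      simpa only [Polynomial.eval₂_add, Polynomial.eval₂_mul, Polynomial.eval₂_X,
        Polynomial.eval₂_C] using this
    have le1 := aux_im_div_nonpos _ _ ha hb h1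
    have le2 := aux_im_div_nonpos _ _ hb ha h2
    rw [← inv_div (MvPolynomial.eval σ g) (MvPolynomial.eval σ f), Complex.inv_im] at le2
    have hns : 0 < Complex.normSq (MvPolynomial.eval σ g / MvPolynomial.eval σ f) :=
      Complex.normSq_pos.mpr (div_ne_zero hb ha)
    rcases div_nonpos_iff.mp le2 with ⟨h3, h4⟩ | ⟨h3, h4⟩
    · linarith
    · nlinarith
  -- Step 2: constancy of the ratio
  set σ₀ : Fin d → ℂ := fun _ => Complex.I with hσ₀def
  have hσ₀ : ∀ i, 0 < (σ₀ i).im := fun i => by simp [hσ₀def]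
  set c : ℂ := MvPolynomial.eval σ₀ g / MvPolynomial.eval σ₀ f with hcdef
  have hc : c ≠ 0 := div_ne_zero (hg σ₀ hσ₀) (hf σ₀ hσ₀)
  have hconst : ∀ σ : Fin d → ℂ, (∀ i, 0 < (σ i).im) →
      MvPolynomial.eval σ g / MvPolynomial.eval σ f = c := by
    intro σ hσ
    set b : Fin d → ℂ := fun i => σ i - σ₀ i with hbdef
    set T : Set ℂ := {t | ∀ i, 0 < (σ₀ i + b i * t).im} with hTdef
    set Fq : Polynomial ℂ := MvPolynomial.eval₂ Polynomial.C
      (fun i => Polynomial.C (σ₀ i) + Polynomial.C (b i) * Polynomial.X) f with hFqdef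
    set Gq : Polynomial ℂ := MvPolynomial.eval₂ Polynomial.C
      (fun i => Polynomial.C (σ₀ i) + Polynomial.C (b i) * Polynomial.X) g with hGqdef
    set φ : ℂ → ℂ := fun t => Polynomial.eval t Gq / Polynomial.eval t Fq with hφdef
    have hevF : ∀ t : ℂ, Polynomial.eval t Fq
        = MvPolynomial.eval (fun i => σ₀ i + b i * t) f := fun t => aux_eval_lineComp _ _ _ _
    have hevG : ∀ t : ℂ, Polynomial.eval t Gq
        = MvPolynomial.eval (fun i => σ₀ i + b i * t) g := fun t => aux_eval_lineComp _ _ _ _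
    have hT0 : (0 : ℂ) ∈ T := by
      intro i; simpa using hσ₀ i
    have hT1 : (1 : ℂ) ∈ T := by
      intro i
      have : σ₀ i + b i * 1 = σ i := by rw [hbdef]; ring
      rw [this]; exact hσ i
    have hTopen : IsOpen T := by
      have : T = ⋂ i, {t : ℂ | 0 < (σ₀ i + b i * t).im} := by
        ext t; simp [hTdef, Set.mem_iInter]
      rw [this]
      exact isOpen_iInter_of_finite fun i =>
        isOpen_lt continuous_const (Complex.continuous_im.comp (by fun_prop))
    have hTconv : Convex ℝ T := by
      intro t1 ht1 t2 ht2 r s hr hs hrs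
      intro i
      have e1 := ht1 i
      have e2 := ht2 i
      have hsum : (σ₀ i + b i * (r • t1 + s • t2)).im
          = r * (σ₀ i + b i * t1).im + s * (σ₀ i + b i * t2).im := by
        have heq : σ₀ i + b i * (r • t1 + s • t2)
            = r • (σ₀ i + b i * t1) + s • (σ₀ i + b i * t2) := by
          have hrs' : (r : ℂ) + (s : ℂ) = 1 := by
            rw [← Complex.ofReal_add, hrs, Complex.ofReal_one]
          simp only [Complex.real_smul]
          linear_combination (-(σ₀ i)) * hrs'
        rw [heq, Complex.add_im, Complex.smul_im, Complex.smul_im]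
        simp [smul_eq_mul]
      rw [hsum]
      rcases eq_or_lt_of_le hr with h | h
      · have hs1 : s = 1 := by linarith
        rw [← h, hs1]; simpa using e2
      · nlinarith
    have hφa : AnalyticOnNhd ℂ φ T := by
      apply AnalyticOnNhd.div
      · exact (AnalyticOnNhd.eval_polynomial Gq).mono (Set.subset_univ T)
      · exact (AnalyticOnNhd.eval_polynomial Fq).mono (Set.subset_univ T)
      · intro t ht
        rw [hevF t]
        exact hf _ ht
    have hreal : ∀ t ∈ T, (φ t).im = 0 := by
      intro t ht
      rw [hφdef]
      simp only
      rw [hevF t, hevG t]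
      exact key _ ht
    have hres := aux_analytic_real_const hTopen hTconv.isPreconnected hφa hreal hT1 hT0
    rw [hφdef] at hres
    simp only at hres
    rw [hevF 1, hevG 1, hevF 0, hevG 0] at hres
    have e1 : (fun i => σ₀ i + b i * 1) = σ := by
      funext i; rw [hbdef]; ring
    have e0 : (fun i => σ₀ i + b i * 0) = σ₀ := by
      funext i; ring_nf
    rw [e1, e0] at hres
    exact hres.symm
  -- Step 3: conclude g = c·f
  have hzero : g - MvPolynomial.C c * f = 0 := by
    apply aux_eq_zero_of_upper_vanish
    intro σ hσ
    have hr := hconst σ hσ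
    have haf := hf σ hσ
    rw [div_eq_iff haf] at hr
    simp [map_sub, map_mul, MvPolynomial.eval_C, hr]
  exact ⟨c, hc, by linear_combination hzero⟩
end
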